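/- arXiv:2101.09871 — 8 statements merged into one kernel-verified Lean document; each statement's English description precedes it below -/
import Mathlib

section
/- Suppose the real sequence (a_n) satisfies the trie recurrence with toll-sequence (b_n) such that b_n ≥ 0 for all n ≥ 2 and b_{n_0} > 0 for at least one n_0 ≥ 2. Then a_n = Ω(n^ρ), i.e. there are a constant c > 0 and N such that a_n ≥ c·n^ρ for all n ≥ N. -/
open Filter

open Finset Real

set_option maxHeartbeats 2000000

open Finset Real

namespace TrieLB

noncomputable def w (p : ℝ) (n k : ℕ) : ℝ := (n.choose k : ℝ) * p ^ k * (1 - p) ^ (n - k)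

lemma w_nonneg {p : ℝ} (h0 : 0 ≤ p) (h1 : p ≤ 1) (n k : ℕ) : 0 ≤ w p n k := by
  have : (0:ℝ) ≤ 1 - p := by linarith
  unfold w; positivity

lemma sum_w (p : ℝ) (n : ℕ) : ∑ k ∈ range (n+1), w p n k = 1 := by
  have h := add_pow p (1-p) n
  rw [show p + (1-p) = 1 by ring, one_pow] at h
  rw [show (1:ℝ) = ∑ k ∈ range (n+1), p ^ k * (1 - p) ^ (n - k) * (n.choose k : ℝ) from h]
  apply Finset.sum_congr rfl
  intro k _
  unfold w; ring

lemma sum_w_mul (p : ℝ) (n : ℕ) :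
    ∑ k ∈ range (n+1), w p n k * (k : ℝ) = (n : ℝ) * p := by
  cases n with
  | zero => simp [w]
  | succ m =>
    rw [Finset.sum_range_succ']
    have h0 : w p (m+1) 0 * ((0:ℕ) : ℝ) = 0 := by simp
    rw [h0, add_zero]
    have hterm : ∀ k ∈ range (m+1),
        w p (m+1) (k+1) * ((k+1 : ℕ) : ℝ) = ((m:ℝ)+1) * p * w p m k := by
      intro k hk
      have hk' : k ≤ m := by simpa using Nat.lt_succ_iff.mp (mem_range.mp hk)
      unfold w
      have hc : ((m+1).choose (k+1) : ℝ) * ((k:ℝ)+1) = ((m:ℝ)+1) * (m.choose k : ℝ) := by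
        have := Nat.add_one_mul_choose_eq m k
        have : ((m+1) * m.choose k : ℕ) = ((m+1).choose (k+1) * (k+1) : ℕ) := this
        exact_mod_cast this.symm
      have hsub : (m+1) - (k+1) = m - k := by omega
      rw [hsub]
      push_cast
      linear_combination (p^(k+1)*(1-p)^(m-k)) * hc
    rw [Finset.sum_congr rfl hterm, ← Finset.mul_sum, sum_w]
    push_cast
    ring

lemma sum_w_mul2 (p : ℝ) (n : ℕ) :
    ∑ k ∈ range (n+1), w p n k * ((k : ℝ) * ((k:ℝ) - 1)) = (n : ℝ) * ((n:ℝ) - 1) * p^2 := by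
  match n with
  | 0 => simp [w]
  | 1 =>
    rw [show (1:ℕ)+1 = 2 by rfl]
    rw [Finset.sum_range_succ, Finset.sum_range_succ, Finset.sum_range_zero]
    push_cast; ring
  | (m+2) =>
    rw [Finset.sum_range_succ']
    rw [Finset.sum_range_succ']
    have h0 : w p (m+2) 0 * (((0:ℕ):ℝ) * (((0:ℕ):ℝ) - 1)) = 0 := by simp
    have h1 : w p (m+2) (0+1) * (((0+1:ℕ):ℝ) * (((0+1:ℕ):ℝ) - 1)) = 0 := by
      push_cast; ring
    rw [h0, h1, add_zero, add_zero]
    have hterm : ∀ k ∈ range (m+1),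
        w p (m+2) (k+1+1) * (((k+1+1:ℕ):ℝ) * (((k+1+1:ℕ):ℝ) - 1))
          = ((m:ℝ)+2) * ((m:ℝ)+1) * p^2 * w p m k := by
      intro k hk
      have hk' : k ≤ m := Nat.lt_succ_iff.mp (mem_range.mp hk)
      unfold w
      have e1 : ((m+2) * (m+1).choose (k+1) : ℕ) = ((m+2).choose (k+2) * (k+2) : ℕ) :=
        Nat.add_one_mul_choose_eq (m+1) (k+1)
      have e2 : ((m+1) * m.choose k : ℕ) = ((m+1).choose (k+1) * (k+1) : ℕ) :=
        Nat.add_one_mul_choose_eq m k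
      have e1' : ((m:ℝ)+2) * ((m+1).choose (k+1) : ℝ) = ((m+2).choose (k+2) : ℝ) * ((k:ℝ)+2) := by
        exact_mod_cast e1
      have e2' : ((m:ℝ)+1) * (m.choose k : ℝ) = ((m+1).choose (k+1) : ℝ) * ((k:ℝ)+1) := by
        exact_mod_cast e2
      have hsub : (m+2) - (k+1+1) = m - k := by omega
      rw [hsub]
      push_cast
      linear_combination (-(((k:ℝ)+1))*(p^(k+1+1)*(1-p)^(m-k))) * e1' + (-(((m:ℝ)+2))*(p^(k+1+1)*(1-p)^(m-k))) * e2'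
    rw [Finset.sum_congr rfl hterm, ← Finset.mul_sum, sum_w]
    push_cast
    ring

lemma sum_w_var (p : ℝ) (n : ℕ) :
    ∑ k ∈ range (n+1), w p n k * ((k : ℝ) - (n:ℝ)*p)^2 = (n:ℝ) * p * (1 - p) := by
  have key : ∀ k ∈ range (n+1),
      w p n k * ((k : ℝ) - (n:ℝ)*p)^2
        = w p n k * ((k:ℝ) * ((k:ℝ)-1)) + (1 - 2*(n:ℝ)*p) * (w p n k * (k:ℝ))
          + ((n:ℝ)*p)^2 * w p n k := by
    intro k _; ring
  rw [Finset.sum_congr rfl key]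
  rw [Finset.sum_add_distrib, Finset.sum_add_distrib, ← Finset.mul_sum, ← Finset.mul_sum,
    sum_w_mul2, sum_w_mul, sum_w]
  ring



lemma tangent_rpow {ρ m : ℝ} (hρ : 1 ≤ ρ) (hm : 0 < m) {x : ℝ} (hx : 0 ≤ x) :
    m ^ ρ + ρ * (m ^ ρ / m) * (x - m) ≤ x ^ ρ := by
  have hs : -1 ≤ x / m - 1 := by
    have : 0 ≤ x / m := div_nonneg hx hm.le
    linarith
  have hb := one_add_mul_self_le_rpow_one_add hs hρ
  have hxm : x = m * (1 + (x/m - 1)) := by field_simp; ring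
  have h1s : 0 ≤ 1 + (x/m - 1) := by
    have : 0 ≤ x / m := div_nonneg hx hm.le
    linarith
  have h2 : x ^ ρ = m ^ ρ * (1 + (x/m - 1)) ^ ρ := by
    rw [hxm, Real.mul_rpow hm.le h1s]
    rw [← hxm]
  rw [h2]
  have hmρ : 0 ≤ m ^ ρ := (Real.rpow_pos_of_pos hm ρ).le
  have := mul_le_mul_of_nonneg_left hb hmρ
  calc m ^ ρ + ρ * (m ^ ρ / m) * (x - m)
      = m ^ ρ * (1 + ρ * (x/m - 1)) := by field_simp
    _ ≤ m ^ ρ * (1 + (x/m - 1)) ^ ρ := this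

lemma jensen_rpow {p ρ : ℝ} (hp : 0 < p) (hp1 : p ≤ 1) (hρ : 1 ≤ ρ) {n : ℕ} (hn : 1 ≤ n) :
    ((n:ℝ) * p) ^ ρ ≤ ∑ k ∈ range (n+1), w p n k * (k:ℝ) ^ ρ := by
  obtain ⟨m, hm_def⟩ : ∃ m:ℝ, m = (n:ℝ)*p := ⟨_, rfl⟩
  have hm : 0 < m := by
    have : (0:ℝ) < n := by exact_mod_cast hn
    rw [hm_def]; positivity
  have hpt : ∀ k ∈ range (n+1),
      w p n k * (m ^ ρ + ρ * (m ^ ρ / m) * ((k:ℝ) - m)) ≤ w p n k * (k:ℝ) ^ ρ := by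
    intro k _
    exact mul_le_mul_of_nonneg_left (tangent_rpow hρ hm (Nat.cast_nonneg k))
      (w_nonneg hp.le hp1 n k)
  have hsum := Finset.sum_le_sum hpt
  have hlhs : ∑ k ∈ range (n+1), w p n k * (m ^ ρ + ρ * (m ^ ρ / m) * ((k:ℝ) - m)) = m ^ ρ := by
    have expand : ∀ k ∈ range (n+1),
        w p n k * (m ^ ρ + ρ * (m ^ ρ / m) * ((k:ℝ) - m))
        = (m ^ ρ - ρ * (m ^ ρ / m) * m) * w p n k + (ρ * (m ^ ρ / m)) * (w p n k * (k:ℝ)) := by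
      intro k _; ring
    rw [Finset.sum_congr rfl expand, Finset.sum_add_distrib, ← Finset.mul_sum, ← Finset.mul_sum,
      sum_w, sum_w_mul, ← hm_def]
    ring
  rw [← hm_def]
  linarith [hsum, hlhs.symm.le, hlhs.le]

lemma sqrt_pointwise {θ m x : ℝ} (hθ : 0 < θ) (hθm : θ < m) (hx : 0 ≤ x) :
    Real.sqrt θ - Real.sqrt θ / (m - θ)^2 * (x - m)^2 ≤ Real.sqrt x := by
  have hsθ : 0 ≤ Real.sqrt θ := Real.sqrt_nonneg θ
  rcases le_or_gt θ x with h | h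
  · have h1 : Real.sqrt θ ≤ Real.sqrt x := Real.sqrt_le_sqrt h
    have h2 : 0 ≤ Real.sqrt θ / (m - θ)^2 * (x - m)^2 := by positivity
    linarith
  · have h1 : (m - θ)^2 ≤ (x - m)^2 := by nlinarith
    have h2 : (0:ℝ) < (m - θ)^2 := by nlinarith
    have h3 : Real.sqrt θ / (m - θ)^2 * (m - θ)^2 ≤ Real.sqrt θ / (m - θ)^2 * (x - m)^2 :=
      mul_le_mul_of_nonneg_left h1 (by positivity)
    have h4 : Real.sqrt θ / (m - θ)^2 * (m - θ)^2 = Real.sqrt θ := by field_simp [(sub_pos.mpr hθm).ne']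
    have := Real.sqrt_nonneg x
    linarith

lemma sqrt_mom {p : ℝ} (hp : 0 < p) (hp1 : p ≤ 1) {ε : ℝ} (hε : 0 < ε) (hε1 : ε < 1) :
    ∃ N : ℕ, ∀ n ≥ N, (1-ε) * Real.sqrt ((n:ℝ) * p)
      ≤ ∑ k ∈ range (n+1), w p n k * Real.sqrt k := by
  obtain ⟨η, hη_def⟩ : ∃ η:ℝ, η = ε/2 := ⟨_, rfl⟩
  have hη : 0 < η := by rw [hη_def]; positivity
  have hη1 : η < 1 := by rw [hη_def]; linarith
  obtain ⟨N₀, hN₀⟩ := exists_nat_ge (2 / (η^2 * ε * p))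
  refine ⟨N₀ + 1, fun n hn => ?_⟩
  have hn1 : 1 ≤ n := le_trans (Nat.le_add_left 1 N₀) hn
  have hnR : (0:ℝ) < n := by exact_mod_cast hn1
  obtain ⟨m, hm_def⟩ : ∃ m:ℝ, m = (n:ℝ)*p := ⟨_, rfl⟩
  have hm : 0 < m := by rw [hm_def]; positivity
  rw [← hm_def]
  obtain ⟨θ, hθ_def⟩ : ∃ θ:ℝ, θ = (1-η)*m := ⟨_, rfl⟩
  have hθ : 0 < θ := by rw [hθ_def]; nlinarith
  have hθm : θ < m := by rw [hθ_def]; nlinarith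
  have hpt : ∀ k ∈ range (n+1),
      w p n k * (Real.sqrt θ - Real.sqrt θ / (m - θ)^2 * ((k:ℝ) - m)^2)
        ≤ w p n k * Real.sqrt k := by
    intro k _
    exact mul_le_mul_of_nonneg_left (sqrt_pointwise hθ hθm (Nat.cast_nonneg k))
      (w_nonneg hp.le hp1 n k)
  have hsum := Finset.sum_le_sum hpt
  have hlhs : ∑ k ∈ range (n+1),
      w p n k * (Real.sqrt θ - Real.sqrt θ / (m - θ)^2 * ((k:ℝ) - m)^2)
      = Real.sqrt θ - Real.sqrt θ / (m - θ)^2 * (m * (1 - p)) := by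
    have expand : ∀ k ∈ range (n+1),
        w p n k * (Real.sqrt θ - Real.sqrt θ / (m - θ)^2 * ((k:ℝ) - m)^2)
        = Real.sqrt θ * w p n k
          - Real.sqrt θ / (m - θ)^2 * (w p n k * ((k:ℝ) - (n:ℝ)*p)^2) := by
      intro k _; rw [hm_def]; ring
    rw [Finset.sum_congr rfl expand, Finset.sum_sub_distrib, ← Finset.mul_sum, ← Finset.mul_sum,
      sum_w, sum_w_var, ← hm_def]
    ring
  -- numeric finish
  have hmθ : m - θ = η * m := by rw [hθ_def]; ring
  have hbound : Real.sqrt θ / (m - θ)^2 * (m * (1 - p)) ≤ Real.sqrt m / (η^2 * m) := by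
    have h1 : Real.sqrt θ ≤ Real.sqrt m := Real.sqrt_le_sqrt hθm.le
    have h2 : m * (1 - p) ≤ m := by nlinarith
    rw [hmθ, show (η * m)^2 = η^2 * m^2 by ring]
    calc Real.sqrt θ / (η^2 * m^2) * (m * (1-p))
        ≤ Real.sqrt m / (η^2 * m^2) * m := by
          apply mul_le_mul _ h2 (by nlinarith) (by positivity)
          gcongr
      _ = Real.sqrt m / (η^2 * m) := by field_simp
  have hsqθ : (1-η) * Real.sqrt m ≤ Real.sqrt θ := by
    rw [hθ_def, Real.sqrt_mul (by linarith : (0:ℝ) ≤ 1-η)]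
    have hs := Real.sq_sqrt (show (0:ℝ) ≤ 1-η by linarith)
    have hs0 := Real.sqrt_nonneg (1-η)
    have hsm := Real.sqrt_nonneg m
    have hs1 : Real.sqrt (1-η) ≤ 1 := by nlinarith
    have hs2 : (1-η) ≤ Real.sqrt (1-η) := by nlinarith
    exact mul_le_mul_of_nonneg_right hs2 hsm
  have hm2 : 2 / (η^2 * ε) ≤ m := by
    have hcast : (N₀ : ℝ) ≤ (n : ℝ) := by exact_mod_cast le_trans (Nat.le_add_right N₀ 1) hn
    have h1 : 2 / (η^2 * ε * p) ≤ (n:ℝ) := le_trans hN₀ hcast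
    have he : 2 / (η^2 * ε) = (2 / (η^2 * ε * p)) * p := by field_simp
    rw [he, hm_def]
    exact mul_le_mul_of_nonneg_right h1 hp.le
  have hfrac : Real.sqrt m / (η^2 * m) ≤ (ε/2) * Real.sqrt m := by
    have h5 : 2/ε ≤ η^2 * m := by
      have := mul_le_mul_of_nonneg_left hm2 (by positivity : (0:ℝ) ≤ η^2)
      calc 2/ε = η^2 * (2 / (η^2 * ε)) := by field_simp
        _ ≤ η^2 * m := this
    have h6 : 1 / (η^2 * m) ≤ ε/2 := by
      rw [div_le_iff₀ (by positivity)]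
      have hε' : (0:ℝ) < ε := hε
      calc (1:ℝ) = (ε/2) * (2/ε) := by field_simp
        _ ≤ (ε/2) * (η^2 * m) := by
            apply mul_le_mul_of_nonneg_left h5 (by positivity)
    calc Real.sqrt m / (η^2 * m) = Real.sqrt m * (1 / (η^2 * m)) := by ring
      _ ≤ Real.sqrt m * (ε/2) := by
          apply mul_le_mul_of_nonneg_left h6 (Real.sqrt_nonneg m)
      _ = (ε/2) * Real.sqrt m := by ring
  have hsm := Real.sqrt_nonneg m
  have hη_eq : η = ε/2 := hη_def
  calc (1-ε) * Real.sqrt m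
      = (1-η) * Real.sqrt m - (ε/2) * Real.sqrt m := by rw [hη_eq]; ring
    _ ≤ Real.sqrt θ - Real.sqrt θ / (m - θ)^2 * (m * (1 - p)) := by
        have := le_trans hbound hfrac
        linarith
    _ = ∑ k ∈ range (n+1),
        w p n k * (Real.sqrt θ - Real.sqrt θ / (m - θ)^2 * ((k:ℝ) - m)^2) := hlhs.symm
    _ ≤ ∑ k ∈ range (n+1), w p n k * Real.sqrt k := hsum


end TrieLB

/-- **Lower bound for the trie recurrence** (Proposition 3, Schachinger).
If `(a_n)` satisfies the trie recurrence
`a_n = M ∑_j ∑_k C(n,k) p_j^k (1-p_j)^{n-k} a_k + b_n` with `a_0 = a_1 = 0`,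
where `b_n ≥ 0` for `n ≥ 2` and `b_{n₀} > 0` for some `n₀ ≥ 2`, then `a_n = Ω(n^ρ)`. -/
theorem trie_recurrence_lower_bound
    {M A : ℕ} (hM : 1 ≤ M) (hA : 2 ≤ A)
    (p : Fin A → ℝ) (hp0 : ∀ j, 0 < p j) (hp1 : ∀ j, p j < 1)
    (hpsum : ∑ j, p j = 1)
    (hnonexp : ∑ j, (p j) ^ 2 < 1 / (M : ℝ))
    (ρ : ℝ) (hρ : ∑ j, (p j) ^ ρ = 1 / (M : ℝ))
    (a b : ℕ → ℝ) (ha0 : a 0 = 0) (ha1 : a 1 = 0)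
    (hrec : ∀ n, 2 ≤ n → a n = (M : ℝ) * ∑ j, ∑ k ∈ Finset.range (n + 1),
        (n.choose k : ℝ) * p j ^ k * (1 - p j) ^ (n - k) * a k + b n)
    (hb0 : ∀ n, 2 ≤ n → 0 ≤ b n)
    (hbpos : ∃ n₀, 2 ≤ n₀ ∧ 0 < b n₀) :
    ∃ c : ℝ, 0 < c ∧ ∃ N : ℕ, ∀ n ≥ N, c * (n : ℝ) ^ ρ ≤ a n := by
  classical
  obtain ⟨n₀, hn₀2, hbn₀⟩ := hbpos
  have hApos : 0 < A := by omega
  have hne : Nonempty (Fin A) := ⟨⟨0, hApos⟩⟩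
  have huniv : (Finset.univ : Finset (Fin A)).Nonempty := Finset.univ_nonempty
  have hM0 : (0:ℝ) < M := by exact_mod_cast Nat.lt_of_lt_of_le Nat.zero_lt_one hM
  have hq : ∀ j, (0:ℝ) < 1 - p j := fun j => by linarith [hp1 j]
  have hρ1 : (1:ℝ) ≤ ρ := by
    by_contra hcon
    push_neg at hcon
    have hlt : ∑ j, p j < ∑ j, p j ^ ρ := by
      apply Finset.sum_lt_sum_of_nonempty huniv
      intro j _
      have h := Real.rpow_lt_rpow_of_exponent_gt (hp0 j) (hp1 j) hcon
      rwa [Real.rpow_one] at h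
    rw [hpsum, hρ] at hlt
    have h2 : (1:ℝ)/M ≤ 1 := by
      rw [div_le_one hM0]; exact_mod_cast hM
    linarith
  have hρ0 : (0:ℝ) ≤ ρ := by linarith
  -- σ bound
  have hσ : ∀ n, 2 ≤ n → (M:ℝ) * ∑ j, p j ^ n < 1 := by
    intro n hn
    have h2 : ∑ j, p j ^ n ≤ ∑ j, p j ^ 2 := by
      apply Finset.sum_le_sum
      intro j _
      exact pow_le_pow_of_le_one (hp0 j).le (hp1 j).le hn
    calc (M:ℝ) * ∑ j, p j ^ n ≤ (M:ℝ) * ∑ j, p j ^ 2 :=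
          mul_le_mul_of_nonneg_left h2 hM0.le
      _ < (M:ℝ) * (1/M) := mul_lt_mul_of_pos_left hnonexp hM0
      _ = 1 := by field_simp
  have hσnn : ∀ n : ℕ, (0:ℝ) ≤ ∑ j, p j ^ n := fun n =>
    Finset.sum_nonneg fun j _ => pow_nonneg (hp0 j).le n
  -- key rearranged identity
  have key : ∀ n, 2 ≤ n → (1 - (M:ℝ) * ∑ j, p j ^ n) * a n
      = (M:ℝ) * ∑ j, ∑ k ∈ Finset.range n, (n.choose k : ℝ) * p j ^ k * (1 - p j) ^ (n-k) * a k
        + b n := by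
    intro n hn
    have h := hrec n hn
    have hsplit : ∀ j : Fin A,
        ∑ k ∈ Finset.range (n+1), (n.choose k : ℝ) * p j ^ k * (1 - p j) ^ (n-k) * a k
        = (∑ k ∈ Finset.range n, (n.choose k : ℝ) * p j ^ k * (1 - p j) ^ (n-k) * a k)
          + p j ^ n * a n := by
      intro j
      rw [Finset.sum_range_succ, Nat.choose_self, Nat.sub_self, pow_zero]
      push_cast; ring
    rw [Finset.sum_congr rfl (fun j _ => hsplit j), Finset.sum_add_distrib,
      ← Finset.sum_mul] at h
    linear_combination h
  have htermnn : ∀ (n : ℕ) (j : Fin A) (k : ℕ), 0 ≤ a k →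
      0 ≤ (n.choose k : ℝ) * p j ^ k * (1 - p j) ^ (n-k) * a k := by
    intro n j k hak
    exact mul_nonneg (mul_nonneg (mul_nonneg (Nat.cast_nonneg _)
      (pow_nonneg (hp0 j).le _)) (pow_nonneg (hq j).le _)) hak
  -- nonnegativity of a
  have hann : ∀ n, 0 ≤ a n := by
    intro n
    induction n using Nat.strong_induction_on with
    | _ n ih =>
      rcases Nat.lt_or_ge n 2 with h2 | h2
      · interval_cases n
        · simp [ha0]
        · simp [ha1]
      · have hk := key n h2
        have h1 : 0 < 1 - (M:ℝ) * ∑ j, p j ^ n := by linarith [hσ n h2]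
        have hS : 0 ≤ ∑ j : Fin A, ∑ k ∈ Finset.range n,
            (n.choose k:ℝ) * p j ^ k * (1 - p j)^(n-k) * a k := by
          apply Finset.sum_nonneg; intro j _
          apply Finset.sum_nonneg; intro k hk'
          exact htermnn n j k (ih k (Finset.mem_range.mp hk'))
        by_contra hneg
        push_neg at hneg
        have hlt : (1 - (M:ℝ) * ∑ j, p j ^ n) * a n < 0 := mul_neg_of_pos_of_neg h1 hneg
        nlinarith [hb0 n h2, mul_nonneg hM0.le hS]
  -- strict positivity from n₀ on
  have hapos : ∀ n, n₀ ≤ n → 0 < a n := by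
    have han₀ : 0 < a n₀ := by
      have hk := key n₀ hn₀2
      have h1 : 0 < 1 - (M:ℝ) * ∑ j, p j ^ n₀ := by linarith [hσ n₀ hn₀2]
      have hS : 0 ≤ ∑ j : Fin A, ∑ k ∈ Finset.range n₀,
          (n₀.choose k:ℝ) * p j ^ k * (1 - p j)^(n₀-k) * a k := by
        apply Finset.sum_nonneg; intro j _
        apply Finset.sum_nonneg; intro k _
        exact htermnn n₀ j k (hann k)
      by_contra hneg
      push_neg at hneg
      have : (1 - (M:ℝ) * ∑ j, p j ^ n₀) * a n₀ ≤ 0 := mul_nonpos_of_nonneg_of_nonpos h1.le hneg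
      nlinarith [mul_nonneg hM0.le hS]
    intro n hn
    rcases eq_or_lt_of_le hn with rfl | hlt
    · exact han₀
    · have h2 : 2 ≤ n := by omega
      have hk := key n h2
      have h1 : 0 < 1 - (M:ℝ) * ∑ j, p j ^ n := by linarith [hσ n h2]
      have hsingle : ∀ j : Fin A, (n.choose n₀:ℝ) * p j ^ n₀ * (1 - p j)^(n-n₀) * a n₀
          ≤ ∑ k ∈ Finset.range n, (n.choose k:ℝ) * p j ^ k * (1 - p j)^(n-k) * a k := by
        intro j
        exact Finset.single_le_sum (f := fun k => (n.choose k:ℝ) * p j ^ k * (1 - p j)^(n-k) * a k)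
          (fun k _ => htermnn n j k (hann k)) (Finset.mem_range.mpr hlt)
      have hposS : 0 < ∑ j : Fin A, ∑ k ∈ Finset.range n,
          (n.choose k:ℝ) * p j ^ k * (1 - p j)^(n-k) * a k := by
        have hp1' : 0 < ∑ j : Fin A, (n.choose n₀:ℝ) * p j ^ n₀ * (1 - p j)^(n-n₀) * a n₀ := by
          apply Finset.sum_pos _ huniv
          intro j _
          have hc : (0:ℝ) < (n.choose n₀ : ℝ) := by
            exact_mod_cast Nat.choose_pos (le_of_lt hlt)
          exact mul_pos (mul_pos (mul_pos hc (pow_pos (hp0 j) _)) (pow_pos (hq j) _)) han₀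
        exact lt_of_lt_of_le hp1' (Finset.sum_le_sum fun j _ => hsingle j)
      by_contra hneg
      push_neg at hneg
      have : (1 - (M:ℝ) * ∑ j, p j ^ n) * a n ≤ 0 := mul_nonpos_of_nonneg_of_nonpos h1.le hneg
      nlinarith [hb0 n h2, mul_pos hM0 hposS]
  -- constants
  obtain ⟨δ, hδ_def⟩ : ∃ δ:ℝ, δ = (M:ℝ) * ∑ j, Real.sqrt (p j) - 1 := ⟨_, rfl⟩
  have hδ : 0 < δ := by
    have hlt : ∑ j, p j ^ ρ < ∑ j, Real.sqrt (p j) := by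
      apply Finset.sum_lt_sum_of_nonempty huniv
      intro j _
      rw [show Real.sqrt (p j) = p j ^ ((1:ℝ)/2) from Real.sqrt_eq_rpow (p j)]
      exact Real.rpow_lt_rpow_of_exponent_gt (hp0 j) (hp1 j) (by linarith)
    rw [hρ] at hlt
    rw [hδ_def]
    rw [div_lt_iff₀ hM0] at hlt
    nlinarith
  obtain ⟨ε, hε_def⟩ : ∃ ε:ℝ, ε = δ/(2*(1+δ)) := ⟨_, rfl⟩
  have hε0 : 0 < ε := by rw [hε_def]; positivity
  have hε1 : ε < 1 := by
    rw [hε_def, div_lt_one (by positivity)]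
    nlinarith
  have hεδ : (1-ε)*(1+δ) = 1 + δ/2 := by
    rw [hε_def]
    field_simp
    ring
  obtain ⟨T, hT_def⟩ : ∃ T:ℝ, T = (n₀:ℝ)^ρ + Real.sqrt n₀ := ⟨_, rfl⟩
  have hT0 : 0 < T := by
    have h0 : (0:ℝ) < (n₀:ℝ) := by exact_mod_cast Nat.lt_of_lt_of_le Nat.zero_lt_two hn₀2
    rw [hT_def]
    have := Real.rpow_pos_of_pos h0 ρ
    have := Real.sqrt_nonneg (n₀:ℝ)
    linarith
  obtain ⟨φ, hφ_def⟩ : ∃ φ : ℕ → ℝ, φ = fun k : ℕ => max 0 ((k:ℝ)^ρ + Real.sqrt k - T) :=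
    ⟨_, rfl⟩
  have hφnn : ∀ k, 0 ≤ φ k := fun k => by rw [hφ_def]; exact le_max_left _ _
  have hφlb : ∀ k : ℕ, (k:ℝ)^ρ + Real.sqrt k - T ≤ φ k := fun k => by
    rw [hφ_def]; exact le_max_right _ _
  have hφeq : ∀ k : ℕ, φ k = max 0 ((k:ℝ)^ρ + Real.sqrt k - T) := fun k => by rw [hφ_def]
  have hφ0 : ∀ k, k ≤ n₀ → φ k = 0 := by
    intro k hk
    rw [hφeq k]
    apply max_eq_left
    have h1 : (k:ℝ)^ρ ≤ (n₀:ℝ)^ρ :=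
      Real.rpow_le_rpow (Nat.cast_nonneg k) (by exact_mod_cast hk) hρ0
    have h2 : Real.sqrt k ≤ Real.sqrt n₀ := Real.sqrt_le_sqrt (by exact_mod_cast hk)
    rw [hT_def]; linarith
  -- thresholds
  choose Nf hNf using fun j : Fin A =>
    TrieLB.sqrt_mom (hp0 j) (hp1 j).le hε0 hε1
  obtain ⟨Nc, hNc⟩ := exists_nat_ge ((2*(M:ℝ)*A*T/δ)^2)
  obtain ⟨N₂, hN₂⟩ : ∃ N₂:ℕ, N₂ = max (max (Finset.univ.sup Nf) Nc) n₀ := ⟨_, rfl⟩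
  have hN₂n₀ : n₀ ≤ N₂ := by rw [hN₂]; exact le_max_right _ _
  have hN₂Nf : ∀ j, Nf j ≤ N₂ := fun j => by
    rw [hN₂]
    exact le_trans (Finset.le_sup (Finset.mem_univ j)) (le_trans (le_max_left _ _) (le_max_left _ _))
  have hN₂Nc : Nc ≤ N₂ := by
    rw [hN₂]; exact le_trans (le_max_right _ _) (le_max_left _ _)
  -- the constant c
  have hIcc : (Finset.Icc n₀ N₂).Nonempty := ⟨n₀, Finset.mem_Icc.mpr ⟨le_refl _, hN₂n₀⟩⟩
  obtain ⟨c, hc_def⟩ : ∃ c:ℝ, c = (Finset.Icc n₀ N₂).inf' hIcc (fun k => a k / (φ k + 1)) :=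
    ⟨_, rfl⟩
  have hc0 : 0 < c := by
    rw [hc_def, Finset.lt_inf'_iff]
    intro k hk
    have h1 := hapos k (Finset.mem_Icc.mp hk).1
    have h2 : 0 < φ k + 1 := by linarith [hφnn k]
    positivity
  have hcbase : ∀ k, n₀ ≤ k → k ≤ N₂ → c * φ k ≤ a k := by
    intro k h1 h2
    have h3 : c ≤ a k / (φ k + 1) := by
      rw [hc_def]
      exact Finset.inf'_le _ (Finset.mem_Icc.mpr ⟨h1, h2⟩)
    have h4 : 0 < φ k + 1 := by linarith [hφnn k]
    have h5 : c * (φ k + 1) ≤ a k := (le_div_iff₀ h4).mp h3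
    nlinarith [hc0]
  -- main invariant
  have main : ∀ n, c * φ n ≤ a n := by
    intro n
    induction n using Nat.strong_induction_on with
    | _ n ih =>
      rcases Nat.lt_or_ge n n₀ with hsm | hge
      · rw [hφ0 n (le_of_lt hsm), mul_zero]; exact hann n
      rcases le_or_gt n N₂ with hsm2 | hbig
      · exact hcbase n hge hsm2
      have h2 : 2 ≤ n := le_trans hn₀2 hge
      have hn1 : 1 ≤ n := by omega
      have hk := key n h2
      have h1 : 0 < 1 - (M:ℝ) * ∑ j, p j ^ n := by linarith [hσ n h2]
      -- split E_j
      have hEdef : ∀ j : Fin A, ∑ k ∈ Finset.range (n+1), TrieLB.w (p j) n k * φ k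
          = (∑ k ∈ Finset.range n, TrieLB.w (p j) n k * φ k) + p j ^ n * φ n := by
        intro j
        rw [Finset.sum_range_succ]
        congr 1
        unfold TrieLB.w
        rw [Nat.choose_self, Nat.sub_self, pow_zero]
        push_cast; ring
      -- inner bound via induction hypothesis
      have hinner : ∀ j : Fin A,
          c * ((∑ k ∈ Finset.range (n+1), TrieLB.w (p j) n k * φ k) - p j ^ n * φ n)
            ≤ ∑ k ∈ Finset.range n, (n.choose k:ℝ) * p j ^ k * (1 - p j)^(n-k) * a k := by
        intro j
        rw [hEdef j, add_sub_cancel_right, Finset.mul_sum]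
        apply Finset.sum_le_sum
        intro k hk'
        have hik := ih k (Finset.mem_range.mp hk')
        have hw := TrieLB.w_nonneg (hp0 j).le (hp1 j).le n k
        calc c * (TrieLB.w (p j) n k * φ k) = TrieLB.w (p j) n k * (c * φ k) := by ring
          _ ≤ TrieLB.w (p j) n k * a k := mul_le_mul_of_nonneg_left hik hw
          _ = (n.choose k:ℝ) * p j ^ k * (1 - p j)^(n-k) * a k := by
              unfold TrieLB.w; ring
      -- analytic inequality φ n ≤ M ∑_j E_j
      have hE : φ n ≤ (M:ℝ) * ∑ j, ∑ k ∈ Finset.range (n+1), TrieLB.w (p j) n k * φ k := by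
        have hEnn : (0:ℝ) ≤ (M:ℝ) * ∑ j, ∑ k ∈ Finset.range (n+1), TrieLB.w (p j) n k * φ k := by
          apply mul_nonneg hM0.le
          apply Finset.sum_nonneg; intro j _
          apply Finset.sum_nonneg; intro k _
          exact mul_nonneg (TrieLB.w_nonneg (hp0 j).le (hp1 j).le n k) (hφnn k)
        have hEj : ∀ j : Fin A, (n:ℝ)^ρ * p j ^ ρ + (1-ε)*(Real.sqrt n * Real.sqrt (p j)) - T
            ≤ ∑ k ∈ Finset.range (n+1), TrieLB.w (p j) n k * φ k := by
          intro j
          have hJ := TrieLB.jensen_rpow (hp0 j) (hp1 j).le hρ1 hn1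
          have hS := hNf j n (le_trans (hN₂Nf j) (le_of_lt hbig))
          have hJ' : (n:ℝ)^ρ * p j ^ ρ ≤ ∑ k ∈ Finset.range (n+1), TrieLB.w (p j) n k * (k:ℝ)^ρ := by
            rw [← Real.mul_rpow (Nat.cast_nonneg n) (hp0 j).le]
            exact hJ
          have hS' : (1-ε) * (Real.sqrt n * Real.sqrt (p j))
              ≤ ∑ k ∈ Finset.range (n+1), TrieLB.w (p j) n k * Real.sqrt k := by
            rw [← Real.sqrt_mul (Nat.cast_nonneg n)]
            exact hS
          have hlow : ∀ k ∈ Finset.range (n+1),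
              TrieLB.w (p j) n k * ((k:ℝ)^ρ + Real.sqrt k - T) ≤ TrieLB.w (p j) n k * φ k :=
            fun k _ => mul_le_mul_of_nonneg_left (hφlb k)
              (TrieLB.w_nonneg (hp0 j).le (hp1 j).le n k)
          have hsum3 := Finset.sum_le_sum hlow
          have hexp : ∑ k ∈ Finset.range (n+1), TrieLB.w (p j) n k * ((k:ℝ)^ρ + Real.sqrt k - T)
              = (∑ k ∈ Finset.range (n+1), TrieLB.w (p j) n k * (k:ℝ)^ρ)
              + (∑ k ∈ Finset.range (n+1), TrieLB.w (p j) n k * Real.sqrt k)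
              - T * (∑ k ∈ Finset.range (n+1), TrieLB.w (p j) n k) := by
            have e : ∀ k ∈ Finset.range (n+1),
                TrieLB.w (p j) n k * ((k:ℝ)^ρ + Real.sqrt k - T)
                = TrieLB.w (p j) n k * (k:ℝ)^ρ + TrieLB.w (p j) n k * Real.sqrt k
                  - T * TrieLB.w (p j) n k := by
              intro k _; ring
            rw [Finset.sum_congr rfl e, Finset.sum_sub_distrib, Finset.sum_add_distrib,
              ← Finset.mul_sum]
          rw [TrieLB.sum_w] at hexp
          linarith [hsum3, hexp.le, hexp.symm.le]
        have hsumj := Finset.sum_le_sum (s := (Finset.univ : Finset (Fin A))) (fun j _ => hEj j)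
        have hlhs2 : ∑ j, ((n:ℝ)^ρ * p j ^ ρ + (1-ε)*(Real.sqrt n * Real.sqrt (p j)) - T)
            = (n:ℝ)^ρ * (1/(M:ℝ)) + ((1-ε)*Real.sqrt n) * (∑ j, Real.sqrt (p j)) - A*T := by
          have e : ∀ j ∈ (Finset.univ : Finset (Fin A)),
              (n:ℝ)^ρ * p j ^ ρ + (1-ε)*(Real.sqrt n * Real.sqrt (p j)) - T
              = (n:ℝ)^ρ * (p j ^ ρ) + ((1-ε)*Real.sqrt n) * Real.sqrt (p j) - T := by
            intro j _; ring
          rw [Finset.sum_congr rfl e, Finset.sum_sub_distrib, Finset.sum_add_distrib,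
            ← Finset.mul_sum, ← Finset.mul_sum, hρ, Finset.sum_const, Finset.card_univ,
            Fintype.card_fin, nsmul_eq_mul]
        have hMSp : (M:ℝ) * (∑ j, Real.sqrt (p j)) = 1 + δ := by rw [hδ_def]; ring
        have hdef : (M:ℝ)*A*T ≤ (δ/2) * Real.sqrt n := by
          have hcast : ((Nc:ℝ)) ≤ (n:ℝ) := by exact_mod_cast le_trans hN₂Nc (le_of_lt hbig)
          have h6 : ((2*(M:ℝ)*A*T/δ)^2) ≤ (n:ℝ) := le_trans hNc hcast
          have h7 : 2*(M:ℝ)*A*T/δ ≤ Real.sqrt n := by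
            rw [show (2*(M:ℝ)*A*T/δ) = Real.sqrt ((2*(M:ℝ)*A*T/δ)^2) from
              (Real.sqrt_sq (by positivity)).symm]
            exact Real.sqrt_le_sqrt h6
          have h8 : (δ/2) * (2*(M:ℝ)*A*T/δ) ≤ (δ/2) * Real.sqrt n :=
            mul_le_mul_of_nonneg_left h7 (by positivity)
          have hδne : δ ≠ 0 := ne_of_gt hδ
          have h9 : (δ/2) * (2*(M:ℝ)*A*T/δ) = (M:ℝ)*A*T := by
            field_simp
          linarith
        have h10 := mul_le_mul_of_nonneg_left hsumj hM0.le
        rw [hlhs2] at h10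
        have h11 : (M:ℝ) * ((n:ℝ)^ρ * (1/(M:ℝ)) + ((1-ε)*Real.sqrt n) * (∑ j, Real.sqrt (p j)) - A*T)
            = (n:ℝ)^ρ + (1+δ/2)*Real.sqrt n - (M:ℝ)*A*T := by
          have e2 : (M:ℝ) * ((n:ℝ)^ρ * (1/(M:ℝ))) = (n:ℝ)^ρ := by field_simp
          calc (M:ℝ) * ((n:ℝ)^ρ * (1/(M:ℝ)) + ((1-ε)*Real.sqrt n) * (∑ j, Real.sqrt (p j)) - A*T)
              = (M:ℝ) * ((n:ℝ)^ρ * (1/(M:ℝ)))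
                + (1-ε)*(1+δ)*Real.sqrt n - (M:ℝ)*A*T := by
                rw [← hMSp]; ring
            _ = (n:ℝ)^ρ + (1+δ/2)*Real.sqrt n - (M:ℝ)*A*T := by rw [e2, hεδ]
        rw [h11] at h10
        have hsn : 0 ≤ Real.sqrt (n:ℝ) := Real.sqrt_nonneg _
        rw [hφeq n]
        apply max_le hEnn
        linarith [h10, hdef, hT0]
      -- combine
      have hsum_inner := Finset.sum_le_sum (fun (j : Fin A) (_ : j ∈ Finset.univ) => hinner j)
      have hs2 : ∑ j, c * ((∑ k ∈ Finset.range (n+1), TrieLB.w (p j) n k * φ k) - p j ^ n * φ n)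
          = c * ((∑ j, ∑ k ∈ Finset.range (n+1), TrieLB.w (p j) n k * φ k)
              - (∑ j, p j ^ n) * φ n) := by
        rw [← Finset.mul_sum, Finset.sum_sub_distrib, ← Finset.sum_mul]
      rw [hs2] at hsum_inner
      have g2 : c * φ n ≤ c * ((M:ℝ) * ∑ j, ∑ k ∈ Finset.range (n+1), TrieLB.w (p j) n k * φ k) :=
        mul_le_mul_of_nonneg_left hE hc0.le
      have g1 := mul_le_mul_of_nonneg_left hsum_inner hM0.le
      have g4 : (1 - (M:ℝ) * ∑ j, p j ^ n) * (c * φ n)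
          ≤ (1 - (M:ℝ) * ∑ j, p j ^ n) * a n := by
        nlinarith [hk, hb0 n h2, g1, g2]
      exact le_of_mul_le_mul_left g4 h1
  -- conclusion
  obtain ⟨N₃, hN₃⟩ := exists_nat_ge (2*T)
  refine ⟨c/2, by positivity, max (N₂+1) (max N₃ 1), ?_⟩
  intro n hn
  have hb2 : N₃ ≤ n := le_trans (le_trans (le_max_left _ _) (le_max_right _ _)) hn
  have hb3 : 1 ≤ n := le_trans (le_trans (le_max_right _ _) (le_max_right _ _)) hn
  have h2T : 2*T ≤ (n:ℝ) := le_trans hN₃ (by exact_mod_cast hb2)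
  have hn1R : (1:ℝ) ≤ (n:ℝ) := by exact_mod_cast hb3
  have hnρ : (n:ℝ) ≤ (n:ℝ)^ρ := by
    have h := Real.rpow_le_rpow_of_exponent_le hn1R hρ1
    rwa [Real.rpow_one] at h
  have hmain := main n
  have hφn : (n:ℝ)^ρ + Real.sqrt n - T ≤ φ n := hφlb n
  have hsn : 0 ≤ Real.sqrt (n:ℝ) := Real.sqrt_nonneg _
  have hstep : c/2 * (n:ℝ)^ρ ≤ c * φ n := by
    have h12 : (n:ℝ)^ρ/2 ≤ φ n := by linarith
    calc c/2 * (n:ℝ)^ρ = c * ((n:ℝ)^ρ/2) := by ring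
      _ ≤ c * φ n := mul_le_mul_of_nonneg_left h12 hc0.le
  linarith
end

section
/- Asymptotic transfer for the trie recurrence, large toll-sequence case: suppose the real sequence (a_n) satisfies the trie recurrence with toll-sequence (b_n) where b_n = c·n^α + o(n^α) as n → ∞ for some real constant c and some real α > ρ. Then a_n = c·n^α/P(α) + o(n^α) as n → ∞, where P(α) = 1 - M Σ_{j=1}^A p_j^α (which is positive since α > ρ). -/
open Filter Asymptotics Finset



/-- MVT-type inequality for rpow. -/
lemma rpow_mvt {s x y n : ℝ} (hs : 1 ≤ s) (hx : 0 ≤ x) (hy : 0 ≤ y)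
    (hxn : x ≤ n) (hyn : y ≤ n) : |x ^ s - y ^ s| ≤ s * n ^ (s - 1) * |x - y| := by
  have hn : 0 ≤ n := le_trans hx hxn
  -- key one-sided lemma
  have key : ∀ u v : ℝ, 0 ≤ v → v ≤ u → u ≤ n → u ^ s - v ^ s ≤ s * n ^ (s - 1) * (u - v) := by
    intro u v hv hvu hun
    have hu : 0 ≤ u := le_trans hv hvu
    rcases eq_or_lt_of_le hu with h0 | h0
    · have hv0 : v = 0 := le_antisymm (h0 ▸ hvu) hv
      rw [← h0, ← hv0]
      simp
    · -- u > 0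
      have ht : -1 ≤ v / u - 1 := by
        have : 0 ≤ v / u := div_nonneg hv hu
        linarith
      have hb := one_add_mul_self_le_rpow_one_add ht hs
      rw [add_sub_cancel] at hb
      have hvu' : (v / u) ^ s = v ^ s / u ^ s := Real.div_rpow hv hu s
      rw [hvu'] at hb
      have hus : (0:ℝ) < u ^ s := Real.rpow_pos_of_pos h0 s
      have h1 : u ^ s - v ^ s ≤ s * (1 - v / u) * u ^ s := by
        have := mul_le_mul_of_nonneg_right hb hus.le
        rw [div_mul_cancel₀ _ (ne_of_gt hus)] at this
        nlinarith
      have h2 : s * (1 - v / u) * u ^ s = s * u ^ (s - 1) * (u - v) := by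
        have : u ^ s = u ^ (s - 1) * u := by
          rw [← Real.rpow_add_one (ne_of_gt h0), sub_add_cancel]
        rw [this]
        field_simp
      rw [h2] at h1
      refine h1.trans ?_
      have hmono : u ^ (s - 1) ≤ n ^ (s - 1) :=
        Real.rpow_le_rpow hu hun (by linarith)
      have : 0 ≤ u - v := by linarith
      exact mul_le_mul_of_nonneg_right (mul_le_mul_of_nonneg_left hmono (by linarith)) this
  have hs0 : (0:ℝ) ≤ s := by linarith
  rcases le_total y x with h | h
  · have hmon : y ^ s ≤ x ^ s := Real.rpow_le_rpow hy h hs0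
    rw [abs_of_nonneg (by linarith), abs_of_nonneg (by linarith)]
    exact key x y hy h hxn
  · have hmon : x ^ s ≤ y ^ s := Real.rpow_le_rpow hx h hs0
    rw [abs_sub_comm, abs_sub_comm x y]
    rw [abs_of_nonneg (by linarith), abs_of_nonneg (by linarith)]
    exact key y x hx h hyn


lemma binom_sum_one (p : ℝ) (n : ℕ) :
    ∑ k ∈ range (n + 1), (n.choose k : ℝ) * p ^ k * (1 - p) ^ (n - k) = 1 := by
  have h := add_pow p (1 - p) n
  simp only [add_sub_cancel, one_pow] at h
  calc ∑ k ∈ range (n + 1), (n.choose k : ℝ) * p ^ k * (1 - p) ^ (n - k)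
      = ∑ k ∈ range (n + 1), p ^ k * (1 - p) ^ (n - k) * (n.choose k : ℝ) :=
        Finset.sum_congr rfl fun k _ => by ring
    _ = 1 := h.symm

lemma binom_var {p : ℝ} (hp0 : 0 ≤ p) (hp1 : p ≤ 1) {n : ℕ} (hn : 0 < n) :
    ∑ k ∈ range (n + 1), (n.choose k : ℝ) * p ^ k * (1 - p) ^ (n - k) * ((k : ℝ) - p * n) ^ 2
      = n * p * (1 - p) := by
  have hn' : (0 : ℝ) < n := by exact_mod_cast hn
  have hn0 : (n : ℝ) ≠ 0 := ne_of_gt hn'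
  have hv := bernstein.variance (n := n) hn.ne' ⟨p, hp0, hp1⟩
  simp only [bernstein.z, bernstein_apply] at hv
  rw [← Finset.sum_range
    (f := fun k => (p - (k : ℝ) / n) ^ 2 * ((n.choose k : ℝ) * p ^ k * (1 - p) ^ (n - k)))] at hv
  have expand : ∀ k ∈ range (n + 1),
      (n.choose k : ℝ) * p ^ k * (1 - p) ^ (n - k) * ((k : ℝ) - p * n) ^ 2
      = (n:ℝ)^2 * ((p - (k : ℝ) / n) ^ 2 * ((n.choose k : ℝ) * p ^ k * (1 - p) ^ (n - k))) := by
    intro k _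
    have : ((k : ℝ) - p * n) ^ 2 = (n:ℝ)^2 * (p - (k : ℝ) / n) ^ 2 := by
      field_simp; ring
    rw [this]; ring
  rw [Finset.sum_congr rfl expand, ← Finset.mul_sum, hv]
  field_simp


lemma binom_wt_nonneg {p : ℝ} (hp0 : 0 ≤ p) (hp1 : p ≤ 1) (n k : ℕ) :
    0 ≤ (n.choose k : ℝ) * p ^ k * (1 - p) ^ (n - k) := by
  have : (0:ℝ) ≤ 1 - p := by linarith
  positivity

lemma binom_mad {p : ℝ} (hp0 : 0 ≤ p) (hp1 : p ≤ 1) {n : ℕ} (hn : 0 < n) :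
    ∑ k ∈ range (n + 1), (n.choose k : ℝ) * p ^ k * (1 - p) ^ (n - k) * |(k : ℝ) - p * n|
      ≤ Real.sqrt n := by
  set w : ℕ → ℝ := fun k => (n.choose k : ℝ) * p ^ k * (1 - p) ^ (n - k) with hw
  have hwn : ∀ k, 0 ≤ w k := fun k => binom_wt_nonneg hp0 hp1 n k
  have key : ∑ k ∈ range (n + 1), w k * |(k : ℝ) - p * n|
      ≤ Real.sqrt (∑ k ∈ range (n + 1), w k) *
        Real.sqrt (∑ k ∈ range (n + 1), w k * ((k : ℝ) - p * n) ^ 2) := by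
    have := Real.sum_sqrt_mul_sqrt_le (range (n + 1))
      (f := fun k => w k) (g := fun k => w k * ((k : ℝ) - p * n) ^ 2)
      (fun k => hwn k) (fun k => mul_nonneg (hwn k) (sq_nonneg _))
    refine le_trans (le_of_eq ?_) this
    refine Finset.sum_congr rfl fun k _ => ?_
    have h1 : Real.sqrt (w k * ((k : ℝ) - p * n) ^ 2)
        = Real.sqrt (w k) * |(k : ℝ) - p * n| := by
      rw [Real.sqrt_mul (hwn k), Real.sqrt_sq_eq_abs]
    rw [h1, ← mul_assoc, Real.mul_self_sqrt (hwn k)]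
  rw [binom_sum_one, Real.sqrt_one, one_mul] at key
  have hvar : ∑ k ∈ range (n + 1), w k * ((k : ℝ) - p * n) ^ 2 = n * p * (1 - p) := by
    exact binom_var hp0 hp1 hn
  rw [hvar] at key
  refine key.trans (Real.sqrt_le_sqrt ?_)
  have h1 : (0:ℝ) ≤ (n:ℝ) := Nat.cast_nonneg n
  nlinarith [mul_nonneg h1 (show (0:ℝ) ≤ 1 - p * (1 - p) by nlinarith [sq_nonneg (p - 1/2)])]

lemma binom_moment {p : ℝ} (hp0 : 0 ≤ p) (hp1 : p ≤ 1) {s : ℝ} (hs : 1 ≤ s) {n : ℕ}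
    (hn : 0 < n) :
    |∑ k ∈ range (n + 1), (n.choose k : ℝ) * p ^ k * (1 - p) ^ (n - k) * (k : ℝ) ^ s
      - (p * n) ^ s| ≤ s * (n : ℝ) ^ (s - 1) * Real.sqrt n := by
  set w : ℕ → ℝ := fun k => (n.choose k : ℝ) * p ^ k * (1 - p) ^ (n - k) with hw
  have hwn : ∀ k, 0 ≤ w k := fun k => binom_wt_nonneg hp0 hp1 n k
  have hnn : (0:ℝ) ≤ n := Nat.cast_nonneg n
  have hsplit : (p * n : ℝ) ^ s = ∑ k ∈ range (n + 1), w k * (p * n) ^ s := by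
    rw [← Finset.sum_mul, binom_sum_one, one_mul]
  calc |∑ k ∈ range (n + 1), w k * (k : ℝ) ^ s - (p * n) ^ s|
      = |∑ k ∈ range (n + 1), w k * ((k : ℝ) ^ s - (p * n) ^ s)| := by
        congr 1
        have e : ∑ k ∈ range (n + 1), w k * ((k : ℝ) ^ s - (p * n) ^ s)
            = (∑ k ∈ range (n + 1), w k * (k : ℝ) ^ s)
              - ∑ k ∈ range (n + 1), w k * (p * n) ^ s := by
          rw [← Finset.sum_sub_distrib]
          exact Finset.sum_congr rfl fun k _ => by ring
        rw [e, ← hsplit]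
    _ ≤ ∑ k ∈ range (n + 1), |w k * ((k : ℝ) ^ s - (p * n) ^ s)| :=
        Finset.abs_sum_le_sum_abs _ _
    _ ≤ ∑ k ∈ range (n + 1), w k * (s * (n : ℝ) ^ (s - 1) * |(k : ℝ) - p * n|) := by
        refine Finset.sum_le_sum fun k hk => ?_
        rw [abs_mul, abs_of_nonneg (hwn k)]
        refine mul_le_mul_of_nonneg_left ?_ (hwn k)
        refine rpow_mvt hs (Nat.cast_nonneg k) (by positivity) ?_ ?_
        · exact_mod_cast Nat.lt_succ_iff.mp (Finset.mem_range.mp hk)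
        · nlinarith
    _ = s * (n : ℝ) ^ (s - 1) * ∑ k ∈ range (n + 1), w k * |(k : ℝ) - p * n| := by
        rw [Finset.mul_sum]
        exact Finset.sum_congr rfl fun k _ => by ring
    _ ≤ s * (n : ℝ) ^ (s - 1) * Real.sqrt n := by
        refine mul_le_mul_of_nonneg_left (binom_mad hp0 hp1 hn) ?_
        positivity


lemma ev_sqrt_bound (K t : ℝ) {δ : ℝ} (hδ : 0 < δ) :
    ∀ᶠ n : ℕ in atTop, K * (n : ℝ) ^ (t - 1) * Real.sqrt n ≤ δ * (n : ℝ) ^ t := by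
  have h1 : ∀ᶠ n : ℕ in atTop, (K / δ) ^ 2 + 1 ≤ (n : ℝ) :=
    tendsto_natCast_atTop_atTop.eventually_ge_atTop _
  filter_upwards [h1, eventually_ge_atTop 1] with n hn hn1
  have hn0 : (0:ℝ) < (n:ℝ) := by
    have : (1:ℝ) ≤ (n:ℝ) := by exact_mod_cast hn1
    linarith
  have hs : K / δ ≤ Real.sqrt n := by
    have h2 : |K / δ| = Real.sqrt ((K / δ) ^ 2) := (Real.sqrt_sq_eq_abs _).symm
    calc K / δ ≤ |K / δ| := le_abs_self _
      _ = Real.sqrt ((K / δ) ^ 2) := h2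
      _ ≤ Real.sqrt n := Real.sqrt_le_sqrt (by linarith)
  have hK : K * Real.sqrt n ≤ δ * n := by
    have hK' : K ≤ δ * Real.sqrt n := by
      rw [div_le_iff₀ hδ] at hs; linarith [hs]
    have h3 : K * Real.sqrt n ≤ (δ * Real.sqrt n) * Real.sqrt n :=
      mul_le_mul_of_nonneg_right hK' (Real.sqrt_nonneg _)
    rwa [mul_assoc, Real.mul_self_sqrt hn0.le] at h3
  calc K * (n : ℝ) ^ (t - 1) * Real.sqrt n = (K * Real.sqrt n) * (n : ℝ) ^ (t - 1) := by ring
    _ ≤ (δ * n) * (n : ℝ) ^ (t - 1) :=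
      mul_le_mul_of_nonneg_right hK (Real.rpow_nonneg hn0.le _)
    _ = δ * (n : ℝ) ^ t := by
      rw [mul_assoc]
      congr 1
      nth_rewrite 1 [← Real.rpow_one (n:ℝ)]
      rw [← Real.rpow_add hn0]
      norm_num
set_option maxHeartbeats 3200000 in
/-- **Asymptotic transfer for the trie recurrence, large toll-sequence case**
(Proposition 4). If `(a_n)` satisfies the trie recurrence with toll-sequence
`b_n = c·n^α + o(n^α)` where `α > ρ`, then `P(α) = 1 - M ∑_j p_j^α > 0` and
`a_n = c·n^α/P(α) + o(n^α)`. -/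
theorem trie_recurrence_asymptotic_transfer
    {M A : ℕ} (hM : 1 ≤ M) (hA : 2 ≤ A)
    (p : Fin A → ℝ) (hp0 : ∀ j, 0 < p j) (hp1 : ∀ j, p j < 1)
    (hpsum : ∑ j, p j = 1)
    (hnonexp : ∑ j, (p j) ^ 2 < 1 / (M : ℝ))
    (ρ : ℝ) (hρ : ∑ j, (p j) ^ ρ = 1 / (M : ℝ))
    (a b : ℕ → ℝ) (ha0 : a 0 = 0) (ha1 : a 1 = 0)
    (hrec : ∀ n, 2 ≤ n → a n = (M : ℝ) * ∑ j, ∑ k ∈ Finset.range (n + 1),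
        (n.choose k : ℝ) * p j ^ k * (1 - p j) ^ (n - k) * a k + b n)
    (c α : ℝ) (hα : ρ < α)
    (hb : (fun n : ℕ => b n - c * (n : ℝ) ^ α) =o[atTop] (fun n : ℕ => (n : ℝ) ^ α)) :
    0 < 1 - (M : ℝ) * ∑ j, (p j) ^ α ∧
    (fun n : ℕ => a n - c * (n : ℝ) ^ α / (1 - (M : ℝ) * ∑ j, (p j) ^ α))
      =o[atTop] (fun n : ℕ => (n : ℝ) ^ α) := by
  have hMpos : (0:ℝ) < M := by exact_mod_cast hM
  have hAne : (Finset.univ : Finset (Fin A)).Nonempty := ⟨⟨0, by omega⟩, Finset.mem_univ _⟩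
  -- strict monotonicity of s ↦ M ∑ p j ^ s
  have hγmono : ∀ s t : ℝ, s < t →
      (M : ℝ) * ∑ j, p j ^ t < (M : ℝ) * ∑ j, p j ^ s := by
    intro s t hst
    refine mul_lt_mul_of_pos_left (Finset.sum_lt_sum_of_nonempty hAne fun j _ =>
      Real.rpow_lt_rpow_of_exponent_gt (hp0 j) (hp1 j) hst) hMpos
  have hγρ : (M : ℝ) * ∑ j, p j ^ ρ = 1 := by
    rw [hρ]; field_simp
  -- ρ ≥ 1
  have hρ1 : 1 ≤ ρ := by
    by_contra h
    push_neg at h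
    have h2 := hγmono ρ 1 h
    rw [hγρ] at h2
    have h3 : ∑ j, p j ^ (1:ℝ) = 1 := by
      rw [Finset.sum_congr rfl fun j (_ : j ∈ Finset.univ) => Real.rpow_one (p j), hpsum]
    rw [h3, mul_one] at h2
    exact absurd h2 (not_lt.mpr (by exact_mod_cast hM))
  have hα1 : 1 ≤ α := le_trans hρ1 hα.le
  have hγα : (M : ℝ) * ∑ j, p j ^ α < 1 := by
    have := hγmono ρ α hα; rwa [hγρ] at this
  have hPα : 0 < 1 - (M : ℝ) * ∑ j, p j ^ α := by linarith
  refine ⟨hPα, ?_⟩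
  -- setup
  set Pα : ℝ := 1 - (M : ℝ) * ∑ j, p j ^ α with hPαdef
  set Cc : ℝ := c / Pα with hCc
  set γα : ℝ := (M : ℝ) * ∑ j, p j ^ α with hγαdef
  set d : ℕ → ℝ := fun n => a n - Cc * (n : ℝ) ^ α with hd
  -- β
  set β : ℝ := (max ρ (α - 1/2) + α) / 2 with hβ
  have hm1 : max ρ (α - 1/2) < α := max_lt hα (by linarith)
  have hβα : β < α := by
    rw [hβ]; linarith [hm1]
  have hβρ : ρ < β := by
    have : ρ ≤ max ρ (α - 1/2) := le_max_left _ _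
    rw [hβ]; linarith
  have hβhalf : α - 1/2 < β := by
    have : α - 1/2 ≤ max ρ (α - 1/2) := le_max_right _ _
    rw [hβ]; linarith
  have hβ1 : 1 ≤ β := le_trans hρ1 hβρ.le
  have hγβ : (M : ℝ) * ∑ j, p j ^ β < 1 := by
    have := hγmono ρ β hβρ; rwa [hγρ] at this
  set γβ : ℝ := (M : ℝ) * ∑ j, p j ^ β with hγβdef
  have hγα0 : 0 ≤ γα := by
    refine mul_nonneg hMpos.le (Finset.sum_nonneg fun j _ => (Real.rpow_pos_of_pos (hp0 j) _).le)
  have hγβ0 : 0 ≤ γβ := by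
    refine mul_nonneg hMpos.le (Finset.sum_nonneg fun j _ => (Real.rpow_pos_of_pos (hp0 j) _).le)
  set δα : ℝ := (1 - γα) / 4 with hδα
  set δβ : ℝ := (1 - γβ) / 4 with hδβ
  have hδα0 : 0 < δα := by rw [hδα]; linarith
  have hδβ0 : 0 < δβ := by rw [hδβ]; linarith
  have hPne : Pα ≠ 0 := ne_of_gt hPα
  have hcCc : c = Cc * Pα := by rw [hCc]; field_simp
  -- d 0 = 0
  have hd0 : d 0 = 0 := by
    simp only [hd, ha0, Nat.cast_zero]
    rw [Real.zero_rpow (by linarith : α ≠ 0)]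
    ring
  -- the main claim
  have claim : ∀ ε : ℝ, 0 < ε → ∃ C : ℝ, 0 ≤ C ∧
      ∀ n : ℕ, |d n| ≤ ε * (n : ℝ) ^ α + C * (n : ℝ) ^ β := by
    intro ε hε
    -- eventual smallness of the diagonal coefficient
    have H1 : ∀ᶠ n : ℕ in atTop, (M:ℝ) * ∑ j, p j ^ n ≤ min δα δβ := by
      have h0 : Tendsto (fun n : ℕ => ∑ j, p j ^ n) atTop (nhds 0) := by
        have := tendsto_finset_sum (Finset.univ : Finset (Fin A))
          (fun j (_ : j ∈ Finset.univ) =>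
            tendsto_pow_atTop_nhds_zero_of_lt_one (hp0 j).le (hp1 j))
        simpa using this
      have htail : Tendsto (fun n : ℕ => (M:ℝ) * ∑ j, p j ^ n) atTop (nhds 0) := by
        simpa using h0.const_mul (M:ℝ)
      exact htail.eventually (eventually_le_nhds (lt_min hδα0 hδβ0))
    have HA' := ev_sqrt_bound ((M:ℝ)*(A:ℝ)*α) α hδα0
    have HB' := ev_sqrt_bound ((M:ℝ)*(A:ℝ)*β) β hδβ0
    have HC' := ev_sqrt_bound (|Cc| * ((M:ℝ)*(A:ℝ)*α)) α (mul_pos hε hδα0)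
    have Hb' := isLittleO_iff.mp hb (mul_pos hε hδα0)
    obtain ⟨N₀, hN₀⟩ := eventually_atTop.mp (H1.and (HA'.and (HB'.and (HC'.and Hb'))))
    set N : ℕ := max N₀ 2 with hN
    set C : ℝ := ∑ k ∈ Finset.range N, |d k| with hCdef
    have hC0 : 0 ≤ C := Finset.sum_nonneg fun k _ => abs_nonneg _
    refine ⟨C, hC0, ?_⟩
    intro n
    induction n using Nat.strong_induction_on with
    | _ n ih =>
      rcases lt_or_ge n N with hx | hx
      · -- base case
        rcases Nat.eq_zero_or_pos n with rfl | hn1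
        · simp only [hd0, abs_zero, Nat.cast_zero]
          rw [Real.zero_rpow (by linarith : α ≠ 0), Real.zero_rpow (by linarith : β ≠ 0)]
          simp
        · have h1n : (1:ℝ) ≤ (n:ℝ) := by exact_mod_cast hn1
          have hdC : |d n| ≤ C :=
            Finset.single_le_sum (f := fun k => |d k|) (fun k _ => abs_nonneg _)
              (Finset.mem_range.mpr hx)
          have h1β : (1:ℝ) ≤ (n:ℝ) ^ β := by
            have := Real.rpow_le_rpow_of_exponent_le h1n (by linarith : (0:ℝ) ≤ β)
            rwa [Real.rpow_zero] at this
          have hεα : 0 ≤ ε * (n:ℝ) ^ α :=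
            mul_nonneg hε.le (Real.rpow_nonneg (by linarith) _)
          have hCn : C * 1 ≤ C * (n:ℝ)^β := mul_le_mul_of_nonneg_left h1β hC0
          linarith only [hdC, hεα, hCn]
      · -- inductive step
        have hn2 : 2 ≤ n := le_trans (le_max_right _ _) hx
        obtain ⟨Hr, HA, HB, HCc, Hb2⟩ := hN₀ n (le_trans (le_max_left _ _) hx)
        have hn0 : 0 < n := by omega
        have hn0' : (0:ℝ) < (n:ℝ) := by exact_mod_cast hn0
        have hnα0 : (0:ℝ) ≤ (n:ℝ) ^ α := Real.rpow_nonneg hn0'.le _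
        have hnβ0 : (0:ℝ) ≤ (n:ℝ) ^ β := Real.rpow_nonneg hn0'.le _
        have hwnn : ∀ (j : Fin A) (k : ℕ),
            0 ≤ (n.choose k : ℝ) * p j ^ k * (1 - p j) ^ (n - k) :=
          fun j k => binom_wt_nonneg (hp0 j).le (hp1 j).le n k
        -- split a into d and the rpow part
        have h1 : ∑ j, ∑ k ∈ Finset.range (n+1),
              (n.choose k : ℝ) * p j ^ k * (1 - p j) ^ (n - k) * a k
            = (∑ j, ∑ k ∈ Finset.range (n+1),
                (n.choose k : ℝ) * p j ^ k * (1 - p j) ^ (n - k) * d k)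
              + Cc * ∑ j, ∑ k ∈ Finset.range (n+1),
                (n.choose k : ℝ) * p j ^ k * (1 - p j) ^ (n - k) * (k:ℝ)^α := by
          rw [Finset.mul_sum, ← Finset.sum_add_distrib]
          refine Finset.sum_congr rfl fun j _ => ?_
          rw [Finset.mul_sum, ← Finset.sum_add_distrib]
          refine Finset.sum_congr rfl fun k _ => ?_
          have hak : a k = d k + Cc * (k:ℝ)^α := by rw [hd]; ring
          rw [hak]; ring
        have h2 : ∑ j, ((∑ k ∈ Finset.range (n+1),
              (n.choose k : ℝ) * p j ^ k * (1 - p j) ^ (n - k) * (k:ℝ)^α)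
                - p j ^ α * (n:ℝ)^α)
            = (∑ j, ∑ k ∈ Finset.range (n+1),
                (n.choose k : ℝ) * p j ^ k * (1 - p j) ^ (n - k) * (k:ℝ)^α)
              - (∑ j, p j ^ α) * (n:ℝ)^α := by
          rw [Finset.sum_sub_distrib, ← Finset.sum_mul]
        have hiden : d n = (M:ℝ) * (∑ j, ∑ k ∈ Finset.range (n+1),
              (n.choose k : ℝ) * p j ^ k * (1 - p j) ^ (n - k) * d k)
            + (Cc * ((M:ℝ) * ∑ j, ((∑ k ∈ Finset.range (n+1),
                (n.choose k : ℝ) * p j ^ k * (1 - p j) ^ (n - k) * (k:ℝ)^α)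
                  - p j ^ α * (n:ℝ)^α))
               + (b n - c * (n:ℝ)^α)) := by
          have hdn : d n = a n - Cc * (n:ℝ)^α := by rw [hd]
          rw [hdn, hrec n hn2, h1, h2, hcCc, hPαdef, hγαdef]
          ring
        -- extract the diagonal term
        have hdiag : ∀ j : Fin A, ∑ k ∈ Finset.range (n+1),
              (n.choose k : ℝ) * p j ^ k * (1 - p j) ^ (n - k) * d k
            = (∑ k ∈ Finset.range n,
                (n.choose k : ℝ) * p j ^ k * (1 - p j) ^ (n - k) * d k)
              + p j ^ n * d n := by
          intro j
          rw [Finset.sum_range_succ]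
          congr 1
          simp
        have hiden2 : (1 - (M:ℝ) * ∑ j, p j ^ n) * d n
            = (M:ℝ) * (∑ j, ∑ k ∈ Finset.range n,
                (n.choose k : ℝ) * p j ^ k * (1 - p j) ^ (n - k) * d k)
              + (Cc * ((M:ℝ) * ∑ j, ((∑ k ∈ Finset.range (n+1),
                  (n.choose k : ℝ) * p j ^ k * (1 - p j) ^ (n - k) * (k:ℝ)^α)
                    - p j ^ α * (n:ℝ)^α))
                 + (b n - c * (n:ℝ)^α)) := by
          have hsum : ∑ j, ∑ k ∈ Finset.range (n+1),
                (n.choose k : ℝ) * p j ^ k * (1 - p j) ^ (n - k) * d k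
              = (∑ j, ∑ k ∈ Finset.range n,
                  (n.choose k : ℝ) * p j ^ k * (1 - p j) ^ (n - k) * d k)
                + (∑ j, p j ^ n) * d n := by
            rw [Finset.sum_congr rfl fun j (_ : j ∈ Finset.univ) => hdiag j,
              Finset.sum_add_distrib, ← Finset.sum_mul]
          rw [hsum] at hiden
          linear_combination hiden
        -- moment bounds
        have hSα : ∀ j : Fin A, |(∑ k ∈ Finset.range (n+1),
              (n.choose k : ℝ) * p j ^ k * (1 - p j) ^ (n - k) * (k:ℝ)^α)
                - p j ^ α * (n:ℝ)^α| ≤ α * (n:ℝ)^(α-1) * Real.sqrt n := by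
          intro j
          have hm := binom_moment (hp0 j).le (hp1 j).le hα1 hn0
          rwa [Real.mul_rpow (hp0 j).le (Nat.cast_nonneg n)] at hm
        have hSβ : ∀ j : Fin A, |(∑ k ∈ Finset.range (n+1),
              (n.choose k : ℝ) * p j ^ k * (1 - p j) ^ (n - k) * (k:ℝ)^β)
                - p j ^ β * (n:ℝ)^β| ≤ β * (n:ℝ)^(β-1) * Real.sqrt n := by
          intro j
          have hm := binom_moment (hp0 j).le (hp1 j).le hβ1 hn0
          rwa [Real.mul_rpow (hp0 j).le (Nat.cast_nonneg n)] at hm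
        -- aggregated moment bounds
        have hMα : (M:ℝ) * ∑ j, ∑ k ∈ Finset.range (n+1),
              (n.choose k : ℝ) * p j ^ k * (1 - p j) ^ (n - k) * (k:ℝ)^α
            ≤ (γα + δα) * (n:ℝ)^α := by
          have hsum : ∑ j, (∑ k ∈ Finset.range (n+1),
                (n.choose k : ℝ) * p j ^ k * (1 - p j) ^ (n - k) * (k:ℝ)^α)
              ≤ ∑ j : Fin A, (p j ^ α * (n:ℝ)^α + α * (n:ℝ)^(α-1) * Real.sqrt n) :=
            Finset.sum_le_sum fun j _ => by linarith only [(abs_le.mp (hSα j)).2]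
          have hsum2 : ∑ j : Fin A, (p j ^ α * (n:ℝ)^α + α * (n:ℝ)^(α-1) * Real.sqrt n)
              = (∑ j, p j ^ α) * (n:ℝ)^α + (A:ℝ) * (α * (n:ℝ)^(α-1) * Real.sqrt n) := by
            rw [Finset.sum_add_distrib, ← Finset.sum_mul, Finset.sum_const,
              Finset.card_univ, Fintype.card_fin, nsmul_eq_mul]
          have step1 := mul_le_mul_of_nonneg_left (hsum.trans_eq hsum2) hMpos.le
          have step2 : (M:ℝ) * ((∑ j, p j ^ α) * (n:ℝ)^α
                + (A:ℝ) * (α * (n:ℝ)^(α-1) * Real.sqrt n))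
              = γα * (n:ℝ)^α + (M:ℝ)*(A:ℝ)*α * (n:ℝ)^(α-1) * Real.sqrt n := by
            rw [hγαdef]; ring
          rw [step2] at step1
          linarith only [step1, HA]
        have hMβ : (M:ℝ) * ∑ j, ∑ k ∈ Finset.range (n+1),
              (n.choose k : ℝ) * p j ^ k * (1 - p j) ^ (n - k) * (k:ℝ)^β
            ≤ (γβ + δβ) * (n:ℝ)^β := by
          have hsum : ∑ j, (∑ k ∈ Finset.range (n+1),
                (n.choose k : ℝ) * p j ^ k * (1 - p j) ^ (n - k) * (k:ℝ)^β)
              ≤ ∑ j : Fin A, (p j ^ β * (n:ℝ)^β + β * (n:ℝ)^(β-1) * Real.sqrt n) :=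
            Finset.sum_le_sum fun j _ => by linarith only [(abs_le.mp (hSβ j)).2]
          have hsum2 : ∑ j : Fin A, (p j ^ β * (n:ℝ)^β + β * (n:ℝ)^(β-1) * Real.sqrt n)
              = (∑ j, p j ^ β) * (n:ℝ)^β + (A:ℝ) * (β * (n:ℝ)^(β-1) * Real.sqrt n) := by
            rw [Finset.sum_add_distrib, ← Finset.sum_mul, Finset.sum_const,
              Finset.card_univ, Fintype.card_fin, nsmul_eq_mul]
          have step1 := mul_le_mul_of_nonneg_left (hsum.trans_eq hsum2) hMpos.le
          have step2 : (M:ℝ) * ((∑ j, p j ^ β) * (n:ℝ)^β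
                + (A:ℝ) * (β * (n:ℝ)^(β-1) * Real.sqrt n))
              = γβ * (n:ℝ)^β + (M:ℝ)*(A:ℝ)*β * (n:ℝ)^(β-1) * Real.sqrt n := by
            rw [hγβdef]; ring
          rw [step2] at step1
          linarith only [step1, HB]
        -- bound on the off-diagonal mass via the induction hypothesis
        have hB1 : |(M:ℝ) * (∑ j, ∑ k ∈ Finset.range n,
              (n.choose k : ℝ) * p j ^ k * (1 - p j) ^ (n - k) * d k)|
            ≤ ε * ((M:ℝ) * ∑ j, ∑ k ∈ Finset.range (n+1),
                (n.choose k : ℝ) * p j ^ k * (1 - p j) ^ (n - k) * (k:ℝ)^α)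
              + C * ((M:ℝ) * ∑ j, ∑ k ∈ Finset.range (n+1),
                (n.choose k : ℝ) * p j ^ k * (1 - p j) ^ (n - k) * (k:ℝ)^β) := by
          rw [abs_mul, abs_of_nonneg hMpos.le]
          have hstep : |∑ j, ∑ k ∈ Finset.range n,
                (n.choose k : ℝ) * p j ^ k * (1 - p j) ^ (n - k) * d k|
              ≤ ∑ j, ∑ k ∈ Finset.range (n+1),
                (n.choose k : ℝ) * p j ^ k * (1 - p j) ^ (n - k)
                  * (ε * (k:ℝ)^α + C * (k:ℝ)^β) := by
            refine le_trans (Finset.abs_sum_le_sum_abs _ _) ?_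
            refine Finset.sum_le_sum fun j _ => ?_
            refine le_trans (Finset.abs_sum_le_sum_abs _ _) ?_
            refine le_trans (Finset.sum_le_sum (fun k hk => ?_))
              (Finset.sum_le_sum_of_subset_of_nonneg
                (Finset.range_subset_range.mpr (Nat.le_succ n)) (fun k _ _ => ?_))
            · rw [abs_mul, abs_of_nonneg (hwnn j k)]
              exact mul_le_mul_of_nonneg_left (ih k (Finset.mem_range.mp hk)) (hwnn j k)
            · have h0 : 0 ≤ ε * (k:ℝ)^α + C * (k:ℝ)^β :=
                add_nonneg
                  (mul_nonneg hε.le (Real.rpow_nonneg (Nat.cast_nonneg k) α))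
                  (mul_nonneg hC0 (Real.rpow_nonneg (Nat.cast_nonneg k) β))
              exact mul_nonneg (hwnn j k) h0
          have hdistr : ∑ j, ∑ k ∈ Finset.range (n+1),
                (n.choose k : ℝ) * p j ^ k * (1 - p j) ^ (n - k)
                  * (ε * (k:ℝ)^α + C * (k:ℝ)^β)
              = ε * (∑ j, ∑ k ∈ Finset.range (n+1),
                  (n.choose k : ℝ) * p j ^ k * (1 - p j) ^ (n - k) * (k:ℝ)^α)
                + C * (∑ j, ∑ k ∈ Finset.range (n+1),
                  (n.choose k : ℝ) * p j ^ k * (1 - p j) ^ (n - k) * (k:ℝ)^β) := by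
            rw [Finset.mul_sum, Finset.mul_sum, ← Finset.sum_add_distrib]
            refine Finset.sum_congr rfl fun j _ => ?_
            rw [Finset.mul_sum, Finset.mul_sum, ← Finset.sum_add_distrib]
            refine Finset.sum_congr rfl fun k _ => by ring
          calc (M:ℝ) * |∑ j, ∑ k ∈ Finset.range n,
                (n.choose k : ℝ) * p j ^ k * (1 - p j) ^ (n - k) * d k|
              ≤ (M:ℝ) * (ε * (∑ j, ∑ k ∈ Finset.range (n+1),
                  (n.choose k : ℝ) * p j ^ k * (1 - p j) ^ (n - k) * (k:ℝ)^α)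
                + C * (∑ j, ∑ k ∈ Finset.range (n+1),
                  (n.choose k : ℝ) * p j ^ k * (1 - p j) ^ (n - k) * (k:ℝ)^β)) := by
                refine mul_le_mul_of_nonneg_left ?_ hMpos.le
                rw [← hdistr]; exact hstep
            _ = ε * ((M:ℝ) * ∑ j, ∑ k ∈ Finset.range (n+1),
                  (n.choose k : ℝ) * p j ^ k * (1 - p j) ^ (n - k) * (k:ℝ)^α)
                + C * ((M:ℝ) * ∑ j, ∑ k ∈ Finset.range (n+1),
                  (n.choose k : ℝ) * p j ^ k * (1 - p j) ^ (n - k) * (k:ℝ)^β) := by ring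
        -- bound on the toll-type term
        have hE : |Cc * ((M:ℝ) * ∑ j, ((∑ k ∈ Finset.range (n+1),
              (n.choose k : ℝ) * p j ^ k * (1 - p j) ^ (n - k) * (k:ℝ)^α)
                - p j ^ α * (n:ℝ)^α))
             + (b n - c * (n:ℝ)^α)| ≤ 2 * (ε * δα) * (n:ℝ)^α := by
          refine le_trans (abs_add_le _ _) ?_
          have hterm : |∑ j, ((∑ k ∈ Finset.range (n+1),
                (n.choose k : ℝ) * p j ^ k * (1 - p j) ^ (n - k) * (k:ℝ)^α)
                  - p j ^ α * (n:ℝ)^α)|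
              ≤ (A:ℝ) * (α * (n:ℝ)^(α-1) * Real.sqrt n) := by
            refine le_trans (Finset.abs_sum_le_sum_abs _ _) ?_
            refine le_trans (Finset.sum_le_sum fun j (_ : j ∈ Finset.univ) => hSα j) ?_
            rw [Finset.sum_const, Finset.card_univ, Fintype.card_fin, nsmul_eq_mul]
          have h5 : |Cc * ((M:ℝ) * ∑ j, ((∑ k ∈ Finset.range (n+1),
                (n.choose k : ℝ) * p j ^ k * (1 - p j) ^ (n - k) * (k:ℝ)^α)
                  - p j ^ α * (n:ℝ)^α))|
              ≤ |Cc| * ((M:ℝ)*(A:ℝ)*α) * (n:ℝ)^(α-1) * Real.sqrt n := by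
            rw [abs_mul, abs_mul, abs_of_nonneg hMpos.le]
            calc |Cc| * ((M:ℝ) * |∑ j, ((∑ k ∈ Finset.range (n+1),
                  (n.choose k : ℝ) * p j ^ k * (1 - p j) ^ (n - k) * (k:ℝ)^α)
                    - p j ^ α * (n:ℝ)^α)|)
                ≤ |Cc| * ((M:ℝ) * ((A:ℝ) * (α * (n:ℝ)^(α-1) * Real.sqrt n))) :=
                  mul_le_mul_of_nonneg_left
                    (mul_le_mul_of_nonneg_left hterm hMpos.le) (abs_nonneg _)
              _ = |Cc| * ((M:ℝ)*(A:ℝ)*α) * (n:ℝ)^(α-1) * Real.sqrt n := by ring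
          have h4 := Hb2
          rw [Real.norm_eq_abs, Real.norm_eq_abs, abs_of_nonneg hnα0] at h4
          linarith only [h5, h4, HCc]
        -- combine
        have r1 : (M:ℝ) * ∑ j, p j ^ n ≤ δα := le_trans Hr (min_le_left _ _)
        have r2 : (M:ℝ) * ∑ j, p j ^ n ≤ δβ := le_trans Hr (min_le_right _ _)
        have hr0 : 0 ≤ (M:ℝ) * ∑ j, p j ^ n :=
          mul_nonneg hMpos.le (Finset.sum_nonneg fun j _ => pow_nonneg (hp0 j).le n)
        set r : ℝ := (M:ℝ) * ∑ j, p j ^ n with hrr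
        have h1r : 0 < 1 - r := by linarith only [r1, hδα, hγα0]
        have q1 : γα + 3*δα ≤ 1 - r := by linarith only [hδα, r1]
        have q2 : γβ + δβ ≤ 1 - r := by linarith only [hδβ, r2, hγβ]
        have habs : (1 - r) * |d n| = |(1 - r) * d n| := by
          rw [abs_mul, abs_of_nonneg h1r.le]
        have hcomb : (1 - r) * |d n| ≤ (1 - r) * (ε * (n:ℝ)^α + C * (n:ℝ)^β) := by
          rw [habs, hiden2]
          refine le_trans (abs_add_le _ _) ?_
          have k1 : ε * ((M:ℝ) * ∑ j, ∑ k ∈ Finset.range (n+1),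
                (n.choose k : ℝ) * p j ^ k * (1 - p j) ^ (n - k) * (k:ℝ)^α)
              ≤ ε * ((γα + δα) * (n:ℝ)^α) := mul_le_mul_of_nonneg_left hMα hε.le
          have k2 : C * ((M:ℝ) * ∑ j, ∑ k ∈ Finset.range (n+1),
                (n.choose k : ℝ) * p j ^ k * (1 - p j) ^ (n - k) * (k:ℝ)^β)
              ≤ C * ((γβ + δβ) * (n:ℝ)^β) := mul_le_mul_of_nonneg_left hMβ hC0
          have m1 : ε * ((γα + δα) * (n:ℝ)^α) + 2 * (ε * δα) * (n:ℝ)^α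
              ≤ ε * ((1 - r) * (n:ℝ)^α) := by
            calc ε * ((γα + δα) * (n:ℝ)^α) + 2 * (ε * δα) * (n:ℝ)^α
                = (ε * (n:ℝ)^α) * (γα + 3*δα) := by ring
              _ ≤ (ε * (n:ℝ)^α) * (1 - r) :=
                  mul_le_mul_of_nonneg_left q1 (mul_nonneg hε.le hnα0)
              _ = ε * ((1 - r) * (n:ℝ)^α) := by ring
          have m2 : C * ((γβ + δβ) * (n:ℝ)^β) ≤ C * ((1 - r) * (n:ℝ)^β) := by
            calc C * ((γβ + δβ) * (n:ℝ)^β) = (C * (n:ℝ)^β) * (γβ + δβ) := by ring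
              _ ≤ (C * (n:ℝ)^β) * (1 - r) :=
                  mul_le_mul_of_nonneg_left q2 (mul_nonneg hC0 hnβ0)
              _ = C * ((1 - r) * (n:ℝ)^β) := by ring
          have hrhs : (1 - r) * (ε * (n:ℝ)^α + C * (n:ℝ)^β)
              = ε * ((1 - r) * (n:ℝ)^α) + C * ((1 - r) * (n:ℝ)^β) := by ring
          rw [hrhs]
          linarith only [hB1, hE, k1, k2, m1, m2]
        exact le_of_mul_le_mul_left hcomb h1r
  -- conclude littleO
  rw [isLittleO_iff]
  intro ε' hε'
  obtain ⟨C, hC0, hC⟩ := claim (ε' / 2) (by linarith)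
  have htend : Tendsto (fun n : ℕ => (n : ℝ) ^ (α - β)) atTop atTop :=
    (tendsto_rpow_atTop (by linarith)).comp tendsto_natCast_atTop_atTop
  filter_upwards [htend.eventually_ge_atTop (2 * C / ε'), eventually_ge_atTop 1] with n hn hn1
  have hn0 : (0:ℝ) < (n:ℝ) := by exact_mod_cast Nat.lt_of_lt_of_le Nat.zero_lt_one hn1
  have hβpos : (0:ℝ) < (n:ℝ) ^ β := Real.rpow_pos_of_pos hn0 _
  have hsplit : (n:ℝ) ^ α = (n:ℝ) ^ (α - β) * (n:ℝ) ^ β := by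
    rw [← Real.rpow_add hn0]; ring_nf
  have h2 : C * (n:ℝ) ^ β ≤ (ε'/2) * (n:ℝ) ^ α := by
    rw [hsplit]
    have : C ≤ (ε'/2) * (n:ℝ) ^ (α - β) := by
      calc C = (2 * C / ε') * (ε' / 2) := by field_simp
        _ ≤ (n:ℝ) ^ (α - β) * (ε' / 2) := mul_le_mul_of_nonneg_right hn (by linarith)
        _ = ε'/2 * (n:ℝ) ^ (α - β) := by ring
    calc C * (n:ℝ)^β ≤ ((ε'/2) * (n:ℝ)^(α-β)) * (n:ℝ)^β :=
          mul_le_mul_of_nonneg_right this hβpos.le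
      _ = ε'/2 * ((n:ℝ)^(α-β) * (n:ℝ)^β) := by ring
  have hgoal : |a n - c * (n : ℝ) ^ α / Pα| ≤ ε' * (n : ℝ) ^ α := by
    have hdn : a n - c * (n : ℝ) ^ α / Pα = d n := by rw [hd, hCc]; ring
    rw [hdn]
    calc |d n| ≤ (ε'/2) * (n:ℝ)^α + C * (n:ℝ)^β := hC n
      _ ≤ (ε'/2) * (n:ℝ)^α + (ε'/2) * (n:ℝ)^α := by linarith
      _ = ε' * (n:ℝ)^α := by ring
  calc ‖a n - c * (n : ℝ) ^ α / Pα‖ = |a n - c * (n : ℝ) ^ α / Pα| := Real.norm_eq_abs _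
    _ ≤ ε' * (n : ℝ) ^ α := hgoal
    _ = ε' * ‖(n : ℝ) ^ α‖ := by
        rw [Real.norm_eq_abs, abs_of_nonneg (Real.rpow_nonneg hn0.le _)]
end

section
/- Explicit solution of the trie recurrence: if the real sequence (a_n) satisfies the trie recurrence with toll-sequence (b_n), then for every n ≥ 0, a_n = Σ_{ℓ=0}^∞ M^ℓ Σ_{k ∈ ℕ^A, k_1+…+k_A = ℓ} (ℓ choose k_1,…,k_A) Σ_{i=2}^n C(n,i) (1 - p^k)^{n-i} (p^k)^i b_i, where p^k := p_1^{k_1}···p_A^{k_A} and (ℓ choose k_1,…,k_A) = ℓ!/(k_1!···k_A!); the outer series converges absolutely. -/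
open Filter

lemma trie_aux_MT {A : ℕ} (f : Fin A → ℝ) (ℓ : ℕ) :
    ∑ k ∈ Finset.Nat.antidiagonalTuple A ℓ, (Nat.multinomial Finset.univ k : ℝ) * ∏ j, f j ^ k j
      = (∑ j, f j) ^ ℓ := by
  rw [← Finset.piAntidiag_univ_fin_eq_antidiagonalTuple,
    Finset.sum_pow_eq_sum_piAntidiag]

lemma trie_aux_MT' {A : ℕ} (p : Fin A → ℝ) (m ℓ : ℕ) :
    ∑ k ∈ Finset.Nat.antidiagonalTuple A ℓ, (Nat.multinomial Finset.univ k : ℝ) *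
        (∏ j, p j ^ k j) ^ m = (∑ j, p j ^ m) ^ ℓ := by
  rw [← trie_aux_MT (fun j => p j ^ m) ℓ]
  refine Finset.sum_congr rfl fun k _ => ?_
  congr 1
  rw [← Finset.prod_pow]
  exact Finset.prod_congr rfl fun j _ => by rw [← pow_mul, ← pow_mul, mul_comm]

/-- Composition of binomial mixtures (polynomial identity). -/
lemma trie_aux_comp (c : ℕ → ℝ) (r q : ℝ) (n : ℕ) :
    ∑ m ∈ Finset.range (n+1), (n.choose m : ℝ) * r^m * (1-r)^(n-m) *
      ∑ i ∈ Finset.range (m+1), ((m.choose i : ℝ) * (1-q)^(m-i) * q^i * c i)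
    = ∑ i ∈ Finset.range (n+1), (n.choose i : ℝ) * (1-r*q)^(n-i) * (r*q)^i * c i := by
  simp only [Finset.mul_sum]
  rw [Finset.sum_comm' (t' := Finset.range (n+1)) (s' := fun i => Finset.Icc i n)
    (by intro m i; simp only [Finset.mem_range, Finset.mem_Icc, Nat.lt_succ_iff]; omega)]
  refine Finset.sum_congr rfl fun i hi => ?_
  rw [Finset.mem_range, Nat.lt_succ_iff] at hi
  rw [← Finset.Ico_add_one_right_eq_Icc, Finset.sum_Ico_eq_sum_range]
  have hni : n + 1 - i = (n - i) + 1 := by omega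
  have expand : (1 - r*q)^(n-i)
      = ∑ t ∈ Finset.range ((n-i)+1), (r*(1-q))^t * (1-r)^((n-i)-t) * ((n-i).choose t : ℝ) := by
    rw [← add_pow]; ring_nf
  rw [hni, expand, Finset.mul_sum, Finset.sum_mul, Finset.sum_mul]
  refine Finset.sum_congr rfl fun t ht => ?_
  rw [Finset.mem_range, Nat.lt_succ_iff] at ht
  have e1 : n - (i+t) = (n-i)-t := by omega
  have e2 : (i+t) - i = t := by omega
  have e3 : (n.choose (i+t) : ℝ) * ((i+t).choose i : ℝ)
      = (n.choose i : ℝ) * ((n-i).choose t : ℝ) := by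
    rw [← Nat.cast_mul, ← Nat.cast_mul, Nat.choose_mul (by omega), e2]
  rw [e1, e2]; simp only [mul_pow]
  linear_combination (r^i * r^t * (1-r)^((n-i)-t) * (1-q)^t * q^i * c i) * e3

/-- Expansion of the binomial-mixture polynomial into monomials. -/
lemma trie_aux_poly (c : ℕ → ℝ) (n : ℕ) (x : ℝ) :
    ∑ i ∈ Finset.range (n+1), ((n.choose i : ℝ) * (1-x)^(n-i) * x^i * c i)
    = ∑ t ∈ Finset.range (n+1) ×ˢ Finset.range (n+1),
        ((n.choose t.1 : ℝ) * ((n - t.1).choose t.2 : ℝ) * (-1)^t.2 * c t.1) * x^(t.1+t.2) := by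
  rw [Finset.sum_product]
  refine Finset.sum_congr rfl fun i hi => ?_
  rw [Finset.mem_range, Nat.lt_succ_iff] at hi
  have expand : (1 - x)^(n-i)
      = ∑ s ∈ Finset.range ((n-i)+1), (-x)^s * (1:ℝ)^((n-i)-s) * ((n-i).choose s : ℝ) := by
    rw [← add_pow]; ring_nf
  have hext : ∑ s ∈ Finset.range ((n-i)+1), (-x)^s * (1:ℝ)^((n-i)-s) * ((n-i).choose s : ℝ)
      = ∑ s ∈ Finset.range (n+1), (-x)^s * (1:ℝ)^((n-i)-s) * ((n-i).choose s : ℝ) := by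
    refine Finset.sum_subset (by intro s hs; simp only [Finset.mem_range] at *; omega) ?_
    intro s hs hns
    simp only [Finset.mem_range] at hs hns
    have : (n-i).choose s = 0 := Nat.choose_eq_zero_of_lt (by omega)
    simp [this]
  rw [expand, hext, Finset.mul_sum, Finset.sum_mul, Finset.sum_mul]
  refine Finset.sum_congr rfl fun s _ => ?_
  rw [one_pow, neg_pow, pow_add]
  ring

/-- Summing a polynomial evaluation against the multinomial weights. -/
lemma trie_aux_key {A : ℕ} (p : Fin A → ℝ) {ι : Type*} (I : Finset ι) (u : ι → ℝ) (e : ι → ℕ)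
    (ℓ : ℕ) :
    ∑ k ∈ Finset.Nat.antidiagonalTuple A ℓ, (Nat.multinomial Finset.univ k : ℝ) *
        ∑ t ∈ I, u t * (∏ j, p j ^ k j) ^ (e t)
      = ∑ t ∈ I, u t * (∑ j, p j ^ (e t)) ^ ℓ := by
  simp only [Finset.mul_sum]
  rw [Finset.sum_comm]
  refine Finset.sum_congr rfl fun t _ => ?_
  rw [← trie_aux_MT' p (e t) ℓ, Finset.mul_sum]
  exact Finset.sum_congr rfl fun k _ => by ring

/-- **Explicit solution of the trie recurrence** (Lemma 1).
If `(a_n)` satisfies the trie recurrence with toll-sequence `(b_n)`, then for all `n`,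
`a_n = ∑_{ℓ≥0} M^ℓ ∑_{k₁+⋯+k_A=ℓ} (ℓ choose k) ∑_{i=2}^n C(n,i) (1-p^k)^{n-i} (p^k)^i b_i`,
the outer series converging absolutely. -/
theorem trie_recurrence_explicit_solution
    {M A : ℕ} (hM : 1 ≤ M) (hA : 2 ≤ A)
    (p : Fin A → ℝ) (hp0 : ∀ j, 0 < p j) (hp1 : ∀ j, p j < 1)
    (hpsum : ∑ j, p j = 1)
    (hnonexp : ∑ j, (p j) ^ 2 < 1 / (M : ℝ))
    (a b : ℕ → ℝ) (ha0 : a 0 = 0) (ha1 : a 1 = 0)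
    (hrec : ∀ n, 2 ≤ n → a n = (M : ℝ) * ∑ j, ∑ k ∈ Finset.range (n + 1),
        (n.choose k : ℝ) * p j ^ k * (1 - p j) ^ (n - k) * a k + b n)
    (T : ℕ → ℕ → ℝ)
    (hT : ∀ n ℓ, T n ℓ = (M : ℝ) ^ ℓ *
      ∑ k ∈ Finset.Nat.antidiagonalTuple A ℓ, (Nat.multinomial Finset.univ k : ℝ) *
        ∑ i ∈ Finset.Icc 2 n, (n.choose i : ℝ) *
          (1 - ∏ j, p j ^ k j) ^ (n - i) * (∏ j, p j ^ k j) ^ i * b i) :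
    ∀ n : ℕ, Summable (fun ℓ : ℕ => |T n ℓ|) ∧ a n = ∑' ℓ : ℕ, T n ℓ := by
  classical
  have hM0 : (0:ℝ) < (M:ℝ) := by exact_mod_cast Nat.lt_of_lt_of_le Nat.zero_lt_one hM
  set c : ℕ → ℝ := fun i => if 2 ≤ i then b i else 0 with hc
  set G : ℕ → ℝ → ℝ := fun n x =>
    ∑ i ∈ Finset.range (n+1), ((n.choose i : ℝ) * (1-x)^(n-i) * x^i * c i) with hG
  -- rewrite the Icc sums as full `range` sums
  have hIccG : ∀ (n : ℕ) (x : ℝ),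
      (∑ i ∈ Finset.Icc 2 n, (n.choose i:ℝ)*(1-x)^(n-i)*x^i*b i) = G n x := by
    intro n x
    have h1 : (∑ i ∈ Finset.Icc 2 n, (n.choose i:ℝ)*(1-x)^(n-i)*x^i*b i)
        = ∑ i ∈ Finset.Icc 2 n, ((n.choose i:ℝ)*(1-x)^(n-i)*x^i*c i) := by
      refine Finset.sum_congr rfl fun i hi => ?_
      rw [Finset.mem_Icc] at hi
      simp [hc, hi.1]
    rw [h1, hG]
    refine Finset.sum_subset ?_ ?_
    · intro i hi; rw [Finset.mem_Icc] at hi; rw [Finset.mem_range]; omega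
    · intro i hi hni
      rw [Finset.mem_range] at hi
      rw [Finset.mem_Icc] at hni
      have : c i = 0 := by simp only [hc]; rw [if_neg]; omega
      simp [this]
  have hTG : ∀ n ℓ, T n ℓ = (M:ℝ)^ℓ * ∑ k ∈ Finset.Nat.antidiagonalTuple A ℓ,
      (Nat.multinomial Finset.univ k : ℝ) * G n (∏ j, p j ^ k j) := by
    intro n ℓ
    rw [hT]
    congr 1
    exact Finset.sum_congr rfl fun k _ => by rw [hIccG]
  have hq0 : ∀ k : Fin A → ℕ, 0 < ∏ j, p j ^ k j :=
    fun k => Finset.prod_pos fun j _ => pow_pos (hp0 j) _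
  have hq1 : ∀ k : Fin A → ℕ, ∏ j, p j ^ k j ≤ 1 :=
    fun k => Finset.prod_le_one (fun j _ => (pow_pos (hp0 j) _).le)
      (fun j _ => pow_le_one₀ (hp0 j).le (hp1 j).le)
  have hP0 : ∀ m : ℕ, 0 ≤ ∑ j, p j ^ m :=
    fun m => Finset.sum_nonneg fun j _ => (pow_pos (hp0 j) m).le
  have hP2lt : (M:ℝ) * (∑ j, p j ^ 2) < 1 := by
    rw [lt_div_iff₀ hM0] at hnonexp
    linarith [hnonexp]
  have hPm : ∀ m : ℕ, 2 ≤ m → (∑ j, p j ^ m) ≤ ∑ j, p j ^ 2 :=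
    fun m hm => Finset.sum_le_sum fun j _ =>
      pow_le_pow_of_le_one (hp0 j).le (hp1 j).le hm
  have hMPm : ∀ m : ℕ, 2 ≤ m → (M:ℝ) * (∑ j, p j ^ m) < 1 := fun m hm =>
    lt_of_le_of_lt (mul_le_mul_of_nonneg_left (hPm m hm) hM0.le) hP2lt
  -- the geometric bound
  have hTb : ∀ n ℓ, |T n ℓ| ≤
      (∑ i ∈ Finset.Icc 2 n, (n.choose i:ℝ) * |b i|) * ((M:ℝ) * (∑ j, p j ^ 2))^ℓ := by
    intro n ℓ
    rw [hT, abs_mul, abs_pow, Nat.abs_cast]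
    have step : |∑ k ∈ Finset.Nat.antidiagonalTuple A ℓ, (Nat.multinomial Finset.univ k : ℝ) *
        ∑ i ∈ Finset.Icc 2 n, (n.choose i : ℝ) *
          (1 - ∏ j, p j ^ k j) ^ (n - i) * (∏ j, p j ^ k j) ^ i * b i|
        ≤ ∑ k ∈ Finset.Nat.antidiagonalTuple A ℓ, (Nat.multinomial Finset.univ k : ℝ) *
            ((∏ j, p j ^ k j)^2 * ∑ i ∈ Finset.Icc 2 n, (n.choose i:ℝ) * |b i|) := by
      refine (Finset.abs_sum_le_sum_abs _ _).trans (Finset.sum_le_sum fun k _ => ?_)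
      rw [abs_mul, Nat.abs_cast]
      refine mul_le_mul_of_nonneg_left ?_ (Nat.cast_nonneg _)
      refine (Finset.abs_sum_le_sum_abs _ _).trans ?_
      rw [Finset.mul_sum]
      refine Finset.sum_le_sum fun i hi => ?_
      rw [Finset.mem_Icc] at hi
      have hQ0 := hq0 k
      have hQ1 := hq1 k
      have h1 : |(n.choose i:ℝ) * (1 - ∏ j, p j ^ k j)^(n-i) * (∏ j, p j ^ k j)^i * b i|
          = (n.choose i:ℝ) * (1 - ∏ j, p j ^ k j)^(n-i) * (∏ j, p j ^ k j)^i * |b i| := by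
        rw [abs_mul, abs_mul, abs_mul, Nat.abs_cast,
          abs_of_nonneg (pow_nonneg (by linarith) (n-i)),
          abs_of_nonneg (pow_nonneg hQ0.le i)]
      rw [h1]
      have h2 : (1 - ∏ j, p j ^ k j)^(n-i) ≤ 1 := pow_le_one₀ (by linarith) (by linarith)
      have h3 : (∏ j, p j ^ k j)^i ≤ (∏ j, p j ^ k j)^2 :=
        pow_le_pow_of_le_one hQ0.le hQ1 hi.1
      have h4 : (0:ℝ) ≤ (n.choose i : ℝ) := Nat.cast_nonneg _
      have h5 : (0:ℝ) ≤ |b i| := abs_nonneg _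
      have h6 : (0:ℝ) ≤ (1 - ∏ j, p j ^ k j)^(n-i) := pow_nonneg (by linarith) _
      have h7 : (0:ℝ) ≤ (∏ j, p j ^ k j)^i := pow_nonneg hQ0.le i
      nlinarith [mul_le_mul h2 h3 h7 zero_le_one, mul_nonneg h4 h5]
    refine le_trans (mul_le_mul_of_nonneg_left step (pow_nonneg hM0.le ℓ)) (le_of_eq ?_)
    have hmt : ∑ k ∈ Finset.Nat.antidiagonalTuple A ℓ, (Nat.multinomial Finset.univ k : ℝ) *
        ((∏ j, p j ^ k j)^2 * ∑ i ∈ Finset.Icc 2 n, (n.choose i:ℝ) * |b i|)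
        = (∑ j, p j ^ 2)^ℓ * ∑ i ∈ Finset.Icc 2 n, (n.choose i:ℝ) * |b i| := by
      rw [← trie_aux_MT' p 2 ℓ, Finset.sum_mul]
      exact Finset.sum_congr rfl fun k _ => by ring
    rw [hmt, mul_pow]
    ring
  -- summability
  have hsum : ∀ n, Summable (fun ℓ : ℕ => |T n ℓ|) := by
    intro n
    have hg : Summable (fun ℓ : ℕ =>
        (∑ i ∈ Finset.Icc 2 n, (n.choose i:ℝ) * |b i|) * ((M:ℝ) * (∑ j, p j ^ 2))^ℓ) :=
      (summable_geometric_of_lt_one (by positivity) hP2lt).mul_left _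
    exact Summable.of_nonneg_of_le (fun ℓ => abs_nonneg _) (fun ℓ => hTb n ℓ) hg
  have hsumT : ∀ n, Summable (T n) := fun n => summable_abs_iff.mp (hsum n)
  -- small n : everything vanishes
  have hT01 : ∀ n, n < 2 → ∀ ℓ, T n ℓ = 0 := by
    intro n hn ℓ
    rw [hT]
    have : Finset.Icc 2 n = ∅ := by rw [Finset.Icc_eq_empty_iff]; omega
    simp [this]
  -- value at ℓ = 0
  have hTn0 : ∀ n, 2 ≤ n → T n 0 = b n := by
    intro n hn
    rw [hT, Finset.Nat.antidiagonalTuple_zero_right, Finset.sum_singleton]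
    have hm1 : (Nat.multinomial Finset.univ (0 : Fin A → ℕ) : ℝ) = 1 := by
      simp [Nat.multinomial]
    have hq : (∏ j, p j ^ (0 : Fin A → ℕ) j) = 1 := by simp
    rw [hm1, hq]
    have : ∑ i ∈ Finset.Icc 2 n, (n.choose i : ℝ) * (1 - 1)^(n-i) * (1:ℝ)^i * b i = b n := by
      rw [Finset.sum_eq_single n]
      · simp
      · intro i hi hneq
        rw [Finset.mem_Icc] at hi
        have : (1 - (1:ℝ))^(n-i) = 0 := by
          rw [sub_self]; exact zero_pow (by omega)
        rw [this]; ring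
      · intro h; exact absurd (Finset.mem_Icc.mpr ⟨hn, le_refl n⟩) h
    rw [this]
    simp
  -- the propagation identity
  have hprop : ∀ n ℓ, T n (ℓ+1) = (M:ℝ) * ∑ j, ∑ m ∈ Finset.range (n+1),
      ((n.choose m:ℝ) * p j ^ m * (1 - p j)^(n-m) * T m ℓ) := by
    intro n ℓ
    -- monomial data
    set u : ℕ × ℕ → ℝ := fun t =>
      (n.choose t.1 : ℝ) * ((n - t.1).choose t.2 : ℝ) * (-1)^t.2 * c t.1 with hu
    set sq : Finset (ℕ × ℕ) := Finset.range (n+1) ×ˢ Finset.range (n+1) with hsq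
    have hpoly : ∀ x : ℝ, G n x = ∑ t ∈ sq, u t * x^(t.1+t.2) := fun x => trie_aux_poly c n x
    -- LHS
    have hLHS : T n (ℓ+1) = (M:ℝ)^(ℓ+1) *
        ∑ t ∈ sq, u t * (∑ j, p j ^ (t.1+t.2)) ^ (ℓ+1) := by
      rw [hTG n (ℓ+1)]
      congr 1
      rw [← trie_aux_key p sq u (fun t => t.1+t.2) (ℓ+1)]
      exact Finset.sum_congr rfl fun k _ => by rw [hpoly]
    -- each j-term of RHS
    have hRj : ∀ j : Fin A, ∑ m ∈ Finset.range (n+1),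
        ((n.choose m:ℝ) * p j ^ m * (1 - p j)^(n-m) * T m ℓ)
        = (M:ℝ)^ℓ * ∑ t ∈ sq, (u t * p j ^ (t.1+t.2)) * (∑ j', p j' ^ (t.1+t.2)) ^ ℓ := by
      intro j
      calc ∑ m ∈ Finset.range (n+1), ((n.choose m:ℝ) * p j ^ m * (1 - p j)^(n-m) * T m ℓ)
          = ∑ m ∈ Finset.range (n+1), ∑ k ∈ Finset.Nat.antidiagonalTuple A ℓ,
              (M:ℝ)^ℓ * ((Nat.multinomial Finset.univ k : ℝ) *
                ((n.choose m:ℝ) * p j ^ m * (1 - p j)^(n-m) * G m (∏ j', p j' ^ k j'))) := by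
            refine Finset.sum_congr rfl fun m _ => ?_
            rw [hTG m ℓ, Finset.mul_sum, Finset.mul_sum]
            exact Finset.sum_congr rfl fun k _ => by ring
        _ = ∑ k ∈ Finset.Nat.antidiagonalTuple A ℓ, ∑ m ∈ Finset.range (n+1),
              (M:ℝ)^ℓ * ((Nat.multinomial Finset.univ k : ℝ) *
                ((n.choose m:ℝ) * p j ^ m * (1 - p j)^(n-m) * G m (∏ j', p j' ^ k j'))) :=
            Finset.sum_comm
        _ = (M:ℝ)^ℓ * ∑ k ∈ Finset.Nat.antidiagonalTuple A ℓ,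
              (Nat.multinomial Finset.univ k : ℝ) * G n (p j * ∏ j', p j' ^ k j') := by
            rw [Finset.mul_sum]
            refine Finset.sum_congr rfl fun k _ => ?_
            have hGn : G n (p j * ∏ j', p j' ^ k j')
                = ∑ m ∈ Finset.range (n+1), (n.choose m : ℝ) * (p j)^m * (1-(p j))^(n-m) *
                  G m (∏ j', p j' ^ k j') := by
              have hcomp := trie_aux_comp c (p j) (∏ j', p j' ^ k j') n
              simp only [hG]
              exact hcomp.symm
            rw [hGn]
            simp only [Finset.mul_sum]
        _ = (M:ℝ)^ℓ * ∑ t ∈ sq, (u t * p j ^ (t.1+t.2)) * (∑ j', p j' ^ (t.1+t.2)) ^ ℓ := by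
            congr 1
            rw [← trie_aux_key p sq (fun t => u t * p j ^ (t.1+t.2)) (fun t => t.1+t.2) ℓ]
            refine Finset.sum_congr rfl fun k _ => ?_
            congr 1
            rw [hpoly]
            exact Finset.sum_congr rfl fun t _ => by rw [mul_pow]; ring
    -- sum over j
    rw [hLHS]
    have : ∑ j, ∑ m ∈ Finset.range (n+1),
        ((n.choose m:ℝ) * p j ^ m * (1 - p j)^(n-m) * T m ℓ)
        = (M:ℝ)^ℓ * ∑ t ∈ sq, u t * (∑ j', p j' ^ (t.1+t.2)) ^ (ℓ+1) := by
      calc ∑ j, ∑ m ∈ Finset.range (n+1), ((n.choose m:ℝ) * p j ^ m * (1 - p j)^(n-m) * T m ℓ)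
          = ∑ j, (M:ℝ)^ℓ * ∑ t ∈ sq, (u t * p j ^ (t.1+t.2)) * (∑ j', p j' ^ (t.1+t.2)) ^ ℓ :=
            Finset.sum_congr rfl fun j _ => hRj j
        _ = ∑ j, ∑ t ∈ sq, (M:ℝ)^ℓ * ((u t * p j ^ (t.1+t.2)) * (∑ j', p j' ^ (t.1+t.2)) ^ ℓ) :=
            Finset.sum_congr rfl fun j _ => Finset.mul_sum _ _ _
        _ = ∑ t ∈ sq, ∑ j, (M:ℝ)^ℓ * ((u t * p j ^ (t.1+t.2)) * (∑ j', p j' ^ (t.1+t.2)) ^ ℓ) :=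
            Finset.sum_comm
        _ = (M:ℝ)^ℓ * ∑ t ∈ sq, u t * (∑ j', p j' ^ (t.1+t.2)) ^ (ℓ+1) := by
            rw [Finset.mul_sum]
            refine Finset.sum_congr rfl fun t _ => ?_
            have hstep : ∑ j, (M:ℝ)^ℓ * ((u t * p j ^ (t.1+t.2)) * (∑ j', p j' ^ (t.1+t.2)) ^ ℓ)
                = ((M:ℝ)^ℓ * (u t * (∑ j', p j' ^ (t.1+t.2)) ^ ℓ)) * ∑ j, p j ^ (t.1+t.2) := by
              rw [Finset.mul_sum]
              exact Finset.sum_congr rfl fun j _ => by ring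
            rw [hstep, pow_succ]
            ring
    rw [this, pow_succ]
    ring
  -- main induction
  have hS : ∀ n, a n = ∑' ℓ : ℕ, T n ℓ := by
    intro n
    induction n using Nat.strong_induction_on with
    | _ n IH =>
      rcases lt_or_ge n 2 with hn | hn
      · have hz : (∑' ℓ : ℕ, T n ℓ) = 0 := by
          have : (fun ℓ : ℕ => T n ℓ) = fun _ => 0 := funext (hT01 n hn)
          rw [this, tsum_zero]
        rw [hz]
        interval_cases n
        · exact ha0
        · exact ha1
      · -- recurrence for S
        have hSrec : (∑' ℓ : ℕ, T n ℓ) = (M:ℝ) * ∑ j, ∑ m ∈ Finset.range (n+1),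
            ((n.choose m:ℝ) * p j ^ m * (1 - p j)^(n-m) * (∑' ℓ : ℕ, T m ℓ)) + b n := by
          rw [Summable.tsum_eq_zero_add (hsumT n), hTn0 n hn]
          have h1 : (∑' ℓ : ℕ, T n (ℓ+1)) = (M:ℝ) * ∑ j, ∑ m ∈ Finset.range (n+1),
              ((n.choose m:ℝ) * p j ^ m * (1 - p j)^(n-m) * (∑' ℓ : ℕ, T m ℓ)) := by
            calc (∑' ℓ : ℕ, T n (ℓ+1))
                = ∑' ℓ : ℕ, (M:ℝ) * ∑ j, ∑ m ∈ Finset.range (n+1),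
                    ((n.choose m:ℝ) * p j ^ m * (1 - p j)^(n-m) * T m ℓ) :=
                  tsum_congr fun ℓ => hprop n ℓ
              _ = (M:ℝ) * ∑' ℓ : ℕ, ∑ j, ∑ m ∈ Finset.range (n+1),
                    ((n.choose m:ℝ) * p j ^ m * (1 - p j)^(n-m) * T m ℓ) := tsum_mul_left
              _ = (M:ℝ) * ∑ j, ∑' ℓ : ℕ, ∑ m ∈ Finset.range (n+1),
                    ((n.choose m:ℝ) * p j ^ m * (1 - p j)^(n-m) * T m ℓ) := by
                  congr 1
                  refine Summable.tsum_finsetSum fun j _ => ?_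
                  exact summable_sum fun m _ => ((hsumT m).mul_left _)
              _ = (M:ℝ) * ∑ j, ∑ m ∈ Finset.range (n+1),
                    ((n.choose m:ℝ) * p j ^ m * (1 - p j)^(n-m) * (∑' ℓ : ℕ, T m ℓ)) := by
                  congr 1
                  refine Finset.sum_congr rfl fun j _ => ?_
                  rw [Summable.tsum_finsetSum fun m _ => ((hsumT m).mul_left _)]
                  exact Finset.sum_congr rfl fun m _ => tsum_mul_left
          rw [h1]
          ring
        -- split off the top term in both recurrences
        have hsplit : ∀ f : ℕ → ℝ,
            ∑ j, ∑ m ∈ Finset.range (n+1), ((n.choose m:ℝ) * p j ^ m * (1 - p j)^(n-m) * f m)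
            = (∑ j, ∑ m ∈ Finset.range n, ((n.choose m:ℝ) * p j ^ m * (1 - p j)^(n-m) * f m))
              + (∑ j, p j ^ n) * f n := by
          intro f
          have h1 : ∀ j : Fin A, ∑ m ∈ Finset.range (n+1),
              ((n.choose m:ℝ) * p j ^ m * (1 - p j)^(n-m) * f m)
              = (∑ m ∈ Finset.range n, ((n.choose m:ℝ) * p j ^ m * (1 - p j)^(n-m) * f m))
                + p j ^ n * f n := by
            intro j
            rw [Finset.sum_range_succ]
            simp [Nat.choose_self]
          rw [Finset.sum_congr rfl fun j _ => h1 j, Finset.sum_add_distrib, Finset.sum_mul]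
        have hsplitA := hsplit a
        have hsplitS := hsplit (fun m => ∑' ℓ : ℕ, T m ℓ)
        have eIH : ∑ j, ∑ m ∈ Finset.range n, ((n.choose m:ℝ) * p j ^ m * (1 - p j)^(n-m) * a m)
            = ∑ j, ∑ m ∈ Finset.range n,
                ((n.choose m:ℝ) * p j ^ m * (1 - p j)^(n-m) * (∑' ℓ : ℕ, T m ℓ)) :=
          Finset.sum_congr rfl fun j _ => Finset.sum_congr rfl fun m hm => by
            rw [IH m (Finset.mem_range.mp hm)]
        have hPn := hMPm n hn
        have h0 : (a n - ∑' ℓ : ℕ, T n ℓ) * (1 - (M:ℝ) * ∑ j, p j ^ n) = 0 := by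
          linear_combination (hrec n hn) - hSrec + (M:ℝ) * hsplitA - (M:ℝ) * hsplitS
            + (M:ℝ) * eIH
        rcases mul_eq_zero.mp h0 with h | h
        · linarith
        · exfalso; linarith
  intro n
  exact ⟨hsum n, hS n⟩
end

section
/- Let 1 ≤ ρ < 2, a > 1, and set χ_k = 2πik/log a for k ∈ ℤ and f(t) = 1 - (t+1)e^{-t} for t > 0. Then for every real x, the series Σ_{k ∈ ℤ} (Γ(2-ρ-χ_k)/(ρ+χ_k)) e^{2πikx} converges absolutely and equals (log a) · Σ_{v ∈ ℤ} f(a^{x-v}) a^{-ρ(x-v)}; in particular this sum is a positive real number for every x. -/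
open Complex MeasureTheory Set Filter Topology

set_option maxHeartbeats 1000000

namespace GammaPoissonAux


noncomputable def g (t : ℝ) : ℝ := 1 - (t + 1) * Real.exp (-t)

lemma g_cont : Continuous g := by unfold g; continuity

lemma g_zero : g 0 = 0 := by simp [g]

lemma g_hasDeriv (t : ℝ) : HasDerivAt g (t * Real.exp (-t)) t := by
  have h2 : HasDerivAt (fun t : ℝ => Real.exp (-t)) (Real.exp (-t) * -1) t :=
    (Real.hasDerivAt_exp (-t)).comp t ((hasDerivAt_id t).neg)
  have h3 : HasDerivAt (fun t : ℝ => (t + 1) * Real.exp (-t))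
      (1 * Real.exp (-t) + (t + 1) * (Real.exp (-t) * -1)) t :=
    ((hasDerivAt_id t).add_const 1).mul h2
  have h4 := (hasDerivAt_const t (1 : ℝ)).sub h3
  refine h4.congr_deriv (Eq.symm ?_)
  ring

lemma g_pos {t : ℝ} (ht : 0 < t) : 0 < g t := by
  have h := Real.add_one_lt_exp (x := t) ht.ne'
  have h2 : (t + 1) * Real.exp (-t) < Real.exp t * Real.exp (-t) :=
    mul_lt_mul_of_pos_right h (Real.exp_pos _)
  rw [← Real.exp_add] at h2
  simp only [add_neg_cancel, Real.exp_zero] at h2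
  simp only [g]
  linarith

lemma g_nonneg {t : ℝ} (ht : 0 ≤ t) : 0 ≤ g t := by
  rcases eq_or_lt_of_le ht with h | h
  · simp [← h, g_zero]
  · exact (g_pos h).le

lemma g_le_one {t : ℝ} (ht : 0 ≤ t) : g t ≤ 1 := by
  have h1 : 0 ≤ (t + 1) * Real.exp (-t) := by positivity
  simp only [g]; linarith

lemma g_le_sq {t : ℝ} (ht : 0 ≤ t) : g t ≤ t ^ 2 / 2 := by
  have hic : Continuous (fun u : ℝ => u * Real.exp (-u)) := by continuity
  have hFTC : ∫ u in (0:ℝ)..t, u * Real.exp (-u) = g t - g 0 :=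
    intervalIntegral.integral_eq_sub_of_hasDerivAt (fun u _ => g_hasDeriv u)
      (hic.intervalIntegrable 0 t)
  rw [g_zero, sub_zero] at hFTC
  have hmono : ∫ u in (0:ℝ)..t, u * Real.exp (-u) ≤ ∫ u in (0:ℝ)..t, u := by
    apply intervalIntegral.integral_mono_on ht (hic.intervalIntegrable 0 t)
      (continuous_id.intervalIntegrable 0 t)
    intro x hx
    have : Real.exp (-x) ≤ 1 := Real.exp_le_one_iff.mpr (by linarith [hx.1])
    calc x * Real.exp (-x) ≤ x * 1 := by
          apply mul_le_mul_of_nonneg_left this hx.1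
      _ = x := mul_one x
  rw [integral_id] at hmono
  rw [← hFTC]
  calc (∫ u in (0:ℝ)..t, u * Real.exp (-u)) ≤ (t ^ 2 - 0 ^ 2) / 2 := hmono
    _ = t ^ 2 / 2 := by ring




variable {s : ℂ}

lemma norm_integrand (hs1 : 1 ≤ s.re) {t : ℝ} (ht : 0 < t) :
    ‖(g t : ℂ) * (t : ℂ) ^ (-s - 1)‖ = g t * t ^ (-s.re - 1) := by
  rw [norm_mul, Complex.norm_real, Real.norm_of_nonneg (g_nonneg ht.le),
    Complex.norm_cpow_eq_rpow_re_of_pos ht]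
  simp

lemma continuousOn_integrand :
    ContinuousOn (fun t : ℝ => (g t : ℂ) * (t : ℂ) ^ (-s - 1)) (Ioi 0) := by
  apply ContinuousOn.mul ((Complex.continuous_ofReal.comp g_cont).continuousOn)
  exact ContinuousOn.cpow Complex.continuous_ofReal.continuousOn continuousOn_const
    (fun t ht => Complex.ofReal_mem_slitPlane.2 ht)

lemma integrable_main (hs1 : 1 ≤ s.re) (hs2 : s.re < 2) :
    IntegrableOn (fun t : ℝ => (g t : ℂ) * (t : ℂ) ^ (-s - 1)) (Ioi 0) := by
  rw [← Set.Ioc_union_Ioi_eq_Ioi (zero_le_one : (0:ℝ) ≤ 1)]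
  refine IntegrableOn.union ?_ ?_
  · have hb : IntegrableOn (fun t : ℝ => (1 / 2 : ℝ) * t ^ (1 - s.re)) (Ioc 0 1) := by
      apply Integrable.const_mul
      have h1 : IntervalIntegrable (fun t : ℝ => t ^ (1 - s.re)) volume 0 1 :=
        intervalIntegral.intervalIntegrable_rpow' (by linarith)
      rw [intervalIntegrable_iff_integrableOn_Ioc_of_le zero_le_one] at h1
      exact h1
    apply Integrable.mono' hb
      (((continuousOn_integrand (s := s)).mono Set.Ioc_subset_Ioi_self).aestronglyMeasurable
        measurableSet_Ioc)
    filter_upwards [ae_restrict_mem measurableSet_Ioc] with t ht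
    rw [norm_integrand hs1 ht.1]
    have h0 : (0:ℝ) ≤ t ^ (-s.re - 1) := Real.rpow_nonneg ht.1.le _
    calc g t * t ^ (-s.re - 1) ≤ t ^ 2 / 2 * t ^ (-s.re - 1) :=
          mul_le_mul_of_nonneg_right (g_le_sq ht.1.le) h0
      _ = 1 / 2 * t ^ (1 - s.re) := by
          rw [show (t:ℝ) ^ 2 = t ^ ((2:ℝ)) from (Real.rpow_natCast t 2).symm ▸ (by norm_num),
            div_mul_eq_mul_div, ← Real.rpow_add ht.1]
          rw [show (2:ℝ) + (-s.re - 1) = 1 - s.re by ring]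
          ring
  · have hb : IntegrableOn (fun t : ℝ => t ^ (-s.re - 1)) (Ioi 1) :=
      integrableOn_Ioi_rpow_of_lt (by linarith) zero_lt_one
    apply Integrable.mono' hb
      (((continuousOn_integrand (s := s)).mono (Set.Ioi_subset_Ioi zero_le_one)).aestronglyMeasurable
        measurableSet_Ioi)
    filter_upwards [ae_restrict_mem measurableSet_Ioi] with t ht
    have ht0 : (0:ℝ) < t := lt_trans zero_lt_one ht
    rw [norm_integrand hs1 ht0]
    have h0 : (0:ℝ) ≤ t ^ (-s.re - 1) := Real.rpow_nonneg ht0.le _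
    calc g t * t ^ (-s.re - 1) ≤ 1 * t ^ (-s.re - 1) :=
          mul_le_mul_of_nonneg_right (g_le_one ht0.le) h0
      _ = t ^ (-s.re - 1) := one_mul _


lemma mellin_eq (hs1 : 1 ≤ s.re) (hs2 : s.re < 2) :
    ∫ t in Ioi (0:ℝ), (g t : ℂ) * (t : ℂ) ^ (-s - 1) = Complex.Gamma (2 - s) / s := by
  have hs0 : s ≠ 0 := by
    intro h; rw [h] at hs1; simp at hs1; linarith
  have habs : (0:ℝ) < ‖s‖ := by
    simpa using (norm_pos_iff.mpr hs0)
  set F : ℝ → ℂ := fun t => -((g t : ℂ) * (t : ℂ) ^ (-s)) / s with hFdef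
  have hFderiv : ∀ t ∈ Ioi (0:ℝ), HasDerivAt F
      ((g t : ℂ) * (t : ℂ) ^ (-s - 1) - (Real.exp (-t) : ℂ) * (t : ℂ) ^ (2 - s - 1) / s) t := by
    intro t ht
    have ht0 : (0:ℝ) < t := ht
    have htne : (t : ℂ) ≠ 0 := by
      simpa using ht0.ne'
    have hcp : HasDerivAt (fun y : ℝ => (y : ℂ) ^ (-s)) (-s * (t : ℂ) ^ (-s - 1)) t :=
      ((Complex.hasStrictDerivAt_cpow_const
        (Complex.ofReal_mem_slitPlane.2 ht0)).hasDerivAt).comp_ofReal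
    have hgd : HasDerivAt (fun y : ℝ => ((g y : ℝ) : ℂ)) ((t * Real.exp (-t) : ℝ) : ℂ) t :=
      (g_hasDeriv t).ofReal_comp
    have hprod := ((hgd.mul hcp).neg).div_const s
    refine hprod.congr_deriv (Eq.symm ?_)
    have h1 : (t : ℂ) ^ (-s) = t * (t : ℂ) ^ (-s - 1) := by
      conv_lhs => rw [show -s = 1 + (-s - 1) by ring, Complex.cpow_add _ _ htne,
        Complex.cpow_one]
    have h2 : (t : ℂ) ^ (2 - s - 1 : ℂ) = t * (t : ℂ) ^ (-s) := by
      conv_lhs => rw [show (2:ℂ) - s - 1 = 1 + (-s) by ring, Complex.cpow_add _ _ htne,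
        Complex.cpow_one]
    rw [h2]
    push_cast
    field_simp
    rw [h1]
    ring
  have hF0 : F 0 = 0 := by
    simp [hFdef, g_zero]
  have hnormF : ∀ t : ℝ, 0 < t → ‖F t‖ = g t * t ^ (-s.re) / ‖s‖ := by
    intro t ht
    rw [hFdef]
    simp only []
    rw [norm_div, norm_neg, norm_mul, Complex.norm_real,
      Real.norm_of_nonneg (g_nonneg ht.le),
      Complex.norm_cpow_eq_rpow_re_of_pos ht, Complex.neg_re]
  have hcont0 : ContinuousWithinAt F (Ici 0) 0 := by
    rw [ContinuousWithinAt, hF0]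
    apply squeeze_zero_norm' (a := fun t : ℝ => t ^ (2 - s.re) / (2 * ‖s‖))
    · filter_upwards [self_mem_nhdsWithin] with t (ht : t ∈ Ici 0)
      rcases eq_or_lt_of_le (show (0:ℝ) ≤ t from ht) with h | h
      · rw [← h, hF0]
        simp [Real.zero_rpow (show (2 : ℝ) - s.re ≠ 0 by linarith)]
      · rw [hnormF t h]
        rw [div_le_div_iff₀ habs (by positivity)]
        have hb : g t * t ^ (-s.re) ≤ t ^ (2 - s.re) / 2 := by
          calc g t * t ^ (-s.re) ≤ t ^ 2 / 2 * t ^ (-s.re) :=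
                mul_le_mul_of_nonneg_right (g_le_sq h.le) (Real.rpow_nonneg h.le _)
            _ = t ^ (2 - s.re) / 2 := by
                rw [show (t:ℝ) ^ 2 = t ^ ((2:ℝ)) from (Real.rpow_natCast t 2).symm ▸ (by norm_num),
                  div_mul_eq_mul_div, ← Real.rpow_add h]
                ring_nf
        calc g t * t ^ (-s.re) * (2 * ‖s‖)
              ≤ t ^ (2 - s.re) / 2 * (2 * ‖s‖) :=
              mul_le_mul_of_nonneg_right hb (by positivity)
          _ = t ^ (2 - s.re) * ‖s‖ := by ring
    · have hc : Tendsto (fun t : ℝ => t ^ (2 - s.re)) (nhdsWithin 0 (Ici 0)) (nhds 0) := by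
        have := (Real.continuousAt_rpow_const 0 (2 - s.re)
          (Or.inr (by linarith))).continuousWithinAt (s := Ici (0:ℝ))
        rw [ContinuousWithinAt, Real.zero_rpow (show (2 : ℝ) - s.re ≠ 0 by linarith)] at this
        exact this
      simpa using hc.div_const (2 * ‖s‖)
  have htop : Tendsto F atTop (nhds 0) := by
    apply squeeze_zero_norm' (a := fun t : ℝ => t ^ (-s.re) / ‖s‖)
    · filter_upwards [eventually_gt_atTop 0] with t ht
      rw [hnormF t ht, div_le_div_iff₀ habs habs]
      calc g t * t ^ (-s.re) * ‖s‖ ≤ 1 * t ^ (-s.re) * ‖s‖ := by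
            apply mul_le_mul_of_nonneg_right
              (mul_le_mul_of_nonneg_right (g_le_one ht.le) (Real.rpow_nonneg ht.le _)) habs.le
        _ = t ^ (-s.re) * ‖s‖ := by ring
    · simpa using (tendsto_rpow_neg_atTop (show (0:ℝ) < s.re by linarith)).div_const
        (‖s‖)
  have hDint : IntegrableOn (fun t : ℝ => (Real.exp (-t) : ℂ) * (t : ℂ) ^ (2 - s - 1) / s)
      (Ioi 0) := by
    apply Integrable.div_const
    exact Complex.GammaIntegral_convergent (by simp only [Complex.sub_re, Complex.re_ofNat]; linarith)
  have hMint := integrable_main hs1 hs2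
  have hsub : IntegrableOn (fun t : ℝ =>
      (g t : ℂ) * (t : ℂ) ^ (-s - 1) - (Real.exp (-t) : ℂ) * (t : ℂ) ^ (2 - s - 1) / s)
      (Ioi 0) := hMint.sub hDint
  have key := integral_Ioi_of_hasDerivAt_of_tendsto hcont0 hFderiv hsub htop
  rw [hF0, sub_zero, integral_sub hMint hDint] at key
  have hG : ∫ t in Ioi (0:ℝ), (Real.exp (-t) : ℂ) * (t : ℂ) ^ (2 - s - 1) / s
      = Complex.Gamma (2 - s) / s := by
    rw [integral_div, Complex.Gamma_eq_integral
      (by simp only [Complex.sub_re, Complex.re_ofNat]; linarith), Complex.GammaIntegral]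
  rw [hG] at key
  linear_combination key




variable {s : ℂ}

lemma exp_pt (s : ℂ) (x : ℝ) :
    |Real.exp x| • ((g (Real.exp x) : ℂ) * ((Real.exp x : ℝ) : ℂ) ^ (-s - 1))
      = (g (Real.exp x) : ℂ) * Complex.exp (-s * x) := by
  rw [abs_of_pos (Real.exp_pos x), real_smul]
  have h1 : ((Real.exp x : ℝ) : ℂ) ^ (-s - 1) = Complex.exp ((x : ℂ) * (-s - 1)) := by
    rw [Complex.ofReal_exp, Complex.cpow_def_of_ne_zero (Complex.exp_ne_zero _),
      Complex.log_exp (by simpa using Real.pi_pos) (by simpa using Real.pi_pos.le)]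
  rw [h1, Complex.ofReal_exp, mul_comm ((Complex.exp (x:ℂ))) _, mul_assoc, ← Complex.exp_add]
  congr 2
  ring

lemma line_integrable (hs1 : 1 ≤ s.re) (hs2 : s.re < 2) :
    Integrable (fun u : ℝ => (g (Real.exp u) : ℂ) * Complex.exp (-s * u)) := by
  have himg : Real.exp '' (univ : Set ℝ) = Ioi 0 := by rw [image_univ, Real.range_exp]
  have hint : IntegrableOn (fun t : ℝ => (g t : ℂ) * (t : ℂ) ^ (-s - 1))
      (Real.exp '' univ) := by rw [himg]; exact integrable_main hs1 hs2
  rw [integrableOn_image_iff_integrableOn_abs_deriv_smul MeasurableSet.univ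
    (fun x _ => (Real.hasDerivAt_exp x).hasDerivWithinAt) Real.exp_injective.injOn] at hint
  rw [← integrableOn_univ]
  exact hint.congr_fun (fun x _ => exp_pt s x) MeasurableSet.univ

lemma line_eq (hs1 : 1 ≤ s.re) (hs2 : s.re < 2) :
    ∫ u : ℝ, (g (Real.exp u) : ℂ) * Complex.exp (-s * u) = Complex.Gamma (2 - s) / s := by
  have himg : Real.exp '' (univ : Set ℝ) = Ioi 0 := by rw [image_univ, Real.range_exp]
  rw [← mellin_eq hs1 hs2, ← himg,
    integral_image_eq_integral_abs_deriv_smul MeasurableSet.univ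
      (fun x _ => (Real.hasDerivAt_exp x).hasDerivWithinAt) Real.exp_injective.injOn]
  rw [Measure.restrict_univ]
  exact (integral_congr_ae (Eventually.of_forall (fun x => (exp_pt s x)))).symm

lemma fourier_eq (ρ a : ℝ) (hρ1 : 1 ≤ ρ) (hρ2 : ρ < 2) (ha : 1 < a) (ξ : ℝ) :
    FourierTransform.fourier (fun y : ℝ => ((g (a ^ y) * a ^ (-ρ * y) : ℝ) : ℂ)) ξ
      = ((Real.log a)⁻¹ : ℝ) •
        (Complex.Gamma (2 - ((ρ:ℂ) + ((2 * Real.pi * ξ / Real.log a : ℝ) : ℂ) * I)) /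
          ((ρ:ℂ) + ((2 * Real.pi * ξ / Real.log a : ℝ) : ℂ) * I)) := by
  have ha0 : (0:ℝ) < a := lt_trans one_pos ha
  set L : ℝ := Real.log a with hLdef
  have hL : 0 < L := Real.log_pos ha
  set t : ℂ := (ρ:ℂ) + ((2 * Real.pi * ξ / L : ℝ) : ℂ) * I with htdef
  have ht1 : 1 ≤ t.re := by simp [htdef]; exact hρ1
  have ht2 : t.re < 2 := by simp [htdef]; exact hρ2
  rw [Real.fourier_real_eq_integral_exp_smul]
  have hpt : ∀ v : ℝ, Complex.exp (↑(-2 * Real.pi * v * ξ) * I) •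
      ((g (a ^ v) * a ^ (-ρ * v) : ℝ) : ℂ)
      = (fun u : ℝ => (g (Real.exp u) : ℂ) * Complex.exp (-t * u)) (L * v) := by
    intro v
    simp only [smul_eq_mul]
    have hav : a ^ v = Real.exp (L * v) := by rw [Real.rpow_def_of_pos ha0]
    have har : a ^ (-ρ * v) = Real.exp (L * (-ρ * v)) := by rw [Real.rpow_def_of_pos ha0]
    rw [hav, har, Complex.ofReal_mul (g (Real.exp (L * v))) (Real.exp (L * (-ρ * v))),
      Complex.ofReal_exp]
    rw [show Complex.exp (↑(-2 * Real.pi * v * ξ) * I) * ((g (Real.exp (L * v)) : ℂ) *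
        Complex.exp (↑(L * (-ρ * v))))
      = (g (Real.exp (L * v)) : ℂ) *
        (Complex.exp (↑(-2 * Real.pi * v * ξ) * I) * Complex.exp (↑(L * (-ρ * v)))) by ring]
    rw [← Complex.exp_add]
    congr 2
    have hLne : (L : ℂ) ≠ 0 := by exact_mod_cast hL.ne'
    rw [htdef]
    have hco : ((2 * Real.pi * ξ / L : ℝ) : ℂ) = 2 * (Real.pi : ℂ) * (ξ : ℂ) * ((L : ℂ))⁻¹ := by
      push_cast; ring
    rw [hco]
    push_cast
    field_simp
    ring
  rw [integral_congr_ae (Eventually.of_forall hpt)]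
  rw [Measure.integral_comp_mul_left (fun u : ℝ => (g (Real.exp u) : ℂ) *
    Complex.exp (-t * u)) L]
  rw [line_eq ht1 ht2, abs_of_pos (inv_pos.mpr hL)]



lemma norm_Gamma_le {z : ℂ} (hz : 0 < z.re) :
    ‖Complex.Gamma z‖ ≤ Real.Gamma z.re := by
  rw [Complex.Gamma_eq_integral hz, Complex.GammaIntegral,
    Real.Gamma_eq_integral hz]
  refine le_trans (norm_integral_le_integral_norm _) (le_of_eq ?_)
  apply setIntegral_congr_fun measurableSet_Ioi
  intro x hx
  show ‖((Real.exp (-x) : ℝ) : ℂ) * (x : ℂ) ^ (z - 1)‖ = Real.exp (-x) * x ^ (z.re - 1)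
  rw [norm_mul, Complex.norm_real, Real.norm_of_nonneg (Real.exp_pos _).le,
    Complex.norm_cpow_eq_rpow_re_of_pos hx]
  simp

lemma gamma_quot_bound {ρ : ℝ} (hρ1 : 1 ≤ ρ) (hρ2 : ρ < 2) {τ : ℝ} (hτ : τ ≠ 0) :
    ‖Complex.Gamma (2 - ((ρ:ℂ) + (τ:ℂ) * I)) / ((ρ:ℂ) + (τ:ℂ) * I)‖
      ≤ Real.Gamma (4 - ρ) / τ ^ 2 := by
  set s : ℂ := (ρ:ℂ) + (τ:ℂ) * I with hsdef
  have hs_re : s.re = ρ := by simp [hsdef]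
  have hs_im : s.im = τ := by simp [hsdef]
  have h2ne : (2 : ℂ) - s ≠ 0 := by
    intro h
    apply hτ
    have := congrArg Complex.im h
    simpa [hs_im] using this
  have h3ne : (3 : ℂ) - s ≠ 0 := by
    intro h
    apply hτ
    have := congrArg Complex.im h
    simpa [hs_im] using this
  have hrec : Complex.Gamma (2 - s) = Complex.Gamma (4 - s) / ((2 - s) * (3 - s)) := by
    have e1 := Complex.Gamma_add_one (2 - s) h2ne
    rw [show (2:ℂ) - s + 1 = 3 - s by ring] at e1
    have e2 := Complex.Gamma_add_one (3 - s) h3ne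
    rw [show (3:ℂ) - s + 1 = 4 - s by ring] at e2
    rw [e2, e1]
    field_simp
  have hsne : s ≠ 0 := by
    intro h
    apply hτ
    have := congrArg Complex.im h
    simpa [hs_im] using this
  rw [hrec]
  have habs : ‖Complex.Gamma (4 - s) / ((2 - s) * (3 - s)) / s‖
      = ‖Complex.Gamma (4 - s)‖ /
        (‖2 - s‖ * ‖3 - s‖ * ‖s‖) := by
    simp [norm_div, norm_mul, div_div]
  rw [habs]
  have hnum : ‖Complex.Gamma (4 - s)‖ ≤ Real.Gamma (4 - ρ) := by
    have h4re : ((4:ℂ) - s).re = 4 - ρ := by simp [hs_re]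
    have := norm_Gamma_le (z := 4 - s) (by rw [h4re]; linarith)
    rwa [h4re] at this
  have hb2 : |τ| ≤ ‖2 - s‖ := by
    have : |((2:ℂ) - s).im| ≤ ‖2 - s‖ := Complex.abs_im_le_norm _
    simpa [hs_im] using this
  have hb3 : (1:ℝ) ≤ ‖3 - s‖ := by
    have h1 : |((3:ℂ) - s).re| ≤ ‖3 - s‖ := Complex.abs_re_le_norm _
    have h2 : ((3:ℂ) - s).re = 3 - ρ := by simp [hs_re]
    rw [h2] at h1
    calc (1:ℝ) ≤ |3 - ρ| := by rw [abs_of_pos (by linarith)]; linarith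
      _ ≤ _ := h1
  have hbs : |τ| ≤ ‖s‖ := by
    have : |s.im| ≤ ‖s‖ := Complex.abs_im_le_norm _
    simpa [hs_im] using this
  have hτpos : 0 < |τ| := abs_pos.mpr hτ
  have hdenom : τ ^ 2 ≤ ‖2 - s‖ * ‖3 - s‖ * ‖s‖ := by
    calc τ ^ 2 = |τ| * 1 * |τ| := by rw [mul_one, ← abs_mul, abs_mul_self]; ring
      _ ≤ ‖2 - s‖ * ‖3 - s‖ * ‖s‖ := by
        apply mul_le_mul (mul_le_mul hb2 hb3 zero_le_one (by positivity)) hbs hτpos.le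
          (by positivity)
  exact div_le_div₀ (Real.Gamma_pos_of_pos (by linarith)).le hnum (by positivity) hdenom




lemma exp_decay_bigO {c : ℝ} (hc : 0 < c) :
    (fun y : ℝ => Real.exp (-c * y)) =O[atTop] fun y : ℝ => |y| ^ (-(2:ℝ)) := by
  have h1 := (isLittleO_exp_neg_mul_rpow_atTop hc (-(2:ℝ))).isBigO
  apply h1.congr' (EventuallyEq.refl _ _)
  filter_upwards [eventually_gt_atTop (0:ℝ)] with y hy
  rw [abs_of_pos hy]

lemma geom_aux {a : ℝ} (ha : 1 < a) {c : ℝ} (u : ℝ) (hc : 0 < c) :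
    Summable (fun n : ℕ => a ^ (c * (u - n))) := by
  have ha0 : (0:ℝ) ≤ a := (lt_trans one_pos ha).le
  have hr1 : a ^ (-c) < 1 := Real.rpow_lt_one_of_one_lt_of_neg ha (by linarith)
  have hr0 : 0 ≤ a ^ (-c) := Real.rpow_nonneg ha0 _
  have heq : ∀ n : ℕ, a ^ (c * (u - n)) = a ^ (c * u) * (a ^ (-c)) ^ n := by
    intro n
    rw [show c * (u - n) = c * u + (-c) * n by ring, Real.rpow_add (lt_of_lt_of_le one_pos ha.le),
      ← Real.rpow_natCast (a ^ (-c)) n, ← Real.rpow_mul ha0]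
  rw [funext heq]
  exact (summable_geometric_of_lt_one hr0 hr1).mul_left _

section Main

variable {ρ a : ℝ} (x : ℝ)

theorem main (hρ1 : 1 ≤ ρ) (hρ2 : ρ < 2) (ha : 1 < a) (χ : ℤ → ℂ) (hχ : ∀ k, χ k = (2 * Real.pi * Complex.I * k) / ((Real.log a : ℝ) : ℂ)) :
    Summable (fun k : ℤ =>
      ‖Complex.Gamma (2 - ρ - χ k) / ((ρ : ℂ) + χ k) *
        Complex.exp (2 * Real.pi * Complex.I * k * x)‖) ∧
    (∑' k : ℤ, Complex.Gamma (2 - ρ - χ k) / ((ρ : ℂ) + χ k) *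
        Complex.exp (2 * Real.pi * Complex.I * k * x))
      = ((Real.log a * ∑' v : ℤ, g (a ^ (x - v)) * a ^ (-ρ * (x - v)) : ℝ) : ℂ) ∧
    0 < Real.log a * ∑' v : ℤ, g (a ^ (x - v)) * a ^ (-ρ * (x - v)) := by
  have ha0 : (0:ℝ) < a := lt_trans one_pos ha
  set L : ℝ := Real.log a with hLdef
  have hL : 0 < L := Real.log_pos ha
  have hLC : (L : ℂ) ≠ 0 := by exact_mod_cast hL.ne'
  set h : ℝ → ℂ := fun y => ((g (a ^ y) * a ^ (-ρ * y) : ℝ) : ℂ) with hhdef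
  -- continuity
  have hcont : Continuous h := by
    have : h = fun y => ((g (Real.exp (L * y)) * Real.exp (L * (-ρ * y)) : ℝ) : ℂ) := by
      funext y
      simp only [hhdef]
      rw [Real.rpow_def_of_pos ha0, Real.rpow_def_of_pos ha0]
    rw [this]
    apply Complex.continuous_ofReal.comp
    apply Continuous.mul
    · exact g_cont.comp (Real.continuous_exp.comp (continuous_const.mul continuous_id))
    · exact Real.continuous_exp.comp (continuous_const.mul (continuous_const.mul continuous_id))
  -- norm of h
  have hnorm : ∀ y : ℝ, ‖h y‖ = g (a ^ y) * a ^ (-ρ * y) := by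
    intro y
    simp only [hhdef, Complex.norm_real]
    exact Real.norm_of_nonneg (mul_nonneg (g_nonneg (Real.rpow_pos_of_pos ha0 y).le)
      (Real.rpow_nonneg ha0.le _))
  -- decay of h
  have h_bigO : h =O[cocompact ℝ] fun y : ℝ => |y| ^ (-(2:ℝ)) := by
    rw [cocompact_eq_atBot_atTop, Asymptotics.isBigO_sup]
    constructor
    · -- atBot
      have hk : 0 < (2 - ρ) * L := mul_pos (by linarith) hL
      have hstep : h =O[atBot] fun y : ℝ => Real.exp (-((2 - ρ) * L) * -y) := by
        rw [Asymptotics.isBigO_iff]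
        refine ⟨1/2, Eventually.of_forall fun y => ?_⟩
        rw [hnorm y]
        have hb1 : g (a ^ y) ≤ (a ^ y) ^ 2 / 2 := g_le_sq (Real.rpow_pos_of_pos ha0 y).le
        have hb2 : g (a ^ y) * a ^ (-ρ * y) ≤ (a ^ y) ^ 2 / 2 * a ^ (-ρ * y) :=
          mul_le_mul_of_nonneg_right hb1 (Real.rpow_nonneg ha0.le _)
        have hb3 : (a ^ y) ^ 2 / 2 * a ^ (-ρ * y) = 1/2 * Real.exp (-((2 - ρ) * L) * -y) := by
          rw [show ((a:ℝ) ^ y) ^ 2 = a ^ (y * 2) by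
              rw [← Real.rpow_natCast (a ^ y) 2, ← Real.rpow_mul ha0.le]; norm_num,
            div_mul_eq_mul_div, ← Real.rpow_add ha0,
            show y * 2 + -ρ * y = (2 - ρ) * y by ring, Real.rpow_def_of_pos ha0,
            show Real.log a * ((2 - ρ) * y) = -((2 - ρ) * L) * -y by rw [hLdef]; ring]
          ring
        rw [Real.norm_of_nonneg (Real.exp_pos _).le, ← hb3]
        exact hb2
      refine hstep.trans ?_
      have := (exp_decay_bigO hk).comp_tendsto tendsto_neg_atBot_atTop
      apply this.congr' (EventuallyEq.refl _ _)
      filter_upwards with y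
      rw [Function.comp_apply, abs_neg]
    · -- atTop
      have hk : 0 < ρ * L := mul_pos (by linarith) hL
      have hstep : h =O[atTop] fun y : ℝ => Real.exp (-(ρ * L) * y) := by
        rw [Asymptotics.isBigO_iff]
        refine ⟨1, Eventually.of_forall fun y => ?_⟩
        rw [hnorm y, Real.norm_of_nonneg (Real.exp_pos _).le, one_mul]
        calc g (a ^ y) * a ^ (-ρ * y) ≤ 1 * a ^ (-ρ * y) :=
              mul_le_mul_of_nonneg_right (g_le_one (Real.rpow_pos_of_pos ha0 y).le)
                (Real.rpow_nonneg ha0.le _)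
          _ = Real.exp (-(ρ * L) * y) := by
              rw [one_mul, Real.rpow_def_of_pos ha0,
                show Real.log a * (-ρ * y) = -(ρ * L) * y by rw [hLdef]; ring]
      exact hstep.trans (exp_decay_bigO hk)
  -- decay of Fourier transform
  have hF_bigO : (FourierTransform.fourier h) =O[cocompact ℝ] fun y : ℝ => |y| ^ (-(2:ℝ)) := by
    rw [Asymptotics.isBigO_iff]
    refine ⟨L⁻¹ * Real.Gamma (4 - ρ) * (L / (2 * Real.pi)) ^ 2, ?_⟩
    have hev : ∀ᶠ ξ : ℝ in cocompact ℝ, ξ ≠ 0 := by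
      have hmem : {ξ : ℝ | ξ ≠ 0} ∈ cocompact ℝ :=
        Filter.mem_cocompact.2 ⟨{0}, isCompact_singleton, fun ξ hξ => hξ⟩
      exact Filter.eventually_iff.2 hmem
    filter_upwards [hev] with ξ hξ
    rw [fourier_eq ρ a hρ1 hρ2 ha ξ]
    have hτ : (2 * Real.pi * ξ / L : ℝ) ≠ 0 := by
      apply div_ne_zero _ hL.ne'
      exact mul_ne_zero (mul_ne_zero two_ne_zero Real.pi_ne_zero) hξ
    have hb := gamma_quot_bound hρ1 hρ2 hτ
    rw [norm_smul, Real.norm_of_nonneg (inv_pos.mpr hL).le]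
    calc L⁻¹ * ‖_‖ ≤ L⁻¹ * (Real.Gamma (4 - ρ) / (2 * Real.pi * ξ / L) ^ 2) :=
          mul_le_mul_of_nonneg_left hb (inv_pos.mpr hL).le
      _ = L⁻¹ * Real.Gamma (4 - ρ) * (L / (2 * Real.pi)) ^ 2 * (ξ ^ 2)⁻¹ := by
          rw [div_pow, div_div_eq_mul_div, div_eq_mul_inv, mul_pow (2 * Real.pi) ξ, mul_inv,
            div_pow, div_eq_mul_inv (L ^ 2)]
          ring
      _ = L⁻¹ * Real.Gamma (4 - ρ) * (L / (2 * Real.pi)) ^ 2 * ‖|ξ| ^ (-(2:ℝ))‖ := by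
          congr 1
          rw [Real.norm_of_nonneg (Real.rpow_nonneg (abs_nonneg ξ) _),
            Real.rpow_neg (abs_nonneg ξ), show ((2:ℝ)) = ((2:ℕ):ℝ) by norm_num,
            Real.rpow_natCast, _root_.sq_abs]
  -- Poisson summation
  have hpoisson := Real.tsum_eq_tsum_fourier_of_rpow_decay hcont one_lt_two
    h_bigO hF_bigO x
  -- rewrite chi
  have hchi : ∀ k : ℤ, χ k = ((2 * Real.pi * (k:ℝ) / L : ℝ) : ℂ) * I := by
    intro k
    rw [hχ k]
    push_cast
    field_simp
  -- pointwise identity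
  have hkey : ∀ k : ℤ,
      Complex.Gamma (2 - ρ - χ k) / ((ρ : ℂ) + χ k) *
          Complex.exp (2 * Real.pi * Complex.I * k * x)
        = (L : ℂ) * (FourierTransform.fourier h (k:ℝ) * fourier k (x : UnitAddCircle)) := by
    intro k
    rw [hhdef, fourier_eq ρ a hρ1 hρ2 ha (k:ℝ), fourier_coe_apply, hchi k]
    simp only [Complex.real_smul, Complex.ofReal_one, div_one, Complex.ofReal_inv, sub_sub]
    rw [← mul_assoc ((L:ℂ))]
    rw [← mul_assoc ((L:ℂ))]
    rw [mul_inv_cancel₀ hLC, one_mul]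
  -- the real series
  set F : ℤ → ℝ := fun v => g (a ^ (x - v)) * a ^ (-ρ * (x - v)) with hFdef2
  have hFpos : ∀ v : ℤ, 0 < F v := fun v =>
    mul_pos (g_pos (Real.rpow_pos_of_pos ha0 _)) (Real.rpow_pos_of_pos ha0 _)
  have hsq : ∀ y : ℝ, g (a ^ y) * a ^ (-ρ * y) ≤ 1/2 * a ^ ((2 - ρ) * y) := by
    intro y
    have hb1 : g (a ^ y) ≤ (a ^ y) ^ 2 / 2 := g_le_sq (Real.rpow_pos_of_pos ha0 y).le
    calc g (a ^ y) * a ^ (-ρ * y) ≤ (a ^ y) ^ 2 / 2 * a ^ (-ρ * y) :=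
          mul_le_mul_of_nonneg_right hb1 (Real.rpow_nonneg ha0.le _)
      _ = 1/2 * a ^ ((2 - ρ) * y) := by
          rw [show ((a:ℝ) ^ y) ^ 2 = a ^ (y * 2) by
              rw [← Real.rpow_natCast (a ^ y) 2, ← Real.rpow_mul ha0.le]; norm_num,
            div_mul_eq_mul_div, ← Real.rpow_add ha0,
            show y * 2 + -ρ * y = (2 - ρ) * y by ring]
          ring
  have hle1 : ∀ y : ℝ, g (a ^ y) * a ^ (-ρ * y) ≤ a ^ (-ρ * y) := by
    intro y
    calc g (a ^ y) * a ^ (-ρ * y) ≤ 1 * a ^ (-ρ * y) :=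
          mul_le_mul_of_nonneg_right (g_le_one (Real.rpow_pos_of_pos ha0 y).le)
            (Real.rpow_nonneg ha0.le _)
      _ = a ^ (-ρ * y) := one_mul _
  have hFsum : Summable F := by
    apply Summable.of_nat_of_neg
    · apply Summable.of_nonneg_of_le (fun n => (hFpos _).le) (fun n => ?_)
        ((geom_aux ha x (show (0:ℝ) < 2 - ρ by linarith)).mul_left (1/2))
      show F (n : ℤ) ≤ 1/2 * a ^ ((2 - ρ) * (x - n))
      rw [hFdef2]
      have : (((n : ℤ)) : ℝ) = (n : ℝ) := by push_cast; ring
      simp only [this]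
      exact hsq (x - n)
    · apply Summable.of_nonneg_of_le (fun n => (hFpos _).le) (fun n => ?_)
        (geom_aux ha (-x) (show (0:ℝ) < ρ by linarith))
      show F (-(n : ℤ)) ≤ a ^ (ρ * (-x - n))
      rw [hFdef2]
      simp only
      push_cast
      calc g (a ^ (x - -(n:ℝ))) * a ^ (-ρ * (x - -(n:ℝ)))
          = g (a ^ (x + (n:ℝ))) * a ^ (-ρ * (x + (n:ℝ))) := by norm_num
        _ ≤ a ^ (-ρ * (x + (n:ℝ))) := hle1 (x + n)
        _ = a ^ (ρ * (-x - n)) := by rw [show -ρ * (x + (n:ℝ)) = ρ * (-x - n) by ring]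
  have hFsumC : ∑' n : ℤ, h (x + n) = ((∑' v : ℤ, F v : ℝ) : ℂ) := by
    have h1 : ∀ n : ℤ, h (x + n) = ((F (-n) : ℝ) : ℂ) := by
      intro n
      rw [hhdef, hFdef2]
      have harg : x - ((-n : ℤ) : ℝ) = x + n := by push_cast; ring
      simp only [harg]
    rw [tsum_congr h1]
    exact ((Equiv.neg ℤ).tsum_eq fun m : ℤ => ((F m : ℝ) : ℂ)).trans
      (Complex.ofReal_tsum F).symm
  -- summability of the Gamma series
  have habs_exp : ∀ k : ℤ, ‖Complex.exp (2 * Real.pi * Complex.I * k * x)‖ = 1 := by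
    intro k
    rw [show (2 * (Real.pi:ℂ) * Complex.I * (k:ℂ) * (x:ℂ))
        = ((2 * Real.pi * k * x : ℝ) : ℂ) * I by push_cast; ring, Complex.norm_exp]
    simp
  have hsummable : Summable (fun k : ℤ =>
      ‖Complex.Gamma (2 - ρ - χ k) / ((ρ : ℂ) + χ k) *
        Complex.exp (2 * Real.pi * Complex.I * k * x)‖) := by
    apply summable_of_isBigO (Real.summable_abs_int_rpow one_lt_two)
    rw [Asymptotics.isBigO_iff]
    refine ⟨Real.Gamma (4 - ρ) * (L / (2 * Real.pi)) ^ 2, ?_⟩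
    have hev : ∀ᶠ k : ℤ in cofinite, k ≠ 0 := by
      rw [Filter.eventually_cofinite]
      convert Set.finite_singleton (0:ℤ) using 1
      ext k; simp
    filter_upwards [hev] with k hk
    have hτ : (2 * Real.pi * (k:ℝ) / L : ℝ) ≠ 0 := by
      apply div_ne_zero _ hL.ne'
      apply mul_ne_zero (mul_ne_zero two_ne_zero Real.pi_ne_zero)
      exact_mod_cast hk
    have hb := gamma_quot_bound hρ1 hρ2 hτ
    rw [norm_norm, norm_mul, habs_exp k, mul_one,
      hchi k]
    rw [sub_sub]
    calc ‖Complex.Gamma (2 - ((ρ:ℂ) + ((2 * Real.pi * (k:ℝ) / L : ℝ):ℂ) * I)) /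
            ((ρ:ℂ) + ((2 * Real.pi * (k:ℝ) / L : ℝ):ℂ) * I)‖
          ≤ Real.Gamma (4 - ρ) / (2 * Real.pi * (k:ℝ) / L) ^ 2 := hb
      _ = Real.Gamma (4 - ρ) * (L / (2 * Real.pi)) ^ 2 * (((k:ℝ)) ^ 2)⁻¹ := by
          rw [div_pow, div_div_eq_mul_div, div_eq_mul_inv, mul_pow (2 * Real.pi) ((k:ℝ)),
            mul_inv, div_pow, div_eq_mul_inv (L ^ 2)]
          ring
      _ = Real.Gamma (4 - ρ) * (L / (2 * Real.pi)) ^ 2 * ‖|(k:ℝ)| ^ (-(2:ℝ))‖ := by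
          congr 1
          rw [Real.norm_of_nonneg (Real.rpow_nonneg (abs_nonneg _) _),
            Real.rpow_neg (abs_nonneg _), show ((2:ℝ)) = ((2:ℕ):ℝ) by norm_num,
            Real.rpow_natCast, _root_.sq_abs]
  -- final equality
  have heq : (∑' k : ℤ, Complex.Gamma (2 - ρ - χ k) / ((ρ : ℂ) + χ k) *
        Complex.exp (2 * Real.pi * Complex.I * k * x))
      = ((L * ∑' v : ℤ, F v : ℝ) : ℂ) := by
    calc (∑' k : ℤ, Complex.Gamma (2 - ρ - χ k) / ((ρ : ℂ) + χ k) *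
            Complex.exp (2 * Real.pi * Complex.I * k * x))
        = ∑' k : ℤ, (L : ℂ) * (FourierTransform.fourier h (k:ℝ) * fourier k (x : UnitAddCircle)) :=
          tsum_congr hkey
      _ = (L : ℂ) * ∑' k : ℤ, FourierTransform.fourier h (k:ℝ) * fourier k (x : UnitAddCircle) :=
          tsum_mul_left
      _ = (L : ℂ) * ∑' n : ℤ, h (x + n) := by rw [← hpoisson]
      _ = (L : ℂ) * ((∑' v : ℤ, F v : ℝ) : ℂ) := by rw [hFsumC]
      _ = ((L * ∑' v : ℤ, F v : ℝ) : ℂ) := by push_cast; ring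
  have hpos : 0 < L * ∑' v : ℤ, F v :=
    mul_pos hL (Summable.tsum_pos hFsum (fun v => (hFpos v).le) 0 (hFpos 0))
  exact ⟨hsummable, heq, hpos⟩

end Main
end GammaPoissonAux

open Complex

/-- **Positivity of the periodic function for the mean, via Poisson summation.**
With `χ_k = 2πik/log a` and `f(t) = 1-(t+1)e^{-t}`, for every real `x` the series
`∑_{k∈ℤ} (Γ(2-ρ-χ_k)/(ρ+χ_k)) e^{2πikx}` converges absolutely and equals
`(log a)·∑_{v∈ℤ} f(a^{x-v}) a^{-ρ(x-v)}`, which is a positive real number. -/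
theorem gamma_series_poisson_summation_f
    (ρ a : ℝ) (hρ1 : 1 ≤ ρ) (hρ2 : ρ < 2) (ha : 1 < a)
    (χ : ℤ → ℂ) (hχ : ∀ k, χ k = (2 * Real.pi * Complex.I * k) / (Real.log a : ℂ))
    (f : ℝ → ℝ) (hf : ∀ t, f t = 1 - (t + 1) * Real.exp (-t)) (x : ℝ) :
    Summable (fun k : ℤ =>
      ‖Complex.Gamma (2 - ρ - χ k) / ((ρ : ℂ) + χ k) *
        Complex.exp (2 * Real.pi * Complex.I * k * x)‖) ∧
    (∑' k : ℤ, Complex.Gamma (2 - ρ - χ k) / ((ρ : ℂ) + χ k) *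
        Complex.exp (2 * Real.pi * Complex.I * k * x))
      = ((Real.log a * ∑' v : ℤ, f (a ^ (x - v)) * a ^ (-ρ * (x - v)) : ℝ) : ℂ) ∧
    0 < Real.log a * ∑' v : ℤ, f (a ^ (x - v)) * a ^ (-ρ * (x - v)) := by
  have hg : f = GammaPoissonAux.g := funext fun t => by rw [hf t]; rfl
  rw [hg]
  exact GammaPoissonAux.main x hρ1 hρ2 ha χ hχ
end

section
/- Let 1 ≤ ρ < 2 and a > 1, and set χ_k = 2πik/log a for k ∈ ℤ. Then for every real x, the series Σ_{k ∈ ℤ} Γ(2-ρ-χ_k) e^{2πikx} converges absolutely and equals (log a) · Σ_{v ∈ ℤ} exp(-a^{x-v}) · a^{(2-ρ)(x-v)}; in particular this sum is a positive real number for every x. -/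
open Complex MeasureTheory Set Filter Asymptotics
open scoped FourierTransform Real

section aux

lemma psaux_sq_half_le_exp {x : ℝ} (hx : 0 ≤ x) : x ^ 2 / 2 ≤ Real.exp x := by
  have := Real.sum_le_exp_of_nonneg hx 3
  simp [Finset.sum_range_succ] at this
  nlinarith

lemma psaux_abs_rpow_neg_two (u : ℝ) : |u| ^ (-2 : ℝ) = (u ^ 2)⁻¹ := by
  rw [show (-2 : ℝ) = -((2 : ℕ) : ℝ) by norm_num, Real.rpow_neg (abs_nonneg u),
    Real.rpow_natCast, _root_.sq_abs]

lemma psaux_norm_Gamma_le {s : ℂ} (hs : 0 < s.re) : ‖Complex.Gamma s‖ ≤ Real.Gamma s.re := by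
  rw [Complex.Gamma_eq_integral hs, Complex.GammaIntegral, Real.Gamma_eq_integral hs]
  refine (norm_integral_le_integral_norm _).trans (le_of_eq ?_)
  refine setIntegral_congr_fun measurableSet_Ioi fun t ht => ?_
  rw [norm_mul, Complex.norm_real, Real.norm_eq_abs,
    _root_.abs_of_pos (Real.exp_pos _), Complex.norm_cpow_eq_rpow_re_of_pos ht]
  simp

lemma psaux_mellin_f2 {σ : ℝ} {z : ℂ} (hz : 0 < z.re + σ) :
    mellin (fun t : ℝ => ((Real.exp (-t) * t ^ σ : ℝ) : ℂ)) z = Complex.Gamma (z + σ) := by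
  rw [Complex.Gamma_eq_integral (by simpa using hz), Complex.GammaIntegral, mellin]
  refine setIntegral_congr_fun measurableSet_Ioi fun t ht => ?_
  rw [smul_eq_mul, Complex.ofReal_mul, Complex.ofReal_cpow ht.le,
    show z + (σ:ℂ) - 1 = (z - 1) + σ by ring,
    Complex.cpow_add _ _ (Complex.ofReal_ne_zero.2 ht.ne')]
  ring

lemma psaux_fourier_g (a ρ : ℝ) (ha : 1 < a) (hρ2 : ρ < 2) (k : ℤ) :
    𝓕 (fun u : ℝ => ((Real.exp (-(a ^ u)) * a ^ ((2 - ρ) * u) : ℝ) : ℂ)) k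
      = ((Real.log a : ℂ))⁻¹ *
        Complex.Gamma (2 - ρ - (2 * Real.pi * Complex.I * k) / (Real.log a : ℂ)) := by
  set L : ℝ := Real.log a with hLdef
  have hL : 0 < L := Real.log_pos ha
  have ha0 : (0:ℝ) < a := by linarith
  set s : ℂ := ((2 * Real.pi * k : ℝ) : ℂ) * Complex.I with hs
  have hsre : s.re = 0 := by simp [hs]
  have hsim : s.im = 2 * Real.pi * k := by simp [hs]
  set f₂ : ℝ → ℂ := fun t => ((Real.exp (-t) * t ^ (2 - ρ) : ℝ) : ℂ) with hf₂
  have hdiv : s / ((-L : ℝ) : ℂ) = ((-(2 * Real.pi * k / L) : ℝ) : ℂ) * Complex.I := by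
    have : (L : ℂ) ≠ 0 := Complex.ofReal_ne_zero.2 hL.ne'
    rw [hs, div_eq_iff (by simpa using this)]
    push_cast
    field_simp
  have hdre : (s / ((-L : ℝ) : ℂ)).re = 0 := by rw [hdiv]; simp
  have h1 : mellin (fun t : ℝ => f₂ (t ^ (-L))) s
      = |(-L)|⁻¹ • mellin f₂ (s / ((-L : ℝ) : ℂ)) := by
    simpa using mellin_comp_rpow f₂ s (-L)
  have h2 : mellin f₂ (s / ((-L : ℝ) : ℂ)) = Complex.Gamma (s / ((-L : ℝ) : ℂ) + (2 - ρ : ℝ)) :=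
    psaux_mellin_f2 (by rw [hdre]; linarith)
  have h3 : (fun u : ℝ => Real.exp (-s.re * u) • f₂ (Real.exp (-u) ^ (-L)))
      = (fun u : ℝ => ((Real.exp (-(a ^ u)) * a ^ ((2 - ρ) * u) : ℝ) : ℂ)) := by
    funext u
    have e1 : Real.exp (-u) ^ (-L) = a ^ u := by
      rw [Real.rpow_def_of_pos (Real.exp_pos _), Real.log_exp,
        Real.rpow_def_of_pos ha0, hLdef]
      ring_nf
    rw [hsre, e1, hf₂]
    have e2 : (a ^ u) ^ (2 - ρ) = a ^ ((2 - ρ) * u) := by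
      rw [mul_comm, Real.rpow_mul ha0.le]
    simp [e2]
  have h4 := mellin_eq_fourier (fun t : ℝ => f₂ (t ^ (-L))) (s := s)
  rw [h3] at h4
  have h5 : s.im / (2 * Real.pi) = (k : ℝ) := by
    rw [hsim]; field_simp
  rw [h5] at h4
  rw [← h4, h1, h2, abs_neg, _root_.abs_of_pos hL, hdiv]
  rw [real_smul]
  push_cast
  congr 2
  have : (L : ℂ) ≠ 0 := Complex.ofReal_ne_zero.2 hL.ne'
  field_simp
  ring

lemma psaux_Gr_le_exp_neg {a ρ : ℝ} (ha : 1 < a) (hρ1 : 1 ≤ ρ) (hρ2 : ρ < 2) (u : ℝ) :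
    Real.exp (-(a ^ u)) * a ^ ((2 - ρ) * u)
      ≤ Real.exp 2 * Real.exp (-(Real.log a * u)) := by
  have ha0 : (0:ℝ) < a := by linarith
  set L := Real.log a with hL
  set w := L * u with hw
  have e1 : a ^ u = Real.exp w := by rw [Real.rpow_def_of_pos ha0]
  have e2 : a ^ ((2 - ρ) * u) = Real.exp ((2 - ρ) * w) := by
    rw [Real.rpow_def_of_pos ha0, hw, hL]; ring_nf
  rw [e1, e2, ← Real.exp_add, ← Real.exp_add]
  apply Real.exp_le_exp.2
  rcases le_or_gt w 0 with h | h
  · nlinarith [Real.exp_pos w]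
  · nlinarith [psaux_sq_half_le_exp h.le, Real.exp_pos w, sq_nonneg (w - 2)]

lemma psaux_Gr_le_exp_pos {a ρ : ℝ} (ha : 1 < a) (hρ2 : ρ < 2) (u : ℝ) :
    Real.exp (-(a ^ u)) * a ^ ((2 - ρ) * u)
      ≤ Real.exp ((2 - ρ) * Real.log a * u) := by
  have ha0 : (0:ℝ) < a := by linarith
  have e2 : a ^ ((2 - ρ) * u) = Real.exp ((2 - ρ) * Real.log a * u) := by
    rw [Real.rpow_def_of_pos ha0]; ring_nf
  rw [e2]
  nlinarith [Real.exp_pos ((2 - ρ) * Real.log a * u),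
    Real.exp_le_one_iff.2 (neg_nonpos.2 (Real.rpow_pos_of_pos ha0 u).le),
    (Real.exp_pos (-(a ^ u))).le]

lemma psaux_Gr_nonneg {a ρ : ℝ} (ha : 1 < a) (u : ℝ) :
    0 ≤ Real.exp (-(a ^ u)) * a ^ ((2 - ρ) * u) := by
  have ha0 : (0:ℝ) < a := by linarith
  positivity

lemma psaux_Gr_summable {a ρ : ℝ} (ha : 1 < a) (hρ1 : 1 ≤ ρ) (hρ2 : ρ < 2) (x : ℝ) :
    Summable (fun n : ℤ => Real.exp (-(a ^ (x + n))) * a ^ ((2 - ρ) * (x + n))) := by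
  have ha0 : (0:ℝ) < a := by linarith
  have hL : 0 < Real.log a := Real.log_pos ha
  set L := Real.log a with hLdef
  set c := (2 - ρ) * L with hc
  have hcpos : 0 < c := by
    have h2 : 0 < 2 - ρ := by linarith
    positivity
  apply Summable.of_nat_of_neg
  · refine Summable.of_nonneg_of_le (fun n => psaux_Gr_nonneg ha _) (fun n => ?_)
      (((summable_geometric_of_lt_one (Real.exp_nonneg _)
        (Real.exp_lt_one_iff.2 (by linarith : -L < 0))).mul_left
          (Real.exp 2 * Real.exp (-(L * x)))))
    · calc Real.exp (-(a ^ (x + n))) * a ^ ((2 - ρ) * (x + n))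
          ≤ Real.exp 2 * Real.exp (-(L * (x + n))) := psaux_Gr_le_exp_neg ha hρ1 hρ2 _
        _ = (Real.exp 2 * Real.exp (-(L * x))) * Real.exp (-L) ^ n := by
            simp only [← Real.exp_nat_mul, ← Real.exp_add]
            congr 1
            push_cast
            ring
  · refine Summable.of_nonneg_of_le (fun n => psaux_Gr_nonneg ha _) (fun n => ?_)
      ((summable_geometric_of_lt_one (Real.exp_nonneg _)
        (Real.exp_lt_one_iff.2 (by linarith : -c < 0))).mul_left (Real.exp (c * x)))
    · calc Real.exp (-(a ^ (x + (-n : ℤ)))) * a ^ ((2 - ρ) * (x + (-n : ℤ)))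
          ≤ Real.exp ((2 - ρ) * L * (x + (-n : ℤ))) := psaux_Gr_le_exp_pos ha hρ2 _
        _ = Real.exp (c * x) * Real.exp (-c) ^ n := by
            simp only [← Real.exp_nat_mul, ← Real.exp_add]
            congr 1
            push_cast
            ring

lemma psaux_Gr_isBigO {a ρ : ℝ} (ha : 1 < a) (hρ1 : 1 ≤ ρ) (hρ2 : ρ < 2) :
    (fun u : ℝ => ((Real.exp (-(a ^ u)) * a ^ ((2 - ρ) * u) : ℝ) : ℂ))
      =O[cocompact ℝ] fun u => |u| ^ (-2 : ℝ) := by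
  have ha0 : (0:ℝ) < a := by linarith
  have hL : 0 < Real.log a := Real.log_pos ha
  have hcpos : 0 < (2 - ρ) * Real.log a := by
    have h2 : 0 < 2 - ρ := by linarith
    positivity
  rw [cocompact_eq_atBot_atTop, isBigO_sup]
  constructor
  · rw [isBigO_iff]
    refine ⟨2 / ((2 - ρ) * Real.log a) ^ 2, ?_⟩
    filter_upwards [eventually_le_atBot (-1 : ℝ)] with u hu
    have hu2 : (0:ℝ) < u ^ 2 := by nlinarith
    have hGr : (0:ℝ) ≤ Real.exp (-(a ^ u)) * a ^ ((2 - ρ) * u) := by positivity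
    rw [Complex.norm_real, Real.norm_eq_abs, Real.norm_eq_abs, _root_.abs_of_nonneg hGr,
      _root_.abs_of_nonneg (Real.rpow_nonneg (abs_nonneg u) _), psaux_abs_rpow_neg_two,
      ← div_eq_mul_inv, le_div_iff₀ hu2, le_div_iff₀ (by positivity)]
    have h1 := psaux_Gr_le_exp_pos ha hρ2 u
    have h2 := psaux_sq_half_le_exp (x := (2 - ρ) * Real.log a * (-u)) (by nlinarith)
    have h3 : Real.exp ((2 - ρ) * Real.log a * u) * Real.exp ((2 - ρ) * Real.log a * (-u)) = 1 := by
      rw [← Real.exp_add, show (2-ρ) * Real.log a * u + (2-ρ) * Real.log a * (-u) = 0 by ring,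
        Real.exp_zero]
    nlinarith [mul_le_mul_of_nonneg_right h1 hu2.le,
      mul_le_mul_of_nonneg_left h2 (Real.exp_pos ((2 - ρ) * Real.log a * u)).le,
      sq_nonneg ((2 - ρ) * Real.log a * u)]
  · rw [isBigO_iff]
    refine ⟨Real.exp 2 * 2 / (Real.log a) ^ 2, ?_⟩
    filter_upwards [eventually_ge_atTop (1 : ℝ)] with u hu
    have hu2 : (0:ℝ) < u ^ 2 := by nlinarith
    have hGr : (0:ℝ) ≤ Real.exp (-(a ^ u)) * a ^ ((2 - ρ) * u) := by positivity
    rw [Complex.norm_real, Real.norm_eq_abs, Real.norm_eq_abs, _root_.abs_of_nonneg hGr,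
      _root_.abs_of_nonneg (Real.rpow_nonneg (abs_nonneg u) _), psaux_abs_rpow_neg_two,
      ← div_eq_mul_inv, le_div_iff₀ hu2, le_div_iff₀ (by positivity)]
    have h1 := psaux_Gr_le_exp_neg ha hρ1 hρ2 u
    have h2 := psaux_sq_half_le_exp (x := Real.log a * u) (by positivity)
    have h3 : Real.exp (-(Real.log a * u)) * Real.exp (Real.log a * u) = 1 := by
      rw [← Real.exp_add, neg_add_cancel, Real.exp_zero]
    nlinarith [mul_le_mul_of_nonneg_right h1 hu2.le,
      mul_le_mul_of_nonneg_left h2 (Real.exp_pos (-(Real.log a * u))).le,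
      sq_nonneg (Real.log a * u), (Real.exp_pos (2:ℝ)).le]

lemma psaux_z_form (ρ L : ℝ) (hL : L ≠ 0) (k : ℤ) :
    (2 : ℂ) - ρ - (2 * Real.pi * Complex.I * k) / (L : ℂ)
      = ((2 - ρ : ℝ) : ℂ) + ((-(2 * Real.pi * k / L) : ℝ) : ℂ) * Complex.I := by
  have hL' : (L : ℂ) ≠ 0 := Complex.ofReal_ne_zero.2 hL
  push_cast
  field_simp
  ring

lemma psaux_gamma_norm_summable (ρ a : ℝ) (hρ1 : 1 ≤ ρ) (hρ2 : ρ < 2) (ha : 1 < a) (x : ℝ) :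
    Summable (fun k : ℤ =>
      ‖Complex.Gamma (2 - ρ - (2 * Real.pi * Complex.I * k) / (Real.log a : ℂ)) *
        Complex.exp (2 * Real.pi * Complex.I * k * x)‖) := by
  have hL : 0 < Real.log a := Real.log_pos ha
  set L := Real.log a with hLdef
  have hexp : ∀ k : ℤ, ‖Complex.exp (2 * Real.pi * Complex.I * k * x)‖ = 1 := by
    intro k
    rw [Complex.norm_exp]
    norm_num [Complex.mul_re, Complex.mul_im]
  simp only [norm_mul, hexp, mul_one]
  set z : ℤ → ℂ := fun k => 2 - ρ - (2 * Real.pi * Complex.I * k) / (L : ℂ) with hz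
  have hzre : ∀ k, (z k).re = 2 - ρ := by
    intro k; rw [hz]; simp only []; rw [psaux_z_form ρ L hL.ne' k]; simp
  have hzim : ∀ k, (z k).im = -(2 * Real.pi * k / L) := by
    intro k; rw [hz]; simp only []; rw [psaux_z_form ρ L hL.ne' k]; simp
  have key : ∀ k : ℤ, k ≠ 0 →
      ‖Complex.Gamma (z k)‖
        ≤ (Real.Gamma (4 - ρ) * L ^ 2 / (2 * Real.pi) ^ 2) * |(k:ℝ)| ^ (-2:ℝ) := by
    intro k hk
    have hk0 : (0:ℝ) < |(k:ℝ)| := by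
      simp only [abs_pos, Int.cast_ne_zero]; exact hk
    have hk2 : (0:ℝ) < ((k:ℝ)) ^ 2 := by positivity
    have him : |(z k).im| = 2 * Real.pi * |(k:ℝ)| / L := by
      rw [hzim, abs_neg, abs_div, _root_.abs_of_pos hL, abs_mul,
        _root_.abs_of_pos (by positivity : (0:ℝ) < 2 * Real.pi)]
    have hz0 : z k ≠ 0 := by
      intro h
      have h2 := hzre k
      rw [h, Complex.zero_re] at h2
      linarith
    have hz1 : z k + 1 ≠ 0 := by
      intro h
      have h2 : (z k + 1).re = 0 := by rw [h, Complex.zero_re]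
      rw [Complex.add_re, hzre, Complex.one_re] at h2
      linarith
    have hrec : Complex.Gamma (z k + 1 + 1) = (z k + 1) * (z k * Complex.Gamma (z k)) := by
      rw [Complex.Gamma_add_one _ hz1, Complex.Gamma_add_one _ hz0]
    have hre2 : (z k + 1 + 1).re = 4 - ρ := by
      rw [Complex.add_re, Complex.add_re, hzre, Complex.one_re]; ring
    have hG2 : ‖Complex.Gamma (z k + 1 + 1)‖ ≤ Real.Gamma (4 - ρ) := by
      refine (psaux_norm_Gamma_le ?_).trans_eq (by rw [hre2])
      rw [hre2]; linarith
    have hq1 : 2 * Real.pi * |(k:ℝ)| / L ≤ ‖z k‖ := by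
      rw [← him]; exact Complex.abs_im_le_norm _
    have hq2 : 2 * Real.pi * |(k:ℝ)| / L ≤ ‖z k + 1‖ := by
      rw [← him]
      have h4 : (z k + 1).im = (z k).im := by rw [Complex.add_im, Complex.one_im, add_zero]
      rw [← h4]
      exact Complex.abs_im_le_norm _
    have hnn : (0:ℝ) ≤ ‖Complex.Gamma (z k)‖ := norm_nonneg _
    have hq0 : (0:ℝ) ≤ 2 * Real.pi * |(k:ℝ)| / L := by positivity
    have hmain : ‖Complex.Gamma (z k)‖ * (2 * Real.pi * |(k:ℝ)| / L) ^ 2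
        ≤ Real.Gamma (4 - ρ) := by
      calc ‖Complex.Gamma (z k)‖ * (2 * Real.pi * |(k:ℝ)| / L) ^ 2
          = (2 * Real.pi * |(k:ℝ)| / L) * ((2 * Real.pi * |(k:ℝ)| / L) * ‖Complex.Gamma (z k)‖) := by
            ring
        _ ≤ ‖z k + 1‖ * (‖z k‖ * ‖Complex.Gamma (z k)‖) :=
            mul_le_mul hq2 (mul_le_mul hq1 le_rfl hnn (norm_nonneg _))
              (mul_nonneg hq0 hnn) (norm_nonneg _)
        _ = ‖Complex.Gamma (z k + 1 + 1)‖ := by rw [hrec, norm_mul, norm_mul]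
        _ ≤ Real.Gamma (4 - ρ) := hG2
    rw [psaux_abs_rpow_neg_two, ← div_eq_mul_inv, le_div_iff₀ hk2,
      le_div_iff₀ (by positivity : (0:ℝ) < (2 * Real.pi) ^ 2)]
    have hsq : (2 * Real.pi * |(k:ℝ)| / L) ^ 2 = (2 * Real.pi) ^ 2 * (k:ℝ) ^ 2 / L ^ 2 := by
      rw [div_pow, mul_pow, _root_.sq_abs]
    rw [hsq] at hmain
    have hL2 : (0:ℝ) < L ^ 2 := by positivity
    have hmain2 := mul_le_mul_of_nonneg_right hmain hL2.le
    rw [mul_assoc, div_mul_cancel₀ _ hL2.ne'] at hmain2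
    nlinarith [hmain2]
  refine summable_of_isBigO (Real.summable_abs_int_rpow (by norm_num : (1:ℝ) < 2)) ?_
  rw [isBigO_iff]
  refine ⟨Real.Gamma (4 - ρ) * L ^ 2 / (2 * Real.pi) ^ 2, ?_⟩
  rw [Filter.eventually_cofinite]
  refine Set.Finite.subset (Set.finite_singleton (0:ℤ)) fun k hk => ?_
  simp only [Set.mem_setOf_eq] at hk
  simp only [Set.mem_singleton_iff]
  by_contra hk0
  apply hk
  rw [Real.norm_eq_abs, _root_.abs_of_nonneg (norm_nonneg _), Real.norm_eq_abs,
    _root_.abs_of_nonneg (Real.rpow_nonneg (abs_nonneg _) _)]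
  exact key k hk0

end aux

/-- **Positivity of the periodic function for the variance, via Poisson summation.**
With `χ_k = 2πik/log a`, for every real `x` the series `∑_{k∈ℤ} Γ(2-ρ-χ_k) e^{2πikx}`
converges absolutely and equals `(log a)·∑_{v∈ℤ} exp(-a^{x-v}) a^{(2-ρ)(x-v)}`,
which is a positive real number. -/
theorem gamma_series_poisson_summation
    (ρ a : ℝ) (hρ1 : 1 ≤ ρ) (hρ2 : ρ < 2) (ha : 1 < a)
    (χ : ℤ → ℂ) (hχ : ∀ k, χ k = (2 * Real.pi * Complex.I * k) / (Real.log a : ℂ))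
    (x : ℝ) :
    Summable (fun k : ℤ =>
      ‖Complex.Gamma (2 - ρ - χ k) * Complex.exp (2 * Real.pi * Complex.I * k * x)‖) ∧
    (∑' k : ℤ, Complex.Gamma (2 - ρ - χ k) * Complex.exp (2 * Real.pi * Complex.I * k * x))
      = ((Real.log a *
          ∑' v : ℤ, Real.exp (-(a ^ (x - v))) * a ^ ((2 - ρ) * (x - v)) : ℝ) : ℂ) ∧
    0 < Real.log a * ∑' v : ℤ, Real.exp (-(a ^ (x - v))) * a ^ ((2 - ρ) * (x - v)) := by
  have ha0 : (0:ℝ) < a := by linarith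
  have hL : 0 < Real.log a := Real.log_pos ha
  have hLC : ((Real.log a : ℝ) : ℂ) ≠ 0 := Complex.ofReal_ne_zero.2 hL.ne'
  have hsum1 : Summable (fun k : ℤ =>
      ‖Complex.Gamma (2 - ρ - χ k) * Complex.exp (2 * Real.pi * Complex.I * k * x)‖) := by
    simp only [hχ]
    exact psaux_gamma_norm_summable ρ a hρ1 hρ2 ha x
  set g : ℝ → ℂ := fun u => ((Real.exp (-(a ^ u)) * a ^ ((2 - ρ) * u) : ℝ) : ℂ) with hg
  have hcont : Continuous g := by
    apply Complex.continuous_ofReal.comp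
    have hbase : Continuous fun t : ℝ => a ^ t :=
      continuous_iff_continuousAt.2 fun t => Real.continuousAt_const_rpow ha0.ne'
    exact (Real.continuous_exp.comp hbase.neg).mul
      (hbase.comp (continuous_const.mul continuous_id))
  have hFg : ∀ k : ℤ, 𝓕 g (k : ℝ) = ((Real.log a : ℂ))⁻¹ * Complex.Gamma (2 - ρ - χ k) := by
    intro k; rw [hχ]; exact psaux_fourier_g a ρ ha hρ2 k
  have hexp1 : ∀ k : ℤ, ‖Complex.exp (2 * Real.pi * Complex.I * k * x)‖ = 1 := by
    intro k
    rw [Complex.norm_exp]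
    norm_num [Complex.mul_re, Complex.mul_im]
  have hsummF : Summable fun n : ℤ => 𝓕 g n := by
    refine Summable.congr ?_ (fun n => (hFg n).symm)
    apply Summable.mul_left
    apply Summable.of_norm
    exact hsum1.congr fun n => by rw [norm_mul, hexp1, mul_one]
  have hpois := Real.tsum_eq_tsum_fourier_of_rpow_decay_of_summable hcont
    one_lt_two (psaux_Gr_isBigO ha hρ1 hρ2) hsummF x
  have hLHS : ∑' n : ℤ, g (x + n)
      = ((∑' v : ℤ, Real.exp (-(a ^ (x - v))) * a ^ ((2 - ρ) * (x - v)) : ℝ) : ℂ) := by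
    calc ∑' n : ℤ, g (x + n)
        = ∑' n : ℤ, (fun v : ℤ =>
            ((Real.exp (-(a ^ (x - v))) * a ^ ((2 - ρ) * (x - v)) : ℝ) : ℂ)) ((Equiv.neg ℤ) n) := by
          refine tsum_congr fun n => ?_
          simp only [Equiv.neg_apply, hg]
          have harg : x - ((-n : ℤ) : ℝ) = x + (n : ℝ) := by push_cast; ring
          rw [harg]
      _ = ∑' v : ℤ, ((Real.exp (-(a ^ (x - v))) * a ^ ((2 - ρ) * (x - v)) : ℝ) : ℂ) :=
          (Equiv.neg ℤ).tsum_eq (fun v : ℤ =>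
            ((Real.exp (-(a ^ (x - v))) * a ^ ((2 - ρ) * (x - v)) : ℝ) : ℂ))
      _ = _ := (Complex.ofReal_tsum _).symm
  have hRHS : (∑' n : ℤ, 𝓕 g n * fourier n (x : UnitAddCircle))
      = ((Real.log a : ℂ))⁻¹ * ∑' k : ℤ,
          Complex.Gamma (2 - ρ - χ k) * Complex.exp (2 * Real.pi * Complex.I * k * x) := by
    rw [← tsum_mul_left]
    refine tsum_congr fun n => ?_
    rw [hFg n, fourier_coe_apply, Complex.ofReal_one, div_one, mul_assoc]
  rw [hLHS, hRHS] at hpois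
  have heq : (∑' k : ℤ, Complex.Gamma (2 - ρ - χ k) *
        Complex.exp (2 * Real.pi * Complex.I * k * x))
      = ((Real.log a *
          ∑' v : ℤ, Real.exp (-(a ^ (x - v))) * a ^ ((2 - ρ) * (x - v)) : ℝ) : ℂ) := by
    rw [Complex.ofReal_mul, hpois, ← mul_assoc, mul_inv_cancel₀ hLC, one_mul]
  have hsumreal : Summable (fun v : ℤ =>
      Real.exp (-(a ^ (x - v))) * a ^ ((2 - ρ) * (x - v))) := by
    rw [← (Equiv.neg ℤ).summable_iff]
    refine (psaux_Gr_summable ha hρ1 hρ2 x).congr fun n => ?_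
    simp only [Function.comp_apply, Equiv.neg_apply]
    have harg : x - ((-n : ℤ) : ℝ) = x + (n : ℝ) := by push_cast; ring
    rw [harg]
  refine ⟨hsum1, heq, mul_pos hL (Summable.tsum_pos hsumreal (fun v => psaux_Gr_nonneg ha _) 0 ?_)⟩
  have h0 : x - ((0:ℤ):ℝ) = x := by norm_num
  rw [h0]
  positivity
end

section
/- For every complex number s with 0 < Re(s) < 2, the improper integral ∫_0^∞ (1 - (t+1)e^{-t}) · t^{-s-1} dt converges absolutely and equals Γ(2-s)/s. -/
open MeasureTheory Set Filter Real Complex Topology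

-- basic inequalities for g t = 1 - (t+1)e^{-t}
lemma aux_g_nonneg {t : ℝ} (ht : 0 ≤ t) : 0 ≤ 1 - (t + 1) * Real.exp (-t) := by
  have h := Real.add_one_le_exp t
  have he : 0 < Real.exp t := Real.exp_pos t
  rw [Real.exp_neg]
  rw [sub_nonneg]
  rw [mul_inv_le_iff₀ he, one_mul]
  linarith

lemma aux_g_le_one {t : ℝ} (ht : 0 ≤ t) : 1 - (t + 1) * Real.exp (-t) ≤ 1 := by
  nlinarith [Real.exp_pos (-t)]

lemma aux_g_le_sq {t : ℝ} (ht : 0 ≤ t) : 1 - (t + 1) * Real.exp (-t) ≤ t ^ 2 := by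
  have h := Real.add_one_le_exp (-t)
  nlinarith [Real.exp_pos (-t)]

/-- **A Mellin-type integral for the Gamma function**: for `0 < Re(s) < 2`,
`∫_0^∞ (1-(t+1)e^{-t}) t^{-s-1} dt` converges absolutely and equals `Γ(2-s)/s`. -/
theorem integral_one_sub_add_one_mul_exp_neg_mul_cpow
    (s : ℂ) (h0 : 0 < s.re) (h2 : s.re < 2) :
    IntegrableOn
      (fun t : ℝ => ((1 - (t + 1) * Real.exp (-t) : ℝ) : ℂ) * (t : ℂ) ^ (-s - 1))
      (Set.Ioi (0 : ℝ)) ∧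
    (∫ t in Set.Ioi (0 : ℝ),
        ((1 - (t + 1) * Real.exp (-t) : ℝ) : ℂ) * (t : ℂ) ^ (-s - 1))
      = Complex.Gamma (2 - s) / s := by
  have hs : s ≠ 0 := fun h => by simp [h] at h0
  have h2s : 0 < (2 - s).re := by simp [Complex.sub_re]; linarith
  -- integrability
  have hint : IntegrableOn
      (fun t : ℝ => ((1 - (t + 1) * Real.exp (-t) : ℝ) : ℂ) * (t : ℂ) ^ (-s - 1))
      (Set.Ioi (0 : ℝ)) := by
    have hg : Continuous fun t : ℝ => ((1 - (t + 1) * Real.exp (-t) : ℝ) : ℂ) := by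
      continuity
    have hmc : MellinConvergent (fun t : ℝ => ((1 - (t + 1) * Real.exp (-t) : ℝ) : ℂ)) (-s) := by
      refine mellinConvergent_of_isBigO_rpow (a := 0) (b := -2)
        (hg.locallyIntegrable.locallyIntegrableOn _) ?_ ?_ ?_ ?_
      · refine Asymptotics.IsBigO.of_bound 1 ?_
        filter_upwards [eventually_ge_atTop (0 : ℝ)] with t ht
        have h1 := aux_g_nonneg ht
        have h2 := aux_g_le_one ht
        simp only [neg_zero, Real.rpow_zero, norm_one, one_mul, Complex.norm_real]
        rw [Real.norm_eq_abs, _root_.abs_of_nonneg h1]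
        exact h2
      · simpa using h0
      · refine Asymptotics.IsBigO.of_bound 1 ?_
        filter_upwards [self_mem_nhdsWithin] with t (ht : (0:ℝ) < t)
        have h1 := aux_g_nonneg ht.le
        have h2 := aux_g_le_sq ht.le
        simp only [neg_neg, one_mul, Complex.norm_real]
        rw [Real.norm_eq_abs, _root_.abs_of_nonneg h1,
          Real.norm_eq_abs, _root_.abs_of_nonneg (Real.rpow_nonneg ht.le _)]
        rw [show ((2:ℝ)) = ((2:ℕ):ℝ) by norm_num, Real.rpow_natCast]
        exact h2
      · simp only [Complex.neg_re]; linarith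
    refine hmc.congr_fun ?_ measurableSet_Ioi
    intro t ht
    simp only [smul_eq_mul]
    ring_nf
  refine ⟨hint, ?_⟩
  -- FTC setup
  set F : ℝ → ℂ := fun t =>
    ((∫ x in (0:ℝ)..t, ((Real.exp (-x) : ℝ) : ℂ) * (x:ℂ) ^ ((2 - s) - 1)) -
      ((1 - (t + 1) * Real.exp (-t) : ℝ) : ℂ) * (t:ℂ) ^ (-s)) / s with hF
  have hGamConv := Complex.GammaIntegral_convergent h2s
  -- derivative on Ioi 0
  have hderiv : ∀ t ∈ Set.Ioi (0:ℝ), HasDerivAt F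
      (((1 - (t + 1) * Real.exp (-t) : ℝ) : ℂ) * (t : ℂ) ^ (-s - 1)) t := by
    intro t ht
    have ht' : (0:ℝ) < t := ht
    have htc : (t:ℂ) ≠ 0 := by exact_mod_cast ht'.ne'
    -- derivative of the primitive
    have hG : HasDerivAt (fun u : ℝ => ∫ x in (0:ℝ)..u,
        ((Real.exp (-x) : ℝ) : ℂ) * (x:ℂ) ^ ((2 - s) - 1))
        (((Real.exp (-t) : ℝ) : ℂ) * (t:ℂ) ^ ((2 - s) - 1)) t := by
      refine intervalIntegral.integral_hasDerivAt_right ?_ ?_ ?_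
      · rw [intervalIntegrable_iff_integrableOn_Ioc_of_le ht'.le]
        exact hGamConv.mono_set Set.Ioc_subset_Ioi_self
      · exact ⟨Set.Ioi 0, Ioi_mem_nhds ht', hGamConv.1⟩
      · apply ContinuousAt.mul
        · exact Complex.continuous_ofReal.continuousAt.comp
            ((Real.continuous_exp.comp continuous_neg).continuousAt)
        · exact (continuousAt_cpow_const
            (Complex.ofReal_mem_slitPlane.2 ht')).comp
            Complex.continuous_ofReal.continuousAt
    -- derivative of g
    have hg : HasDerivAt (fun u : ℝ => ((1 - (u + 1) * Real.exp (-u) : ℝ) : ℂ))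
        (((t * Real.exp (-t) : ℝ) : ℂ)) t := by
      refine HasDerivAt.ofReal_comp ?_
      have h1 : HasDerivAt (fun u : ℝ => (u + 1) * Real.exp (-u))
          (1 * Real.exp (-t) + (t + 1) * (Real.exp (-t) * (-1))) t := by
        exact ((hasDerivAt_id t).add_const 1).mul
          ((Real.hasDerivAt_exp (-t)).comp t (hasDerivAt_neg t))
      have := h1.const_sub 1
      refine this.congr_deriv ?_
      ring
    -- derivative of t ^ (-s)
    have hcp : HasDerivAt (fun u : ℝ => (u:ℂ) ^ (-s))
        (-s * (t:ℂ) ^ (-s - 1)) t := by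
      have h1 : HasDerivAt (fun z : ℂ => z ^ (-s)) (-s * (t:ℂ) ^ (-s - 1) * 1) (t:ℝ) :=
        (hasDerivAt_id (t:ℂ)).cpow_const (Complex.ofReal_mem_slitPlane.2 ht')
      simpa using h1.comp_ofReal
    have hD := (hG.sub (hg.mul hcp)).div_const s
    refine hD.congr_deriv ?_
    have e1 : (t:ℂ) ^ (-s) = (t:ℂ) ^ (-s - 1) * t := by
      have h := Complex.cpow_add (-s - 1) 1 htc
      rw [Complex.cpow_one] at h
      rw [← h]
      congr 1
      ring
    have e2 : (t:ℂ) ^ ((2 - s) - 1) = (t:ℂ) ^ (-s - 1) * (t:ℂ) ^ (2:ℕ) := by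
      have h := Complex.cpow_add (-s - 1) ((2:ℕ):ℂ) htc
      rw [Complex.cpow_natCast] at h
      rw [← h]
      congr 1
      push_cast
      ring
    rw [e1, e2]
    push_cast
    field_simp
    ring
  -- continuity at 0
  have hF0 : F 0 = 0 := by
    simp [hF]
  have hcont : ContinuousWithinAt F (Set.Ici (0:ℝ)) 0 := by
    apply ContinuousWithinAt.div_const
    apply ContinuousWithinAt.sub
    · -- primitive is continuous at 0 within [0,1]
      have h1 : IntervalIntegrable
          (fun x : ℝ => ((Real.exp (-x) : ℝ) : ℂ) * (x:ℂ) ^ ((2 - s) - 1)) volume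
          (min (0:ℝ) 0) (max (0:ℝ) 1) := by
        simp only [min_self, max_eq_right (by norm_num : (0:ℝ) ≤ 1)]
        rw [intervalIntegrable_iff_integrableOn_Ioc_of_le (by norm_num : (0:ℝ) ≤ 1)]
        exact hGamConv.mono_set Set.Ioc_subset_Ioi_self
      have h2 := intervalIntegral.continuousWithinAt_primitive
        (b₀ := 0) (b₁ := 0) (b₂ := 1) (a := 0)
        (measure_singleton 0) h1
      refine h2.mono_of_mem_nhdsWithin ?_
      have : Set.Icc (0:ℝ) 1 = Set.Ici 0 ∩ Set.Iic 1 := (Set.Ici_inter_Iic).symm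
      rw [this]
      exact Filter.inter_mem self_mem_nhdsWithin
        (mem_nhdsWithin_of_mem_nhds (Iic_mem_nhds one_pos))
    · -- g t * t^{-s} → 0
      have hval : ((1 - ((0:ℝ) + 1) * Real.exp (-(0:ℝ)) : ℝ) : ℂ) * ((0:ℝ):ℂ) ^ (-s) = 0 := by
        norm_num
      rw [ContinuousWithinAt]
      rw [hval]
      apply squeeze_zero_norm' (a := fun t : ℝ => t ^ (2 - s.re))
      · filter_upwards [self_mem_nhdsWithin] with t (ht : (0:ℝ) ≤ t)
        rcases ht.eq_or_lt with rfl | htpos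
        · simp [Complex.zero_cpow (neg_ne_zero.2 hs), Real.zero_rpow (by linarith : (2:ℝ) - s.re ≠ 0)]
        · rw [norm_mul, Complex.norm_real, Real.norm_eq_abs,
            _root_.abs_of_nonneg (aux_g_nonneg htpos.le),
            Complex.norm_cpow_eq_rpow_re_of_pos htpos]
          calc (1 - (t + 1) * Real.exp (-t)) * t ^ (-s).re
              ≤ t ^ 2 * t ^ (-s).re := by
                apply mul_le_mul_of_nonneg_right (aux_g_le_sq htpos.le)
                  (Real.rpow_nonneg htpos.le _)
            _ = t ^ (2 - s.re) := by
                rw [show (t:ℝ)^2 = t ^ ((2:ℕ):ℝ) by rw [Real.rpow_natCast],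
                  ← Real.rpow_add htpos]
                congr 1
      · have hc : ContinuousWithinAt (fun t : ℝ => t ^ (2 - s.re)) (Set.Ici 0) 0 :=
          (Real.continuousAt_rpow_const 0 (2 - s.re) (Or.inr (by linarith))).continuousWithinAt
        have h00 : (0:ℝ) ^ (2 - s.re) = 0 := Real.zero_rpow (by linarith)
        rw [ContinuousWithinAt, h00] at hc
        exact hc
  -- limit at infinity
  have hlim : Tendsto F atTop (𝓝 (Complex.Gamma (2 - s) / s)) := by
    have h1 : Tendsto (fun t : ℝ => ∫ x in (0:ℝ)..t,
        ((Real.exp (-x) : ℝ) : ℂ) * (x:ℂ) ^ ((2 - s) - 1)) atTop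
        (𝓝 (Complex.Gamma (2 - s))) := by
      rw [Complex.Gamma_eq_integral h2s]
      exact intervalIntegral_tendsto_integral_Ioi 0 hGamConv tendsto_id
    have h2' : Tendsto (fun t : ℝ =>
        ((1 - (t + 1) * Real.exp (-t) : ℝ) : ℂ) * (t:ℂ) ^ (-s)) atTop (𝓝 0) := by
      apply squeeze_zero_norm' (a := fun t : ℝ => t ^ (-s.re))
      · filter_upwards [eventually_gt_atTop (0:ℝ)] with t htpos
        rw [norm_mul, Complex.norm_real, Real.norm_eq_abs,
          _root_.abs_of_nonneg (aux_g_nonneg htpos.le),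
          Complex.norm_cpow_eq_rpow_re_of_pos htpos]
        calc (1 - (t + 1) * Real.exp (-t)) * t ^ (-s).re
            ≤ 1 * t ^ (-s).re := by
              apply mul_le_mul_of_nonneg_right (aux_g_le_one htpos.le)
                (Real.rpow_nonneg htpos.le _)
          _ = t ^ (-s.re) := by simp
      · exact tendsto_rpow_neg_atTop h0
    have := (h1.sub h2').div_const s
    simpa only [sub_zero] using this
  have := MeasureTheory.integral_Ioi_of_hasDerivAt_of_tendsto hcont hderiv hint hlim
  rw [this, hF0, sub_zero]
end

section
/- Let p_1,…,p_A be positive reals with p_1 + … + p_A = 1 and let ρ be a real number. Then Σ_{j=1}^A p_j^{2ρ-1}(1-p_j) - Σ_{j_1 ≠ j_2} p_{j_1}^ρ p_{j_2}^ρ = Σ_{1 ≤ j_1 < j_2 ≤ A} p_{j_1} p_{j_2} (p_{j_1}^{ρ-1} - p_{j_2}^{ρ-1})^2. In particular, if ρ > 1 and the p_j are not all equal, this common value is strictly positive. -/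
open Finset


/-- **The coefficient of `n` in the variance is a sum of squares** (Lemma 2, key identity):
`∑_j p_j^{2ρ-1}(1-p_j) - ∑_{j₁≠j₂} p_{j₁}^ρ p_{j₂}^ρ
  = ∑_{j₁<j₂} p_{j₁}p_{j₂}(p_{j₁}^{ρ-1}-p_{j₂}^{ρ-1})²`,
and this value is strictly positive when `ρ > 1` and the `p_j` are not all equal. -/
theorem variance_coefficient_sum_of_squares
    {A : ℕ} (hA : 2 ≤ A)
    (p : Fin A → ℝ) (hp0 : ∀ j, 0 < p j) (hpsum : ∑ j, p j = 1) (ρ : ℝ) :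
    (∑ j, p j ^ (2 * ρ - 1) * (1 - p j))
        - ∑ x ∈ Finset.univ.offDiag, p x.1 ^ ρ * p x.2 ^ ρ
      = ∑ x ∈ Finset.univ.filter (fun x : Fin A × Fin A => x.1 < x.2),
          p x.1 * p x.2 * (p x.1 ^ (ρ - 1) - p x.2 ^ (ρ - 1)) ^ 2 ∧
    (1 < ρ → (∃ j₁ j₂, p j₁ ≠ p j₂) →
      0 < ∑ x ∈ Finset.univ.filter (fun x : Fin A × Fin A => x.1 < x.2),
          p x.1 * p x.2 * (p x.1 ^ (ρ - 1) - p x.2 ^ (ρ - 1)) ^ 2) := by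
  have hq2 : ∀ j, p j ^ (2 * ρ - 1) = p j * (p j ^ (ρ - 1) * p j ^ (ρ - 1)) := by
    intro j
    have h : (2 * ρ - 1 : ℝ) = 1 + (ρ - 1) + (ρ - 1) := by ring
    rw [h, Real.rpow_add (hp0 j), Real.rpow_add (hp0 j), Real.rpow_one]
    ring
  have hqr : ∀ j, p j ^ ρ = p j * p j ^ (ρ - 1) := by
    intro j
    have h : ρ = 1 + (ρ - 1) := by ring
    nth_rewrite 1 [h]
    rw [Real.rpow_add (hp0 j), Real.rpow_one]
  -- splitting off-diagonal sums
  have hsplit : ∀ f : Fin A × Fin A → ℝ,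
      ∑ x ∈ (univ : Finset (Fin A)).offDiag, f x
        = (∑ x : Fin A × Fin A, f x) - ∑ j, f (j, j) := by
    intro f
    have h2 := Finset.sum_union (f := f) (Finset.disjoint_diag_offDiag (univ : Finset (Fin A)))
    rw [Finset.diag_union_offDiag, Finset.sum_diag, Finset.univ_product_univ] at h2
    linarith [h2]
  -- the main identity with F x = p x.1 * p x.2 * (q x.1 * (q x.1 - q x.2))
  have hF : (∑ j, p j ^ (2 * ρ - 1) * (1 - p j))
        - ∑ x ∈ Finset.univ.offDiag, p x.1 ^ ρ * p x.2 ^ ρ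
      = ∑ x : Fin A × Fin A,
          p x.1 * p x.2 * (p x.1 ^ (ρ - 1) * (p x.1 ^ (ρ - 1) - p x.2 ^ (ρ - 1))) := by
    rw [hsplit (fun x => p x.1 ^ ρ * p x.2 ^ ρ)]
    have e1 : ∑ j, p j ^ (2 * ρ - 1) * (1 - p j)
        = (∑ j, p j * (p j ^ (ρ - 1) * p j ^ (ρ - 1)))
          - ∑ j, (p j * p j ^ (ρ - 1)) * (p j * p j ^ (ρ - 1)) := by
      rw [← Finset.sum_sub_distrib]
      apply Finset.sum_congr rfl
      intro j _
      rw [hq2 j]; ring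
    have e2 : (∑ x : Fin A × Fin A, p x.1 ^ ρ * p x.2 ^ ρ)
        = (∑ j, p j * p j ^ (ρ - 1)) * (∑ j, p j * p j ^ (ρ - 1)) := by
      rw [Finset.sum_mul_sum, Fintype.sum_prod_type]
      apply Finset.sum_congr rfl
      intro j _
      apply Finset.sum_congr rfl
      intro k _
      rw [hqr j, hqr k]
    have e3 : (∑ x : Fin A × Fin A,
          p x.1 * p x.2 * (p x.1 ^ (ρ - 1) * (p x.1 ^ (ρ - 1) - p x.2 ^ (ρ - 1))))
        = (∑ j, p j * (p j ^ (ρ - 1) * p j ^ (ρ - 1))) * (∑ j, p j)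
          - (∑ j, p j * p j ^ (ρ - 1)) * (∑ j, p j * p j ^ (ρ - 1)) := by
      rw [Finset.sum_mul_sum, Finset.sum_mul_sum, ← Finset.sum_sub_distrib,
        Fintype.sum_prod_type]
      apply Finset.sum_congr rfl
      intro j _
      rw [← Finset.sum_sub_distrib]
      apply Finset.sum_congr rfl
      intro k _
      ring
    have e4 : ∑ j, (p j ^ ρ * p j ^ ρ)
        = ∑ j, (p j * p j ^ (ρ - 1)) * (p j * p j ^ (ρ - 1)) := by
      apply Finset.sum_congr rfl
      intro j _
      rw [hqr j]
    rw [e1, e3, e2, hpsum]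
    have := e4
    simp only at this ⊢
    linarith [e4]
  -- symmetrization
  have hsym : (∑ x : Fin A × Fin A,
          p x.1 * p x.2 * (p x.1 ^ (ρ - 1) * (p x.1 ^ (ρ - 1) - p x.2 ^ (ρ - 1))))
      = ∑ x ∈ Finset.univ.filter (fun x : Fin A × Fin A => x.1 < x.2),
          p x.1 * p x.2 * (p x.1 ^ (ρ - 1) - p x.2 ^ (ρ - 1)) ^ 2 := by
    set F : Fin A × Fin A → ℝ :=
      fun x => p x.1 * p x.2 * (p x.1 ^ (ρ - 1) * (p x.1 ^ (ρ - 1) - p x.2 ^ (ρ - 1))) with hFdef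
    rw [← Finset.sum_filter_add_sum_filter_not (univ : Finset (Fin A × Fin A))
      (fun x => x.1 < x.2) F]
    have hgt : Finset.univ.filter (fun x : Fin A × Fin A => ¬ x.1 < x.2)
        = (Finset.univ.filter (fun x : Fin A × Fin A => x.2 < x.1)) ∪
          (Finset.univ.filter (fun x : Fin A × Fin A => x.1 = x.2)) := by
      ext x
      simp only [Finset.mem_filter, Finset.mem_union, Finset.mem_univ, true_and]
      constructor
      · intro h
        rcases lt_or_eq_of_le (le_of_not_gt h) with h' | h'
        · exact Or.inl h'
        · exact Or.inr h'.symm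
      · rintro (h | h)
        · exact not_lt_of_gt h
        · rw [h]; exact lt_irrefl _
    have hdisj : Disjoint (Finset.univ.filter (fun x : Fin A × Fin A => x.2 < x.1))
        (Finset.univ.filter (fun x : Fin A × Fin A => x.1 = x.2)) := by
      rw [Finset.disjoint_filter]
      intro x _ h h'
      rw [h'] at h
      exact lt_irrefl _ h
    rw [hgt, Finset.sum_union hdisj]
    have hzero : ∑ x ∈ Finset.univ.filter (fun x : Fin A × Fin A => x.1 = x.2), F x = 0 := by
      apply Finset.sum_eq_zero
      intro x hx
      have : x.1 = x.2 := (Finset.mem_filter.mp hx).2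
      simp [hFdef, this]
    have hswap : ∑ x ∈ Finset.univ.filter (fun x : Fin A × Fin A => x.2 < x.1), F x
        = ∑ x ∈ Finset.univ.filter (fun x : Fin A × Fin A => x.1 < x.2), F x.swap := by
      apply Finset.sum_nbij' (i := Prod.swap) (j := Prod.swap)
      · intro a ha; simpa using (Finset.mem_filter.mp ha).2
      · intro a ha; simpa using (Finset.mem_filter.mp ha).2
      · intro a _; simp
      · intro a _; simp
      · intro a _; simp [hFdef]
    rw [hswap, hzero, add_zero, ← Finset.sum_add_distrib]
    apply Finset.sum_congr rfl
    intro x _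
    simp only [hFdef, Prod.fst_swap, Prod.snd_swap]
    ring
  constructor
  · rw [hF, hsym]
  · intro hρ ⟨j₁, j₂, hne⟩
    have hmono : ∀ a b : Fin A, p a < p b → p a ^ (ρ - 1) < p b ^ (ρ - 1) := by
      intro a b h
      exact Real.rpow_lt_rpow (le_of_lt (hp0 a)) h (by linarith)
    have hqne : ∀ a b : Fin A, p a ≠ p b → p a ^ (ρ - 1) ≠ p b ^ (ρ - 1) := by
      intro a b h
      rcases lt_or_gt_of_ne h with h' | h'
      · exact ne_of_lt (hmono a b h')
      · exact (ne_of_lt (hmono b a h')).symm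
    have hjne : j₁ ≠ j₂ := fun h => hne (by rw [h])
    have key : ∀ a b : Fin A, a < b → p a ≠ p b →
        0 < ∑ x ∈ Finset.univ.filter (fun x : Fin A × Fin A => x.1 < x.2),
          p x.1 * p x.2 * (p x.1 ^ (ρ - 1) - p x.2 ^ (ρ - 1)) ^ 2 := by
      intro a b hab hpab
      apply Finset.sum_pos'
      · intro x _
        have := (hp0 x.1).le
        have := (hp0 x.2).le
        positivity
      · refine ⟨(a, b), Finset.mem_filter.mpr ⟨Finset.mem_univ _, hab⟩, ?_⟩
        have hsq : (0:ℝ) < (p a ^ (ρ - 1) - p b ^ (ρ - 1)) ^ 2 := by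
          have h := sub_ne_zero.mpr (hqne a b hpab)
          positivity
        exact mul_pos (mul_pos (hp0 a) (hp0 b)) hsq
    rcases lt_or_gt_of_ne hjne with h | h
    · exact key j₁ j₂ h hne
    · exact key j₂ j₁ h (Ne.symm hne)
end

section
/- Let g_m denote the m-th moment of the standard normal distribution, i.e. g_m = m!/(2^{m/2} (m/2)!) if m is even and g_m = 0 if m is odd. Then for every integer N ≥ 1 and every integer ℓ ≥ 0, Σ_{k ∈ ℕ^N, k_1+…+k_N = ℓ} (ℓ choose k_1,…,k_N) · g_{k_1}···g_{k_N} = g_ℓ · N^{ℓ/2}. -/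
/-- `g_m`, the `m`-th moment of the standard normal distribution:
`m!/(2^{m/2}(m/2)!)` for even `m` and `0` for odd `m`. -/
noncomputable def gaussianMoment (m : ℕ) : ℝ :=
  if Even m then (m.factorial : ℝ) / (2 ^ (m / 2) * ((m / 2).factorial : ℝ)) else 0

lemma gaussianMoment_two_mul (m : ℕ) :
    gaussianMoment (2 * m) = ((2 * m).factorial : ℝ) / (2 ^ m * (m.factorial : ℝ)) := by
  rw [gaussianMoment, if_pos (even_two_mul m), Nat.mul_div_cancel_left m two_pos]

lemma piAntidiag_univ_eq (N n : ℕ) :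
    Finset.piAntidiag (Finset.univ : Finset (Fin N)) n = Finset.Nat.antidiagonalTuple N n := by
  ext k
  simp [Finset.mem_piAntidiag, Finset.Nat.mem_antidiagonalTuple]

lemma sum_multinomial (N n : ℕ) :
    ∑ m ∈ Finset.Nat.antidiagonalTuple N n, (Nat.multinomial Finset.univ m : ℝ)
      = (N : ℝ) ^ n := by
  have h := Finset.sum_pow_eq_sum_piAntidiag (Finset.univ : Finset (Fin N)) (fun _ => (1 : ℝ)) n
  simp only [piAntidiag_univ_eq, one_pow, Finset.prod_const_one, mul_one,
    Finset.sum_const, Finset.card_univ, Fintype.card_fin, nsmul_eq_mul, mul_one] at h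
  rw [← h]

lemma gaussianMoment_key (N n : ℕ) (m : Fin N → ℕ) (hm : ∑ i, m i = n) :
    (Nat.multinomial Finset.univ (fun j => 2 * m j) : ℝ) *
        ∏ i, gaussianMoment (2 * m i)
      = gaussianMoment (2 * n) * (Nat.multinomial Finset.univ m : ℝ) := by
  have spec1 := Nat.multinomial_spec (Finset.univ : Finset (Fin N)) (fun j => 2 * m j)
  have spec2 := Nat.multinomial_spec (Finset.univ : Finset (Fin N)) m
  rw [show ∑ i : Fin N, 2 * m i = 2 * n by rw [← Finset.mul_sum, hm]] at spec1
  rw [hm] at spec2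
  have spec1' : (∏ i : Fin N, ((2 * m i).factorial : ℝ)) *
      (Nat.multinomial Finset.univ (fun j => 2 * m j) : ℝ) = ((2 * n).factorial : ℝ) := by
    exact_mod_cast congrArg (Nat.cast : ℕ → ℝ) spec1
  have spec2' : (∏ i : Fin N, ((m i).factorial : ℝ)) *
      (Nat.multinomial Finset.univ m : ℝ) = (n.factorial : ℝ) := by
    exact_mod_cast congrArg (Nat.cast : ℕ → ℝ) spec2
  simp_rw [gaussianMoment_two_mul]
  rw [Finset.prod_div_distrib, Finset.prod_mul_distrib,
    Finset.prod_pow_eq_pow_sum, hm]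
  have hA : (0:ℝ) < ∏ i : Fin N, ((2 * m i).factorial : ℝ) :=
    Finset.prod_pos fun i _ => by positivity
  have hB : (0:ℝ) < ∏ i : Fin N, ((m i).factorial : ℝ) :=
    Finset.prod_pos fun i _ => by positivity
  have hn : (0:ℝ) < (n.factorial : ℝ) := by positivity
  have h2 : (0:ℝ) < (2:ℝ) ^ n := by positivity
  field_simp
  linear_combination ((n.factorial : ℝ)) * spec1'
    - (((2 * n).factorial : ℝ)) * spec2'

/-- **Multinomial convolution identity for Gaussian moments**:
`∑_{k₁+⋯+k_N=ℓ} (ℓ choose k₁,…,k_N) g_{k₁}⋯g_{k_N} = g_ℓ · N^{ℓ/2}`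
(the sum of `N` independent standard normals is `√N` times a standard normal). -/
theorem gaussianMoment_multinomial_sum
    (N : ℕ) (hN : 1 ≤ N) (ℓ : ℕ) :
    ∑ k ∈ Finset.Nat.antidiagonalTuple N ℓ,
        (Nat.multinomial Finset.univ k : ℝ) * ∏ i, gaussianMoment (k i)
      = gaussianMoment ℓ * (N : ℝ) ^ ((ℓ : ℝ) / 2) := by
  by_cases hℓ : Even ℓ
  · obtain ⟨n, rfl⟩ : ∃ n, ℓ = 2 * n := by
      obtain ⟨n, hn⟩ := hℓ; exact ⟨n, by omega⟩
    have hR : (N : ℝ) ^ (((2 * n : ℕ) : ℝ) / 2) = (N : ℝ) ^ (n : ℕ) := by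
      rw [show ((2 * n : ℕ) : ℝ) / 2 = ((n : ℕ) : ℝ) by push_cast; ring,
        Real.rpow_natCast]
    rw [hR]
    -- restrict the sum to tuples all of whose entries are even
    rw [← Finset.sum_filter_of_ne (p := fun k => ∀ i, Even (k i))
      (by
        intro k hk hne
        by_contra h
        push_neg at h
        obtain ⟨i, hi⟩ := h
        exact hne (by
          rw [mul_eq_zero]; right
          exact Finset.prod_eq_zero (Finset.mem_univ i)
            (by rw [gaussianMoment, if_neg hi])))]
    -- reindex by halving
    have hbij :
        ∑ k ∈ (Finset.Nat.antidiagonalTuple N (2 * n)).filter (fun k => ∀ i, Even (k i)),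
            (Nat.multinomial Finset.univ k : ℝ) * ∏ i, gaussianMoment (k i)
          = ∑ m ∈ Finset.Nat.antidiagonalTuple N n,
              gaussianMoment (2 * n) * (Nat.multinomial Finset.univ m : ℝ) := by
      refine Finset.sum_nbij' (fun k j => k j / 2) (fun m j => 2 * m j) ?_ ?_ ?_ ?_ ?_
      · intro k hk
        simp only [Finset.mem_filter, Finset.Nat.mem_antidiagonalTuple] at hk
        obtain ⟨hsum, hev⟩ := hk
        rw [Finset.Nat.mem_antidiagonalTuple]
        show ∑ i : Fin N, k i / 2 = n
        have h2 : 2 * ∑ i : Fin N, (k i / 2) = 2 * n := by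
          rw [Finset.mul_sum]
          simp_rw [fun j => Nat.two_mul_div_two_of_even (hev j)]
          omega
        omega
      · intro m hm
        rw [Finset.Nat.mem_antidiagonalTuple] at hm
        rw [Finset.mem_filter, Finset.Nat.mem_antidiagonalTuple]
        exact ⟨by show ∑ i : Fin N, 2 * m i = 2 * n; rw [← Finset.mul_sum, hm],
          fun i => even_two_mul _⟩
      · intro k hk
        simp only [Finset.mem_filter] at hk
        funext j
        exact Nat.two_mul_div_two_of_even (hk.2 j)
      · intro m _
        funext j
        exact Nat.mul_div_cancel_left _ two_pos
      · intro k hk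
        simp only [Finset.mem_filter, Finset.Nat.mem_antidiagonalTuple] at hk
        obtain ⟨hsum, hev⟩ := hk
        have hkeq : k = fun j => 2 * (k j / 2) := by
          funext j; exact (Nat.two_mul_div_two_of_even (hev j)).symm
        have hmem : ∑ i : Fin N, (k i / 2) = n := by
          have h2 : 2 * ∑ i : Fin N, (k i / 2) = 2 * n := by
            rw [Finset.mul_sum]
            simp_rw [fun j => Nat.two_mul_div_two_of_even (hev j)]
            omega
          omega
        conv_lhs => rw [hkeq]
        simpa using gaussianMoment_key N n (fun j => k j / 2) hmem
    rw [hbij, ← Finset.mul_sum, sum_multinomial]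
  · have h0 : gaussianMoment ℓ = 0 := by rw [gaussianMoment, if_neg hℓ]
    rw [h0, zero_mul]
    refine Finset.sum_eq_zero fun k hk => ?_
    rw [Finset.Nat.mem_antidiagonalTuple] at hk
    have : ∃ i, ¬ Even (k i) := by
      by_contra h
      push_neg at h
      rw [← hk] at hℓ
      exact hℓ (Finset.even_sum k fun i _ => h i)
    obtain ⟨i, hi⟩ := this
    rw [mul_eq_zero]; right
    exact Finset.prod_eq_zero (Finset.mem_univ i) (by rw [gaussianMoment, if_neg hi])
end
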